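/- arXiv:2303.06454 — 6 statements merged into one kernel-verified Lean document; each statement's English description precedes it below -/
import Mathlib

section
/- Let n be a positive integer and write n = le + r with 0 < r ≤ e. Then there is an isomorphism of 𝔬-modules 𝔒/𝔓^n ≅ (𝔬/𝔭^{l+1})^{rd} ⊕ (𝔬/𝔭^{l})^{(e−r)d}. -/
attribute [local instance] Ideal.Quotient.field
open Module IsLocalRing

open Module

section Upgrade

variable {R : Type*} [CommRing R] (I : Ideal R)

/-- Upgrade an `R`-linear map between `R ⧸ I`-modules to an `R ⧸ I`-linear map. -/
def upgradeMap {M N : Type*} [AddCommGroup M] [AddCommGroup N]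
    [Module R M] [Module R N] [Module (R ⧸ I) M] [Module (R ⧸ I) N]
    [IsScalarTower R (R ⧸ I) M] [IsScalarTower R (R ⧸ I) N]
    (f : M →ₗ[R] N) : M →ₗ[R ⧸ I] N where
  toFun := f
  map_add' := f.map_add
  map_smul' := by
    intro c x
    obtain ⟨u, rfl⟩ := Ideal.Quotient.mk_surjective c
    rw [RingHom.id_apply, ← Ideal.Quotient.algebraMap_eq, algebraMap_smul, algebraMap_smul]
    exact f.map_smul u x

/-- Upgrade an `R`-linear equiv between `R ⧸ I`-modules to an `R ⧸ I`-linear equiv. -/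
noncomputable def upgradeEquiv {M N : Type*} [AddCommGroup M] [AddCommGroup N]
    [Module R M] [Module R N] [Module (R ⧸ I) M] [Module (R ⧸ I) N]
    [IsScalarTower R (R ⧸ I) M] [IsScalarTower R (R ⧸ I) N]
    (f : M ≃ₗ[R] N) : M ≃ₗ[R ⧸ I] N :=
  LinearEquiv.ofBijective (upgradeMap I f.toLinearMap) f.bijective

lemma finrank_eq_card_of_equiv [I.IsMaximal] {M : Type*} [AddCommGroup M]
    [Module R M] [Module (R ⧸ I) M] [IsScalarTower R (R ⧸ I) M] {β : Type*} [Fintype β]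
    (f : M ≃ₗ[R] (β → R ⧸ I)) :
    Module.finrank (R ⧸ I) M = Fintype.card β := by
  rw [(upgradeEquiv I f).finrank_eq, Module.finrank_fintype_fun_eq_card]

end Upgrade

/-- A linear equivalence splitting a pi type along a predicate. -/
def LinearEquiv.piEquivPiSubtypeProd' {R : Type*} [Semiring R] {ι : Type*} (p : ι → Prop)
    [DecidablePred p] (M : ι → Type*) [∀ i, AddCommMonoid (M i)] [∀ i, Module R (M i)] :
    (∀ i, M i) ≃ₗ[R] (∀ i : {x // p x}, M i) × (∀ i : {x // ¬ p x}, M i) :=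
  { Equiv.piEquivPiSubtypeProd p M with
    map_add' := fun _ _ => rfl
    map_smul' := fun _ _ => rfl }

/-- A linear equivalence between subsingleton modules. -/
def LinearEquiv.ofSubsingleton' {R M N : Type*} [Semiring R] [AddCommMonoid M] [AddCommMonoid N]
    [Module R M] [Module R N] [Subsingleton M] [Subsingleton N] : M ≃ₗ[R] N where
  toFun := fun _ => 0
  invFun := fun _ => 0
  map_add' := fun _ _ => (zero_add 0).symm
  map_smul' := fun r _ => (smul_zero r).symm
  left_inv := fun x => Subsingleton.elim _ _
  right_inv := fun x => Subsingleton.elim _ _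

/-- Product with a subsingleton module. -/
def LinearEquiv.prodSubsingleton {R A B : Type*} [Semiring R] [AddCommMonoid A] [AddCommMonoid B]
    [Module R A] [Module R B] [Subsingleton B] : (A × B) ≃ₗ[R] A where
  toFun := Prod.fst
  invFun := fun a => (a, 0)
  map_add' := fun _ _ => rfl
  map_smul' := fun _ _ => rfl
  left_inv := fun x => Prod.ext rfl (Subsingleton.elim _ _)
  right_inv := fun a => rfl


/-- Quotient of `S` by an ideal that is "diagonal" with respect to a basis. -/
noncomputable def diagQuot {ι R S : Type*} [CommRing R] [CommRing S] [Algebra R S]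
    [Fintype ι] (b' : Basis ι R S) (c : ι → R) (J : Ideal S)
    (hmem : ∀ x, x ∈ J ↔ ∀ i, c i ∣ b'.repr x i) :
    (S ⧸ J) ≃ₗ[R] ∀ i, R ⧸ Ideal.span ({c i} : Set R) := by
  let I' : Submodule R (ι → R) := Submodule.pi Set.univ fun i => Ideal.span ({c i} : Set R)
  have hmap : Submodule.map (b'.equivFun : S →ₗ[R] ι → R) (J.restrictScalars R) = I' := by
    ext x
    simp only [I', Submodule.mem_map, Submodule.mem_pi, Ideal.mem_span_singleton, Set.mem_univ,
      Submodule.restrictScalars_mem, hmem, smul_eq_mul, forall_true_left, LinearEquiv.coe_coe,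
      Basis.equivFun_apply]
    constructor
    · rintro ⟨y, hy, rfl⟩ i
      exact hy i
    · rintro hdvd
      refine ⟨∑ i, x i • b' i, fun i => ?_, ?_⟩ <;> rw [b'.repr_sum_self]
      · exact hdvd i
  refine ((Submodule.Quotient.restrictScalarsEquiv R (J : Submodule S S)).restrictScalars R).symm.trans
    (σ₁₂ := RingHom.id R) (σ₃₂ := RingHom.id R) (re₂₃ := inferInstance) (re₃₂ := inferInstance) ?_
  refine (Submodule.Quotient.equiv (J.restrictScalars R) I' b'.equivFun hmap).trans
    (σ₁₂ := RingHom.id R) (σ₃₂ := RingHom.id R) (re₂₃ := inferInstance) (re₃₂ := inferInstance) ?_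
  classical
  exact Submodule.quotientPi (show _ → Submodule R R from fun i => Ideal.span ({c i} : Set R))

lemma quot_pow_equiv
    (𝔬 𝔒 : Type) [CommRing 𝔬] [CommRing 𝔒] [IsDomain 𝔬] [IsDomain 𝔒]
    [IsDiscreteValuationRing 𝔬] [IsDiscreteValuationRing 𝔒]
    [Algebra 𝔬 𝔒]
    [Module.Finite 𝔬 𝔒]
    (e d : ℕ)
    (heram : Ideal.map (algebraMap 𝔬 𝔒) (IsLocalRing.maximalIdeal 𝔬) =
      (IsLocalRing.maximalIdeal 𝔒) ^ e)
    (hd : Nonempty ((𝔒 ⧸ IsLocalRing.maximalIdeal 𝔒) ≃ₗ[𝔬]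
      (Fin d → 𝔬 ⧸ IsLocalRing.maximalIdeal 𝔬)))
    (m : ℕ) (hme : m ≤ e) :
    Nonempty ((𝔒 ⧸ ((IsLocalRing.maximalIdeal 𝔒) ^ m : Ideal 𝔒)) ≃ₗ[𝔬]
      (Fin (m * d) → 𝔬 ⧸ IsLocalRing.maximalIdeal 𝔬)) := by
  classical
  induction m with
  | zero =>
      haveI : Subsingleton (𝔒 ⧸ ((IsLocalRing.maximalIdeal 𝔒) ^ 0 : Ideal 𝔒)) := by
        rw [Submodule.Quotient.subsingleton_iff]
        exact (pow_zero (IsLocalRing.maximalIdeal 𝔒)).trans Ideal.one_eq_top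
      haveI : IsEmpty (Fin (0 * d)) := by
        rw [Nat.zero_mul]; infer_instance
      exact ⟨LinearEquiv.ofSubsingleton'⟩
  | succ m ih =>
      obtain ⟨em⟩ := ih (le_trans (Nat.le_succ m) hme)
      obtain ⟨ed1⟩ := hd
      obtain ⟨ϖ, hϖ⟩ := IsDiscreteValuationRing.exists_irreducible 𝔒
      have hP : maximalIdeal 𝔒 = Ideal.span {ϖ} := hϖ.maximalIdeal_eq
      set K := 𝔬 ⧸ maximalIdeal 𝔬 with hK
      set S : Submodule 𝔬 𝔒 :=
        Submodule.restrictScalars 𝔬 ((maximalIdeal 𝔒 ^ (m + 1) : Ideal 𝔒) : Submodule 𝔒 𝔒) with hS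
      set T : Submodule 𝔬 𝔒 :=
        Submodule.restrictScalars 𝔬 ((maximalIdeal 𝔒 ^ m : Ideal 𝔒) : Submodule 𝔒 𝔒) with hT
      have hST : S ≤ T := fun x hx => Ideal.pow_le_pow_right (Nat.le_succ m) hx
      -- the multiplication map
      let mulmap : 𝔒 →ₗ[𝔬] 𝔒 := Algebra.lmul 𝔬 𝔒 (ϖ ^ m)
      let f : 𝔒 →ₗ[𝔬] 𝔒 ⧸ S := S.mkQ.comp mulmap
      have hker : LinearMap.ker f =
          Submodule.restrictScalars 𝔬 ((maximalIdeal 𝔒 : Ideal 𝔒) : Submodule 𝔒 𝔒) := by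
        ext x
        have : f x = Submodule.Quotient.mk (ϖ ^ m * x) := rfl
        simp only [LinearMap.mem_ker, this, Submodule.Quotient.mk_eq_zero,
          Submodule.restrictScalars_mem, hS]
        rw [hP, Ideal.span_singleton_pow, Ideal.mem_span_singleton, Ideal.mem_span_singleton,
          pow_succ, mul_dvd_mul_iff_left (pow_ne_zero m hϖ.ne_zero)]
      have hrange : LinearMap.range f = T.map S.mkQ := by
        rw [LinearMap.range_comp]
        congr 1
        ext x
        simp only [LinearMap.mem_range, Submodule.restrictScalars_mem, hT]
        rw [hP, Ideal.span_singleton_pow, Ideal.mem_span_singleton]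
        constructor
        · rintro ⟨y, rfl⟩; exact ⟨y, rfl⟩
        · rintro ⟨y, rfl⟩; exact ⟨y, rfl⟩
      -- the submodule Q
      set Q : Submodule 𝔬 (𝔒 ⧸ S) := T.map S.mkQ with hQ
      -- iso for Q
      have eQ0 : (𝔒 ⧸ Submodule.restrictScalars 𝔬 ((maximalIdeal 𝔒 : Ideal 𝔒) : Submodule 𝔒 𝔒))
          ≃ₗ[𝔬] (Fin d → K) :=
        ((Submodule.Quotient.restrictScalarsEquiv 𝔬
          ((maximalIdeal 𝔒 : Ideal 𝔒) : Submodule 𝔒 𝔒)).restrictScalars 𝔬).trans ed1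
      have eQ1 : (𝔒 ⧸ LinearMap.ker f) ≃ₗ[𝔬] (Fin d → K) :=
        (Submodule.quotEquivOfEq _ _ hker).trans eQ0
      have eQ : (↥Q) ≃ₗ[𝔬] (Fin d → K) :=
        (LinearEquiv.ofEq _ _ hrange).symm.trans (f.quotKerEquivRange.symm.trans eQ1)
      -- iso for the quotient by Q
      have eT0 : (𝔒 ⧸ T) ≃ₗ[𝔬] (Fin (m * d) → K) :=
        ((Submodule.Quotient.restrictScalarsEquiv 𝔬
          ((maximalIdeal 𝔒 ^ m : Ideal 𝔒) : Submodule 𝔒 𝔒)).restrictScalars 𝔬).trans em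
      have eT1 : ((𝔒 ⧸ S) ⧸ Q) ≃ₗ[𝔬] (𝔒 ⧸ T) := Submodule.quotientQuotientEquivQuotient S T hST
      have eT : ((𝔒 ⧸ S) ⧸ Q) ≃ₗ[𝔬] (Fin (m * d) → K) := eT1.trans eT0
      -- torsion structure
      have hVt : Module.IsTorsionBySet 𝔬 (𝔒 ⧸ S) (maximalIdeal 𝔬 : Set 𝔬) := by
        rintro x ⟨c, hc⟩
        obtain ⟨y, rfl⟩ := S.mkQ_surjective x
        show c • Submodule.Quotient.mk y = 0
        rw [← Submodule.Quotient.mk_smul, Submodule.Quotient.mk_eq_zero]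
        show c • y ∈ (maximalIdeal 𝔒 ^ (m + 1) : Ideal 𝔒)
        rw [Algebra.smul_def]
        refine Ideal.mul_mem_right _ _ ?_
        refine Ideal.pow_le_pow_right hme ?_
        rw [← heram]
        exact Ideal.mem_map_of_mem _ hc
      letI : Module K (𝔒 ⧸ S) := hVt.module
      haveI : IsScalarTower 𝔬 K (𝔒 ⧸ S) := hVt.isScalarTower
      haveI : Module.Finite 𝔬 (𝔒 ⧸ S) := Module.Finite.of_surjective S.mkQ (S.mkQ_surjective)
      haveI : Module.Finite K (𝔒 ⧸ S) := Module.Finite.of_restrictScalars_finite 𝔬 K (𝔒 ⧸ S)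
      -- the map φ
      let φ : (𝔒 ⧸ S) →ₗ[𝔬] (Fin (m * d) → K) := eT.toLinearMap.comp Q.mkQ
      have hφker : LinearMap.ker φ = Q := by
        rw [LinearMap.ker_comp, LinearEquiv.ker, Submodule.comap_bot, Submodule.ker_mkQ]
      let φ' : (𝔒 ⧸ S) →ₗ[K] (Fin (m * d) → K) := upgradeMap (maximalIdeal 𝔬) φ
      have hφ'surj : Function.Surjective φ' := by
        show Function.Surjective φ
        simp only [φ, LinearMap.coe_comp, LinearEquiv.coe_coe]
        exact eT.surjective.comp Q.mkQ_surjective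
      -- kernel of φ' as a K-submodule
      have hkerset : (LinearMap.ker φ').restrictScalars 𝔬 = LinearMap.ker φ := by
        ext x; rfl
      have esub : (↥(LinearMap.ker φ')) ≃ₗ[𝔬] ↥((LinearMap.ker φ').restrictScalars 𝔬) :=
        { toFun := fun x => ⟨x.1, x.2⟩
          invFun := fun x => ⟨x.1, x.2⟩
          map_add' := fun _ _ => rfl
          map_smul' := fun _ _ => rfl
          left_inv := fun _ => rfl
          right_inv := fun _ => rfl }
      have eker : (↥(LinearMap.ker φ')) ≃ₗ[𝔬] (Fin d → K) :=
        esub.trans ((LinearEquiv.ofEq _ _ (hkerset.trans hφker)).trans eQ)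
      have hrk_ker : finrank K ↥(LinearMap.ker φ') = d := by
        rw [finrank_eq_card_of_equiv (maximalIdeal 𝔬) eker, Fintype.card_fin]
      have hrk_range : finrank K ↥(LinearMap.range φ') = m * d := by
        rw [LinearMap.range_eq_top.mpr hφ'surj]
        rw [finrank_top, Module.finrank_fintype_fun_eq_card, Fintype.card_fin]
      have hrk : finrank K (𝔒 ⧸ S) = (m + 1) * d := by
        rw [← LinearMap.finrank_range_add_finrank_ker φ', hrk_ker, hrk_range, Nat.succ_mul]
      -- final equivalence
      have eV : (𝔒 ⧸ S) ≃ₗ[K] (Fin ((m + 1) * d) → K) :=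
        ((Module.finBasis K (𝔒 ⧸ S)).reindex (finCongr hrk)).equivFun
      have eV' : (𝔒 ⧸ S) ≃ₗ[𝔬] (Fin ((m + 1) * d) → K) := eV.restrictScalars 𝔬
      have efin : (𝔒 ⧸ ((maximalIdeal 𝔒 ^ (m + 1) : Ideal 𝔒) : Submodule 𝔒 𝔒)) ≃ₗ[𝔬] (𝔒 ⧸ S) :=
        ((Submodule.Quotient.restrictScalarsEquiv 𝔬
          ((maximalIdeal 𝔒 ^ (m + 1) : Ideal 𝔒) : Submodule 𝔒 𝔒)).restrictScalars 𝔬).symm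
      exact ⟨efin.trans eV'⟩

/-- With `𝔬 ⊆ 𝔒` discrete valuation rings as in the context
(residue degree `d`, ramification index `e`), if `n = l*e + r` with `0 < r ≤ e`, then
`𝔒/𝔓^n ≅ (𝔬/𝔭^(l+1))^(r*d) ⊕ (𝔬/𝔭^l)^((e-r)*d)` as `𝔬`-modules. -/
theorem stmt_1
    (𝔬 𝔒 : Type) [CommRing 𝔬] [CommRing 𝔒] [IsDomain 𝔬] [IsDomain 𝔒]
    [IsDiscreteValuationRing 𝔬] [IsDiscreteValuationRing 𝔒]
    [Algebra 𝔬 𝔒]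
    (hinj : Function.Injective (algebraMap 𝔬 𝔒))
    [Module.Finite 𝔬 𝔒]
    (e d : ℕ) (he : 1 ≤ e)
    (heram : Ideal.map (algebraMap 𝔬 𝔒) (IsLocalRing.maximalIdeal 𝔬) =
      (IsLocalRing.maximalIdeal 𝔒) ^ e)
    (hd : Nonempty ((𝔒 ⧸ IsLocalRing.maximalIdeal 𝔒) ≃ₗ[𝔬]
      (Fin d → 𝔬 ⧸ IsLocalRing.maximalIdeal 𝔬)))
    (n l r : ℕ) (hn : n = l * e + r) (hr0 : 0 < r) (hre : r ≤ e) :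
    Nonempty ((𝔒 ⧸ (IsLocalRing.maximalIdeal 𝔒) ^ n) ≃ₗ[𝔬]
      ((Fin (r * d) → 𝔬 ⧸ (IsLocalRing.maximalIdeal 𝔬) ^ (l + 1)) ×
        (Fin ((e - r) * d) → 𝔬 ⧸ (IsLocalRing.maximalIdeal 𝔬) ^ l))) := by
  classical
  subst hn
  haveI : Module.IsTorsionFree 𝔬 𝔒 := Module.isTorsionFree_iff_algebraMap_injective.mpr hinj
  obtain ⟨π, hπirr⟩ := IsDiscreteValuationRing.exists_irreducible 𝔬
  have hπ : maximalIdeal 𝔬 = Ideal.span {π} := hπirr.maximalIdeal_eq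
  obtain ⟨ϖ, hϖirr⟩ := IsDiscreteValuationRing.exists_irreducible 𝔒
  have hϖQ : maximalIdeal 𝔒 = Ideal.span {ϖ} := hϖirr.maximalIdeal_eq
  set ι := Module.Free.ChooseBasisIndex 𝔬 𝔒 with hι
  let b : Basis ι 𝔬 𝔒 := Module.Free.chooseBasis 𝔬 𝔒
  -- the ideal P^r is nonzero
  have hne : ((maximalIdeal 𝔒) ^ r : Ideal 𝔒) ≠ ⊥ := by
    intro hbot
    have h1 : ϖ ^ r ∈ ((maximalIdeal 𝔒) ^ r : Ideal 𝔒) :=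
      Ideal.pow_mem_pow (by rw [hϖQ]; exact Ideal.subset_span rfl) r
    rw [hbot] at h1
    exact pow_ne_zero r hϖirr.ne_zero (Ideal.mem_bot.mp h1)
  -- Smith coefficients for P^r
  set a := Ideal.smithCoeffs b ((maximalIdeal 𝔒) ^ r) hne with ha
  set b' := Ideal.ringBasis b ((maximalIdeal 𝔒) ^ r) hne with hb'
  have ab_eq := Ideal.selfBasis_def b ((maximalIdeal 𝔒) ^ r) hne
  have hmem : ∀ x, x ∈ ((maximalIdeal 𝔒) ^ r : Ideal 𝔒) ↔ ∀ i, a i ∣ b'.repr x i := by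
    intro x
    rw [Basis.mem_ideal_iff' (Ideal.selfBasis b ((maximalIdeal 𝔒) ^ r) hne)]
    simp_rw [ab_eq]
    have key : ∀ (c : ι → 𝔬) (i), b'.repr (∑ j : ι, c j • a j • b' j) i = a i * c i := by
      intro c i
      simp only [← mul_smul, b'.repr_sum_self, mul_comm]
    constructor
    · rintro ⟨c, rfl⟩ i
      exact ⟨c i, key c i⟩
    · rintro ha'
      choose c hc using ha'
      exact ⟨c, b'.ext_elem fun i => Eq.trans (hc i) (key c i).symm⟩
  -- membership characterization for P^e
  have hPe : ((maximalIdeal 𝔒) ^ e : Ideal 𝔒) = Ideal.span {algebraMap 𝔬 𝔒 π} := by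
    rw [← heram, hπ, Ideal.map_span, Set.image_singleton]
  have hmeme : ∀ x, x ∈ ((maximalIdeal 𝔒) ^ e : Ideal 𝔒) ↔ ∀ i, π ∣ b'.repr x i := by
    intro x
    rw [hPe, Ideal.mem_span_singleton]
    constructor
    · rintro ⟨y, rfl⟩ i
      rw [← Algebra.smul_def, map_smul, Finsupp.smul_apply, smul_eq_mul]
      exact dvd_mul_right _ _
    · intro h
      choose c hc using h
      refine ⟨∑ i, c i • b' i, ?_⟩
      have key : π • (∑ i, c i • b' i) = x := by
        rw [Finset.smul_sum]
        simp_rw [smul_smul]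
        conv_rhs => rw [← b'.sum_repr x]
        exact Finset.sum_congr rfl fun i _ => by rw [hc i]
      rw [← key, Algebra.smul_def]
  -- membership characterization for P^(l*e+r)
  have hPn : ((maximalIdeal 𝔒) ^ (l * e + r) : Ideal 𝔒) =
      Ideal.span {algebraMap 𝔬 𝔒 (π ^ l)} * (maximalIdeal 𝔒) ^ r := by
    rw [pow_add]
    congr 1
    calc (maximalIdeal 𝔒) ^ (l * e) = ((maximalIdeal 𝔒) ^ e) ^ l := by rw [← pow_mul, mul_comm]
      _ = (Ideal.map (algebraMap 𝔬 𝔒) (maximalIdeal 𝔬)) ^ l := by rw [heram]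
      _ = Ideal.map (algebraMap 𝔬 𝔒) ((maximalIdeal 𝔬) ^ l) := (Ideal.map_pow _ _ _).symm
      _ = Ideal.map (algebraMap 𝔬 𝔒) (Ideal.span {π ^ l}) := by
            rw [hπ, Ideal.span_singleton_pow]
      _ = Ideal.span {algebraMap 𝔬 𝔒 (π ^ l)} := by rw [Ideal.map_span, Set.image_singleton]
  have hmemn : ∀ x, x ∈ ((maximalIdeal 𝔒) ^ (l * e + r) : Ideal 𝔒) ↔
      ∀ i, (π ^ l * a i) ∣ b'.repr x i := by
    intro x
    rw [hPn, Ideal.mem_span_singleton_mul]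
    constructor
    · rintro ⟨y, hy, rfl⟩ i
      have hrep : b'.repr (algebraMap 𝔬 𝔒 (π ^ l) * y) i = π ^ l * b'.repr y i := by
        rw [← Algebra.smul_def, map_smul, Finsupp.smul_apply, smul_eq_mul]
      rw [hrep]
      exact mul_dvd_mul (dvd_refl _) ((hmem y).mp hy i)
    · intro h
      choose c hc using h
      refine ⟨∑ i, (a i * c i) • b' i, (hmem _).mpr fun i => ?_, ?_⟩
      · rw [b'.repr_sum_self]
        exact Dvd.intro _ rfl
      · rw [← Algebra.smul_def, Finset.smul_sum]
        simp_rw [smul_smul]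
        conv_rhs => rw [← b'.sum_repr x]
        refine Finset.sum_congr rfl fun i _ => ?_
        rw [hc i, mul_assoc]
  -- the diagonal quotient isomorphisms
  have Er := diagQuot b' a ((maximalIdeal 𝔒) ^ r) hmem
  have En := diagQuot b' (fun i => π ^ l * a i) ((maximalIdeal 𝔒) ^ (l * e + r)) hmemn
  have Ee := diagQuot b' (fun _ => π) ((maximalIdeal 𝔒) ^ e) hmeme
  -- every component of Er is killed by π
  have h1 : ∀ z : (𝔒 ⧸ ((maximalIdeal 𝔒) ^ r : Ideal 𝔒)), π • z = 0 := by
    intro z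
    obtain ⟨y, rfl⟩ := Submodule.Quotient.mk_surjective _ z
    rw [← Submodule.Quotient.mk_smul, Submodule.Quotient.mk_eq_zero]
    show π • y ∈ ((maximalIdeal 𝔒) ^ r : Ideal 𝔒)
    rw [Algebra.smul_def]
    refine Ideal.pow_le_pow_right hre ?_
    rw [← heram]
    exact Ideal.mul_mem_right _ _ (Ideal.mem_map_of_mem _ (by rw [hπ]; exact Ideal.subset_span rfl))
  have hkill : ∀ t : (∀ i, 𝔬 ⧸ (Ideal.span {a i} : Ideal 𝔬)), π • t = 0 := by
    intro t
    calc π • t = π • Er (Er.symm t) := by rw [Er.apply_symm_apply]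
      _ = Er (π • Er.symm t) := (Er.map_smul π _).symm
      _ = Er 0 := by rw [h1]
      _ = 0 := Er.map_zero
  have hπ_mem : ∀ i, π ∈ (Ideal.span {a i} : Ideal 𝔬) := by
    intro i
    have h2 := congrFun (hkill (Pi.single i (Submodule.Quotient.mk 1))) i
    rw [Pi.smul_apply, Pi.single_eq_same] at h2
    have h3 : (Submodule.Quotient.mk π : 𝔬 ⧸ (Ideal.span {a i} : Ideal 𝔬)) = 0 := by
      rw [← mul_one π, ← smul_eq_mul, Submodule.Quotient.mk_smul]
      exact h2
    rw [Submodule.Quotient.mk_eq_zero] at h3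
    exact h3
  -- classification of the spans
  set Pset : ι → Prop := fun i => (Ideal.span {a i} : Ideal 𝔬) = maximalIdeal 𝔬 with hPset
  have hcase : ∀ i, Pset i ∨ (Ideal.span {a i} : Ideal 𝔬) = ⊤ := by
    intro i
    by_cases h : (Ideal.span {a i} : Ideal 𝔬) = ⊤
    · exact Or.inr h
    · refine Or.inl ?_
      refine le_antisymm (IsLocalRing.le_maximalIdeal h) ?_
      rw [hπ]
      exact (Ideal.span_singleton_le_iff_mem _).mpr (hπ_mem i)
  -- dimensions
  obtain ⟨edimr⟩ := quot_pow_equiv 𝔬 𝔒 e d heram hd r hre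
  obtain ⟨edime⟩ := quot_pow_equiv 𝔬 𝔒 e d heram hd e le_rfl
  -- card ι = e * d
  have hdiagE : (𝔒 ⧸ ((maximalIdeal 𝔒) ^ e : Ideal 𝔒)) ≃ₗ[𝔬] (ι → 𝔬 ⧸ maximalIdeal 𝔬) :=
    Ee.trans (LinearEquiv.piCongrRight fun i => Submodule.quotEquivOfEq _ _ hπ.symm)
  have hcards : Fintype.card ι = e * d := by
    have hfr := finrank_eq_card_of_equiv (maximalIdeal 𝔬) (hdiagE.symm.trans edime)
    rw [Fintype.card_fin] at hfr
    rw [← hfr, Module.finrank_fintype_fun_eq_card]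
  -- card of Pset = r * d
  have esplit : (∀ i, 𝔬 ⧸ (Ideal.span {a i} : Ideal 𝔬)) ≃ₗ[𝔬]
      ((∀ i : {x // Pset x}, 𝔬 ⧸ (Ideal.span {a i.1} : Ideal 𝔬)) ×
       (∀ i : {x // ¬ Pset x}, 𝔬 ⧸ (Ideal.span {a i.1} : Ideal 𝔬))) :=
    LinearEquiv.piEquivPiSubtypeProd' Pset _
  haveI hsub : ∀ i : {x // ¬ Pset x}, Subsingleton (𝔬 ⧸ (Ideal.span {a i.1} : Ideal 𝔬)) := by
    intro i
    refine Submodule.Quotient.subsingleton_iff.mpr ?_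
    rcases hcase i.1 with h | h
    · exact absurd h i.2
    · exact h
  haveI : Subsingleton (∀ i : {x // ¬ Pset x}, 𝔬 ⧸ (Ideal.span {a i.1} : Ideal 𝔬)) :=
    ⟨fun f g => funext fun i => Subsingleton.elim _ _⟩
  have epos : (∀ i : {x // Pset x}, 𝔬 ⧸ (Ideal.span {a i.1} : Ideal 𝔬)) ≃ₗ[𝔬]
      ({x // Pset x} → 𝔬 ⧸ maximalIdeal 𝔬) :=
    LinearEquiv.piCongrRight fun i => Submodule.quotEquivOfEq _ _ i.2
  have eP : (𝔒 ⧸ ((maximalIdeal 𝔒) ^ r : Ideal 𝔒)) ≃ₗ[𝔬]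
      ({x // Pset x} → 𝔬 ⧸ maximalIdeal 𝔬) :=
    Er.trans (esplit.trans (LinearEquiv.prodSubsingleton.trans epos))
  have hcardP : Fintype.card {x // Pset x} = r * d := by
    have hfr := finrank_eq_card_of_equiv (maximalIdeal 𝔬) (eP.symm.trans edimr)
    rw [Fintype.card_fin] at hfr
    rw [← hfr, Module.finrank_fintype_fun_eq_card]
  have hcardN : Fintype.card {x // ¬ Pset x} = (e - r) * d := by
    rw [Fintype.card_subtype_compl, hcardP, hcards, tsub_mul]
  -- identify the component ideals
  have hcomp : ∀ i, (Ideal.span {π ^ l * a i} : Ideal 𝔬) =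
      (if Pset i then (maximalIdeal 𝔬) ^ (l + 1) else (maximalIdeal 𝔬) ^ l) := by
    intro i
    have h0 : (maximalIdeal 𝔬) ^ l * Ideal.span {a i} = (Ideal.span {π ^ l * a i} : Ideal 𝔬) := by
      rw [hπ, Ideal.span_singleton_pow, Ideal.span_singleton_mul_span_singleton]
    split_ifs with h
    · rw [← h0, h, ← pow_succ]
    · rcases hcase i with h' | h'
      · exact absurd h' h
      · rw [← h0, h', Ideal.mul_top]
  -- assemble the final equivalence
  have E2 : (∀ i, 𝔬 ⧸ (Ideal.span {π ^ l * a i} : Ideal 𝔬)) ≃ₗ[𝔬]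
      (∀ i, 𝔬 ⧸ (if Pset i then (maximalIdeal 𝔬) ^ (l + 1) else (maximalIdeal 𝔬) ^ l)) :=
    LinearEquiv.piCongrRight fun i => Submodule.quotEquivOfEq _ _ (hcomp i)
  have E3 : (∀ i, 𝔬 ⧸ (if Pset i then (maximalIdeal 𝔬) ^ (l + 1) else (maximalIdeal 𝔬) ^ l)) ≃ₗ[𝔬]
      ((∀ i : {x // Pset x}, 𝔬 ⧸ (if Pset i.1 then (maximalIdeal 𝔬) ^ (l + 1) else (maximalIdeal 𝔬) ^ l)) ×
       (∀ i : {x // ¬ Pset x}, 𝔬 ⧸ (if Pset i.1 then (maximalIdeal 𝔬) ^ (l + 1) else (maximalIdeal 𝔬) ^ l))) :=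
    LinearEquiv.piEquivPiSubtypeProd' Pset _
  have E4p : (∀ i : {x // Pset x}, 𝔬 ⧸ (if Pset i.1 then (maximalIdeal 𝔬) ^ (l + 1) else (maximalIdeal 𝔬) ^ l)) ≃ₗ[𝔬]
      ({x // Pset x} → 𝔬 ⧸ (maximalIdeal 𝔬) ^ (l + 1)) :=
    LinearEquiv.piCongrRight fun i => Submodule.quotEquivOfEq _ _ (if_pos i.2)
  have E4n : (∀ i : {x // ¬ Pset x}, 𝔬 ⧸ (if Pset i.1 then (maximalIdeal 𝔬) ^ (l + 1) else (maximalIdeal 𝔬) ^ l)) ≃ₗ[𝔬]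
      ({x // ¬ Pset x} → 𝔬 ⧸ (maximalIdeal 𝔬) ^ l) :=
    LinearEquiv.piCongrRight fun i => Submodule.quotEquivOfEq _ _ (if_neg i.2)
  have E5p : ({x // Pset x} → 𝔬 ⧸ (maximalIdeal 𝔬) ^ (l + 1)) ≃ₗ[𝔬]
      (Fin (r * d) → 𝔬 ⧸ (maximalIdeal 𝔬) ^ (l + 1)) :=
    LinearEquiv.funCongrLeft 𝔬 _ ((Fintype.equivFinOfCardEq hcardP).symm)
  have E5n : ({x // ¬ Pset x} → 𝔬 ⧸ (maximalIdeal 𝔬) ^ l) ≃ₗ[𝔬]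
      (Fin ((e - r) * d) → 𝔬 ⧸ (maximalIdeal 𝔬) ^ l) :=
    LinearEquiv.funCongrLeft 𝔬 _ ((Fintype.equivFinOfCardEq hcardN).symm)
  have Efinal : (𝔒 ⧸ ((maximalIdeal 𝔒) ^ (l * e + r) : Ideal 𝔒)) ≃ₗ[𝔬]
      ((Fin (r * d) → 𝔬 ⧸ (maximalIdeal 𝔬) ^ (l + 1)) ×
       (Fin ((e - r) * d) → 𝔬 ⧸ (maximalIdeal 𝔬) ^ l)) :=
    En.trans (E2.trans (E3.trans ((E4p.trans E5p).prodCongr (E4n.trans E5n))))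
  exact ⟨Efinal⟩
end

section
/- Let M be a finitely generated torsion 𝔒-module with M ≅ ⊕_{i=1}^{s} 𝔒/𝔓^{n_i} as 𝔒-modules, and let λ = (n_1, …, n_s) be the associated partition. Then, as an 𝔬-module (by restriction of scalars along ρ), M ≅ ⊕_{i≥1} (𝔬/𝔭^{i})^{f_{e,i}(λ)·d}. -/
open DirectSum

/-- `ℓ(λ_{e,l})`: the number of parts `n_j` of the partition `n : Fin s → ℕ`
with `(l-1)e < n_j ≤ le`. -/
def partLen (e l : ℕ) {s : ℕ} (n : Fin s → ℕ) : ℕ :=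
  (Finset.univ.filter (fun j : Fin s => (l - 1) * e < n j ∧ n j ≤ l * e)).card

/-- `w_{e,l}(λ) = Σ_{(l-1)e < n_j ≤ le} (n_j - (l-1)e)`, the weight of `λ` at `(e,l)`. -/
def partWeight (e l : ℕ) {s : ℕ} (n : Fin s → ℕ) : ℕ :=
  ∑ j : Fin s, if (l - 1) * e < n j ∧ n j ≤ l * e then n j - (l - 1) * e else 0

/-- `f_{e,l}(λ) = ℓ(λ_{e,l+1})·e − w_{e,l+1}(λ) + w_{e,l}(λ)`. -/
def fEL (e l : ℕ) {s : ℕ} (n : Fin s → ℕ) : ℕ :=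
  partLen e (l + 1) n * e - partWeight e (l + 1) n + partWeight e l n

section Aux

open IsLocalRing Finset

section Core
variable {𝔬 𝔒 : Type} [CommRing 𝔬] [CommRing 𝔒] [IsDomain 𝔬] [IsDomain 𝔒]
  [IsDiscreteValuationRing 𝔬] [IsDiscreteValuationRing 𝔒] [Algebra 𝔬 𝔒]

/-- residue independence of a family -/
def ResIndep (𝔬 : Type) {𝔒 : Type} [CommRing 𝔬] [CommRing 𝔒] [IsLocalRing 𝔬] [IsLocalRing 𝔒]
    [Algebra 𝔬 𝔒] (d : ℕ) (bb : Fin d → 𝔒) : Prop :=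
  ∀ a : Fin d → 𝔬, (∑ i, algebraMap 𝔬 𝔒 (a i) * bb i) ∈ maximalIdeal 𝔒 →
    ∀ i, a i ∈ maximalIdeal 𝔬

lemma unit_not_mem (u : 𝔒ˣ) : (u : 𝔒) ∉ maximalIdeal 𝔒 := fun hm =>
  (maximalIdeal.isMaximal 𝔒).ne_top (Ideal.eq_top_of_isUnit_mem _ hm u.isUnit)

lemma resIndep_unit_mul {d : ℕ} {bb : Fin d → 𝔒} (h : ResIndep 𝔬 d bb) (u : 𝔒ˣ) :
    ResIndep 𝔬 d (fun i => (u : 𝔒) * bb i) := by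
  intro a ha i
  refine h a ?_ i
  have h2 : (u : 𝔒) * ∑ i, algebraMap 𝔬 𝔒 (a i) * bb i ∈ maximalIdeal 𝔒 := by
    rw [Finset.mul_sum]
    convert ha using 2 with j
    ring
  rcases (maximalIdeal.isMaximal 𝔒).isPrime.mem_or_mem h2 with h' | h'
  · exact absurd h' (unit_not_mem u)
  · exact h'

end Core

section Key
variable {𝔬 𝔒 : Type} [CommRing 𝔬] [CommRing 𝔒] [IsDomain 𝔬] [IsDomain 𝔒]
  [IsDiscreteValuationRing 𝔬] [IsDiscreteValuationRing 𝔒] [Algebra 𝔬 𝔒]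

lemma mem_pow_iff {ϖ : 𝔒} (hϖ : Irreducible ϖ) {x : 𝔒} {k : ℕ} :
    x ∈ (maximalIdeal 𝔒) ^ k ↔ ϖ ^ k ∣ x := by
  rw [hϖ.maximalIdeal_eq, Ideal.span_singleton_pow, Ideal.mem_span_singleton]

lemma mem_max_iff {ϖ : 𝔒} (hϖ : Irreducible ϖ) {x : 𝔒} :
    x ∈ maximalIdeal 𝔒 ↔ ϖ ∣ x := by
  rw [hϖ.maximalIdeal_eq, Ideal.mem_span_singleton]

lemma key_div {e d : ℕ} {ϖ : 𝔒} (hϖ : Irreducible ϖ) {π : 𝔬} (hπ : Irreducible π)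
    (u : 𝔒ˣ) (hu : algebraMap 𝔬 𝔒 π = ϖ ^ (e + 1) * u) (m : ℕ) :
    ∀ (bb : Fin (e+1) → Fin d → 𝔒), (∀ t, ResIndep 𝔬 d (bb t)) →
    ∀ a : Fin (e+1) → Fin d → 𝔬,
      (∑ t, ∑ i, algebraMap 𝔬 𝔒 (a t i) * ϖ ^ (t : ℕ) * bb t i) ∈ (maximalIdeal 𝔒) ^ m →
      ∀ (t : Fin (e+1)) (i : Fin d), a t i ∈ (maximalIdeal 𝔬) ^ ((m + e - (t : ℕ)) / (e + 1)) := by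
  induction m with
  | zero =>
    intro bb hbb a ha t i
    have h0 : (0 + e - (t : ℕ)) / (e + 1) = 0 := Nat.div_eq_of_lt (by omega)
    rw [h0, pow_zero, Ideal.one_eq_top]
    exact Submodule.mem_top
  | succ m IH =>
    intro bb hbb a ha
    have hϖmem : ϖ ∈ maximalIdeal 𝔒 := (mem_max_iff hϖ).mpr dvd_rfl
    -- head is in the maximal ideal
    have hsplit := Fin.sum_univ_succ
      (fun t : Fin (e+1) => ∑ i, algebraMap 𝔬 𝔒 (a t i) * ϖ ^ (t : ℕ) * bb t i)
    have hxP : (∑ t, ∑ i, algebraMap 𝔬 𝔒 (a t i) * ϖ ^ (t : ℕ) * bb t i) ∈ maximalIdeal 𝔒 :=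
      Ideal.pow_le_self (Nat.succ_ne_zero m) ha
    have htail : (∑ j : Fin e, ∑ i,
        algebraMap 𝔬 𝔒 (a j.succ i) * ϖ ^ ((j.succ : Fin (e+1)) : ℕ) * bb j.succ i)
        ∈ maximalIdeal 𝔒 := by
      refine Ideal.sum_mem _ fun j _ => Ideal.sum_mem _ fun i _ => ?_
      rw [mem_max_iff hϖ]
      exact Dvd.dvd.mul_right (Dvd.dvd.mul_left (dvd_pow_self ϖ (by simp [Fin.val_succ])) _) _
    have hhead : (∑ i, algebraMap 𝔬 𝔒 (a 0 i) * bb 0 i) ∈ maximalIdeal 𝔒 := by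
      have : (∑ i, algebraMap 𝔬 𝔒 (a 0 i) * ϖ ^ ((0 : Fin (e+1)) : ℕ) * bb 0 i)
          ∈ maximalIdeal 𝔒 := by
        have := hsplit ▸ hxP
        have h2 := Submodule.sub_mem _ this htail
        simpa using h2
      simpa using this
    have h0 : ∀ i, a 0 i ∈ maximalIdeal 𝔬 := hbb 0 _ hhead
    have hdvd : ∀ i, π ∣ a 0 i := fun i => by
      have := h0 i; rwa [hπ.maximalIdeal_eq, Ideal.mem_span_singleton] at this
    choose a0' ha0' using hdvd
    set bb' : Fin (e+1) → Fin d → 𝔒 :=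
      Fin.snoc (fun j : Fin e => bb j.succ) (fun i => (u : 𝔒) * bb 0 i) with hbb'def
    set a' : Fin (e+1) → Fin d → 𝔬 := Fin.snoc (fun j : Fin e => a j.succ) a0' with ha'def
    have hbb' : ∀ t, ResIndep 𝔬 d (bb' t) := by
      refine Fin.lastCases ?_ ?_
      · rw [hbb'def]; simpa [Fin.snoc_last] using resIndep_unit_mul (hbb 0) u
      · intro j; rw [hbb'def]; simpa [Fin.snoc_castSucc] using hbb j.succ
    set y : 𝔒 := ∑ t, ∑ i, algebraMap 𝔬 𝔒 (a' t i) * ϖ ^ (t : ℕ) * bb' t i with hy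
    have h1 : ϖ * (∑ j : Fin e, ∑ i, algebraMap 𝔬 𝔒 (a' (Fin.castSucc j) i) *
          ϖ ^ ((Fin.castSucc j : Fin (e+1)) : ℕ) * bb' (Fin.castSucc j) i)
        = ∑ j : Fin e, ∑ i, algebraMap 𝔬 𝔒 (a j.succ i) *
          ϖ ^ ((j.succ : Fin (e+1)) : ℕ) * bb j.succ i := by
      rw [Finset.mul_sum]
      refine Finset.sum_congr rfl fun j _ => ?_
      rw [Finset.mul_sum]
      refine Finset.sum_congr rfl fun i _ => ?_
      simp only [ha'def, hbb'def, Fin.snoc_castSucc, Fin.coe_castSucc, Fin.val_succ]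
      rw [pow_succ]
      ring
    have h2 : ϖ * (∑ i, algebraMap 𝔬 𝔒 (a' (Fin.last e) i) *
          ϖ ^ ((Fin.last e : Fin (e+1)) : ℕ) * bb' (Fin.last e) i)
        = ∑ i, algebraMap 𝔬 𝔒 (a 0 i) * ϖ ^ ((0 : Fin (e+1)) : ℕ) * bb 0 i := by
      rw [Finset.mul_sum]
      refine Finset.sum_congr rfl fun i _ => ?_
      simp only [ha'def, hbb'def, Fin.snoc_last, Fin.val_last, Fin.val_zero, pow_zero]
      rw [ha0' i, map_mul, hu, pow_succ]
      ring
    have hxy : ϖ * y = ∑ t, ∑ i, algebraMap 𝔬 𝔒 (a t i) * ϖ ^ (t : ℕ) * bb t i := by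
      rw [hy, Fin.sum_univ_castSucc
        (f := fun t : Fin (e+1) => ∑ i, algebraMap 𝔬 𝔒 (a' t i) * ϖ ^ (t : ℕ) * bb' t i)]
      rw [hsplit, mul_add, h1, h2, add_comm]
    have hym : y ∈ (maximalIdeal 𝔒) ^ m := by
      rw [mem_pow_iff hϖ]
      have : ϖ ^ (m + 1) ∣ ϖ * y := by rw [hxy]; exact (mem_pow_iff hϖ).mp ha
      rw [pow_succ'] at this
      exact (mul_dvd_mul_iff_left hϖ.ne_zero).mp this
    have hIH := IH bb' hbb' a' hym
    intro t i
    refine Fin.cases ?_ ?_ t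
    · have hlast := hIH (Fin.last e) i
      rw [ha'def] at hlast
      simp only [Fin.snoc_last, Fin.val_last] at hlast
      have hexp : (m + e - e) / (e + 1) = m / (e + 1) := by congr 1; omega
      rw [hexp] at hlast
      have : a 0 i ∈ (maximalIdeal 𝔬) * (maximalIdeal 𝔬) ^ (m / (e+1)) := by
        rw [ha0' i]
        exact Ideal.mul_mem_mul ((mem_max_iff hπ).mpr dvd_rfl) hlast
      have hexp2 : (m + 1 + e - ((0 : Fin (e+1)) : ℕ)) / (e + 1) = m / (e + 1) + 1 := by
        simp only [Fin.val_zero, Nat.sub_zero]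
        rw [show m + 1 + e = m + (e + 1) by omega]
        exact Nat.add_div_right m (by omega)
      rw [hexp2, pow_succ']
      exact this
    · intro j
      have hc := hIH (Fin.castSucc j) i
      rw [ha'def] at hc
      simp only [Fin.snoc_castSucc, Fin.coe_castSucc] at hc
      have hexp : (m + 1 + e - ((j.succ : Fin (e+1)) : ℕ)) / (e + 1) = (m + e - (j : ℕ)) / (e + 1) := by
        simp only [Fin.val_succ]
        congr 1
        omega
      rw [hexp]
      exact hc
end Key

section Build
variable {𝔬 𝔒 : Type} [CommRing 𝔬] [CommRing 𝔒] [IsDomain 𝔬] [IsDomain 𝔒]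
  [IsDiscreteValuationRing 𝔬] [IsDiscreteValuationRing 𝔒] [Algebra 𝔬 𝔒]

theorem core_equiv [Module.Finite 𝔬 𝔒] (e d : ℕ)
    (heram : Ideal.map (algebraMap 𝔬 𝔒) (maximalIdeal 𝔬) = (maximalIdeal 𝔒) ^ (e + 1))
    (φ : (𝔒 ⧸ maximalIdeal 𝔒) ≃ₗ[𝔬] (Fin d → 𝔬 ⧸ maximalIdeal 𝔬)) (m : ℕ) :
    Nonempty ((𝔒 ⧸ (maximalIdeal 𝔒) ^ m) ≃ₗ[𝔬]
      Π t : Fin (e+1), Fin d → 𝔬 ⧸ (maximalIdeal 𝔬) ^ ((m + e - (t : ℕ)) / (e + 1))) := by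
  obtain ⟨ϖ, hϖ⟩ := IsDiscreteValuationRing.exists_irreducible 𝔒
  obtain ⟨π, hπ⟩ := IsDiscreteValuationRing.exists_irreducible 𝔬
  -- the unit u with ρ π = ϖ^(e+1) * u
  have hassoc : Associated (ϖ ^ (e + 1)) (algebraMap 𝔬 𝔒 π) := by
    rw [← Ideal.span_singleton_eq_span_singleton, ← Ideal.span_singleton_pow,
      ← hϖ.maximalIdeal_eq, ← heram, hπ.maximalIdeal_eq, Ideal.map_span]
    simp
  obtain ⟨u, hu⟩ := hassoc
  have hu : algebraMap 𝔬 𝔒 π = ϖ ^ (e + 1) * u := hu.symm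
  -- lift a residue basis
  choose b hb using fun i : Fin d =>
    Submodule.Quotient.mk_surjective (maximalIdeal 𝔒) (φ.symm (Pi.single i 1))
  have hres : ∀ a : Fin d → 𝔬,
      φ (Submodule.Quotient.mk (∑ i, algebraMap 𝔬 𝔒 (a i) * b i))
        = fun k => Ideal.Quotient.mk (maximalIdeal 𝔬) (a k) := by
    intro a
    have h1 : (Submodule.Quotient.mk (∑ i, algebraMap 𝔬 𝔒 (a i) * b i) : 𝔒 ⧸ maximalIdeal 𝔒)
        = ∑ i, a i • φ.symm (Pi.single i 1) := by
      rw [← Submodule.mkQ_apply, map_sum]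
      refine Finset.sum_congr rfl fun i _ => ?_
      rw [Submodule.mkQ_apply, ← hb i, ← Algebra.smul_def, ← Submodule.Quotient.mk_smul]
    rw [h1, map_sum]
    funext k
    simp only [Finset.sum_apply, map_smul, LinearEquiv.apply_symm_apply, Pi.smul_apply]
    rw [Finset.sum_eq_single k]
    · have : (a k) • (1 : 𝔬 ⧸ maximalIdeal 𝔬)
          = Submodule.Quotient.mk ((a k) • (1 : 𝔬)) :=
        (Submodule.Quotient.mk_smul _ _ _).symm
      simp only [Pi.single_eq_same, this, smul_eq_mul, mul_one]
      rfl
    · intro j _ hj; simp [Pi.single_eq_of_ne' hj]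
    · simp
  have hbres : ResIndep 𝔬 d b := by
    intro a ha i
    have h0 : (Submodule.Quotient.mk (∑ i, algebraMap 𝔬 𝔒 (a i) * b i) : 𝔒 ⧸ maximalIdeal 𝔒)
        = 0 := (Submodule.Quotient.mk_eq_zero _).mpr ha
    have := hres a
    rw [h0, map_zero] at this
    have hk := congrFun this.symm i
    rwa [Pi.zero_apply, Ideal.Quotient.eq_zero_iff_mem] at hk
  have hspan : ∀ x : 𝔒, ∃ a : Fin d → 𝔬,
      x - ∑ i, algebraMap 𝔬 𝔒 (a i) * b i ∈ maximalIdeal 𝔒 := by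
    intro x
    choose a ha using fun k =>
      Ideal.Quotient.mk_surjective (I := maximalIdeal 𝔬) (φ (Submodule.Quotient.mk x) k)
    refine ⟨a, ?_⟩
    rw [← Submodule.Quotient.mk_eq_zero, Submodule.Quotient.mk_sub]
    have : (Submodule.Quotient.mk (∑ i, algebraMap 𝔬 𝔒 (a i) * b i) : 𝔒 ⧸ maximalIdeal 𝔒)
        = Submodule.Quotient.mk x := by
      apply φ.injective
      rw [hres a]
      funext k
      exact ha k
    rw [this, sub_self]
  -- arithmetic helpers
  have harith1 : ∀ t : Fin (e+1), m ≤ (e+1) * ((m + e - (t : ℕ)) / (e+1)) + (t : ℕ) := by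
    intro t
    have ht : (t : ℕ) ≤ e := Nat.lt_succ_iff.mp t.isLt
    have h := Nat.div_add_mod (m + e - (t : ℕ)) (e+1)
    obtain ⟨A, hA⟩ : ∃ A, (e+1) * ((m + e - (t : ℕ)) / (e+1)) = A := ⟨_, rfl⟩
    obtain ⟨B, hB⟩ : ∃ B, (m + e - (t : ℕ)) % (e+1) = B := ⟨_, rfl⟩
    have h2 : B < e + 1 := hB ▸ Nat.mod_lt _ (Nat.succ_pos e)
    rw [hA, hB] at h
    rw [hA]
    omega
  have harith2 : ∀ (c : ℕ) (t : Fin (e+1)), c ≤ ((c+1)*(e+1) + e - (t : ℕ)) / (e+1) := by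
    intro c t
    have ht : (t : ℕ) ≤ e := Nat.lt_succ_iff.mp t.isLt
    rw [Nat.le_div_iff_mul_le (Nat.succ_pos e)]
    have h1 : c * (e+1) + (e+1) = (c+1)*(e+1) := by ring
    obtain ⟨A, hA⟩ : ∃ A, c * (e+1) = A := ⟨_, rfl⟩
    obtain ⟨B, hB⟩ : ∃ B, (c+1) * (e+1) = B := ⟨_, rfl⟩
    rw [hA, hB] at h1 ⊢
    omega
  -- the linear map
  let Phi : (Fin (e+1) → Fin d → 𝔬) →ₗ[𝔬] 𝔒 :=
    { toFun := fun a => ∑ t, ∑ i, algebraMap 𝔬 𝔒 (a t i) * ϖ ^ (t : ℕ) * b i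
      map_add' := fun x y => by
        simp only [Pi.add_apply, map_add, add_mul, Finset.sum_add_distrib]
      map_smul' := fun cc x => by
        simp only [Pi.smul_apply, smul_eq_mul, map_mul, RingHom.id_apply, Algebra.smul_def,
          Finset.mul_sum, mul_assoc] }
  have hPhiEq : ∀ a, Phi a = ∑ t, ∑ i, algebraMap 𝔬 𝔒 (a t i) * ϖ ^ (t : ℕ) * b i :=
    fun a => rfl
  have hgen : ∀ (t : Fin (e+1)) (i : Fin d), ϖ ^ (t : ℕ) * b i ∈ LinearMap.range Phi := by
    intro t i
    refine ⟨Pi.single t (Pi.single i 1), ?_⟩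
    rw [hPhiEq, Finset.sum_eq_single t]
    · rw [Finset.sum_eq_single i]
      · simp
      · intro j _ hj; simp [Pi.single_eq_of_ne hj]
      · simp
    · intro t' _ ht'
      rw [Finset.sum_eq_zero]
      intro j _
      simp [Pi.single_eq_of_ne ht']
    · simp
  have hinjPhi : Function.Injective Phi := by
    rw [← LinearMap.ker_eq_bot]
    rw [eq_bot_iff]
    intro a ha0
    rw [LinearMap.mem_ker] at ha0
    have hmem : ∀ (t : Fin (e+1)) (i : Fin d) (c : ℕ), a t i ∈ (maximalIdeal 𝔬) ^ c := by
      intro t i c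
      have hzero : (∑ t, ∑ i, algebraMap 𝔬 𝔒 (a t i) * ϖ ^ (t : ℕ) * b i)
          ∈ (maximalIdeal 𝔒) ^ ((c+1)*(e+1)) := by
        rw [← hPhiEq, ha0]; exact Submodule.zero_mem _
      have h := key_div hϖ hπ u hu ((c+1)*(e+1)) (fun _ => b) (fun _ => hbres) a hzero t i
      exact Ideal.pow_le_pow_right (harith2 c t) h
    have hbot : ∀ (t : Fin (e+1)) (i : Fin d), a t i = 0 := by
      intro t i
      have h1 : a t i ∈ ⨅ c : ℕ, (maximalIdeal 𝔬) ^ c :=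
        Submodule.mem_iInf _ |>.mpr (hmem t i)
      rwa [Ideal.iInf_pow_eq_bot_of_isDomain _
        (Ideal.IsMaximal.ne_top (maximalIdeal.isMaximal 𝔬)), Submodule.mem_bot] at h1
    have : a = 0 := by funext t i; exact hbot t i
    simpa [this]
  have hstep : ∀ r : ℕ, ((maximalIdeal 𝔒 ^ (e+1-r)).restrictScalars 𝔬) ≤
      LinearMap.range Phi ⊔ (maximalIdeal 𝔬) • (⊤ : Submodule 𝔬 𝔒) := by
    intro r
    induction r with
    | zero =>
      intro x hx
      apply Submodule.mem_sup_right
      rw [Submodule.restrictScalars_mem, Nat.sub_zero, ← heram] at hx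
      rw [Ideal.smul_top_eq_map]
      rwa [Submodule.restrictScalars_mem]
    | succ r IH =>
      intro x hx
      rw [Submodule.restrictScalars_mem, mem_pow_iff hϖ] at hx
      obtain ⟨z, rfl⟩ := hx
      obtain ⟨a, hzp⟩ := hspan z
      have hsplit2 : ϖ ^ (e+1-(r+1)) * z
          = (∑ i, a i • (ϖ ^ (e+1-(r+1)) * b i))
            + ϖ ^ (e+1-(r+1)) * (z - ∑ i, algebraMap 𝔬 𝔒 (a i) * b i) := by
        have h4 : ∀ i ∈ Finset.univ, a i • (ϖ ^ (e+1-(r+1)) * b i)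
            = ϖ ^ (e+1-(r+1)) * (algebraMap 𝔬 𝔒 (a i) * b i) := fun i _ => by
          rw [Algebra.smul_def]; ring
        rw [Finset.sum_congr rfl h4, ← Finset.mul_sum]
        ring
      rw [hsplit2]
      apply Submodule.add_mem
      · apply Submodule.mem_sup_left
        refine Submodule.sum_mem _ fun i _ => Submodule.smul_mem _ _ ?_
        have := hgen ⟨e+1-(r+1), by omega⟩ i
        simpa using this
      · apply IH
        rw [Submodule.restrictScalars_mem]
        have hmul : ϖ ^ (e+1-(r+1)) * (z - ∑ i, algebraMap 𝔬 𝔒 (a i) * b i)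
            ∈ (maximalIdeal 𝔒) ^ (e+1-(r+1)) * maximalIdeal 𝔒 :=
          Ideal.mul_mem_mul ((mem_pow_iff hϖ).mpr dvd_rfl) hzp
        rw [← pow_succ] at hmul
        exact Ideal.pow_le_pow_right (by omega) hmul
  have hsurj : Function.Surjective Phi := by
    rw [← LinearMap.range_eq_top, eq_top_iff]
    have hfg : (⊤ : Submodule 𝔬 𝔒).FG := Module.Finite.fg_top
    have hjac : maximalIdeal 𝔬 ≤ Ideal.jacobson ⊥ := by
      rw [IsLocalRing.jacobson_eq_maximalIdeal ⊥ bot_ne_top]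
    have hle : (⊤ : Submodule 𝔬 𝔒) ≤ LinearMap.range Phi ⊔ (maximalIdeal 𝔬) • ⊤ := by
      intro x _
      have := hstep (e+1) (by simp : x ∈ _)
      exact this
    exact Submodule.le_of_le_smul_of_le_jacobson_bot hfg hjac hle
  let PhiE : (Fin (e+1) → Fin d → 𝔬) ≃ₗ[𝔬] 𝔒 := LinearEquiv.ofBijective Phi ⟨hinjPhi, hsurj⟩
  let Pm : Submodule 𝔬 (Fin (e+1) → Fin d → 𝔬) :=
    Submodule.pi Set.univ fun t => Submodule.pi Set.univ
      fun _ : Fin d => (maximalIdeal 𝔬) ^ ((m + e - (t : ℕ)) / (e+1))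
  have hmap : Submodule.map (PhiE : (Fin (e+1) → Fin d → 𝔬) →ₗ[𝔬] 𝔒) Pm
      = (maximalIdeal 𝔒 ^ m).restrictScalars 𝔬 := by
    apply le_antisymm
    · rintro x ⟨a, haP, rfl⟩
      show Phi a ∈ _
      rw [Submodule.restrictScalars_mem, hPhiEq]
      refine Ideal.sum_mem _ fun t _ => Ideal.sum_mem _ fun i _ => ?_
      have hti : a t i ∈ (maximalIdeal 𝔬) ^ ((m + e - (t : ℕ)) / (e+1)) :=
        (Submodule.mem_pi.mp haP) t (Set.mem_univ t) |> fun h =>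
          (Submodule.mem_pi.mp h) i (Set.mem_univ i)
      have h1 : algebraMap 𝔬 𝔒 (a t i)
          ∈ (maximalIdeal 𝔒) ^ ((e+1) * ((m + e - (t : ℕ)) / (e+1))) := by
        have h2 := Ideal.mem_map_of_mem (algebraMap 𝔬 𝔒) hti
        rwa [Ideal.map_pow, heram, ← pow_mul] at h2
      have h2 : ϖ ^ (t : ℕ) ∈ (maximalIdeal 𝔒) ^ (t : ℕ) := (mem_pow_iff hϖ).mpr dvd_rfl
      have h3 := Ideal.mul_mem_mul h1 h2
      rw [← pow_add] at h3
      exact Ideal.mul_mem_right _ _ (Ideal.pow_le_pow_right (harith1 t) h3)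
    · intro x hx
      obtain ⟨a, rfl⟩ := hsurj x
      rw [Submodule.restrictScalars_mem] at hx
      refine ⟨a, ?_, rfl⟩
      rw [hPhiEq] at hx
      have h := key_div hϖ hπ u hu m (fun _ => b) (fun _ => hbres) a hx
      refine Submodule.mem_pi.mpr fun t _ => Submodule.mem_pi.mpr fun i _ => h t i
  refine ⟨((Submodule.Quotient.restrictScalarsEquiv 𝔬 ((maximalIdeal 𝔒) ^ m)).symm.trans
    ((Submodule.Quotient.equiv Pm ((maximalIdeal 𝔒 ^ m).restrictScalars 𝔬) PhiE hmap).symm.trans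
      ((Submodule.quotientPi _).trans (LinearEquiv.piCongrRight fun t =>
        Submodule.quotientPi _))))⟩

end Build


section Generic
variable {R : Type} [CommRing R]

/-- Drop subsingleton summands from a direct sum. -/
noncomputable def dropTrivial {ι : Type} [DecidableEq ι] (β : ι → Type)
    [∀ i, AddCommGroup (β i)] [∀ i, Module R (β i)]
    (p : ι → Prop) [DecidablePred p] (h : ∀ i, ¬ p i → Subsingleton (β i)) :
    (⨁ i, β i) ≃ₗ[R] ⨁ s : Subtype p, β s.val := by
  refine LinearEquiv.ofLinear
    (DirectSum.toModule R ι _ (fun i =>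
      if hp : p i then (DirectSum.lof R (Subtype p) (fun s : Subtype p => β s.val) ⟨i, hp⟩)
      else 0))
    (DirectSum.toModule R (Subtype p) _ (fun s =>
      (DirectSum.lof R ι β s.val)))
    ?_ ?_
  · apply DirectSum.linearMap_ext
    intro s
    apply LinearMap.ext
    intro x
    simp only [LinearMap.comp_apply, DirectSum.toModule_lof, LinearMap.id_apply]
    rcases s with ⟨i, hi⟩
    rw [dif_pos hi]
  · apply DirectSum.linearMap_ext
    intro i
    apply LinearMap.ext
    intro x
    simp only [LinearMap.comp_apply, DirectSum.toModule_lof, LinearMap.id_apply]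
    by_cases hp : p i
    · rw [dif_pos hp, DirectSum.toModule_lof]
    · rw [dif_neg hp]
      have : Subsingleton (β i) := h i hp
      have hx : x = 0 := Subsingleton.elim x 0
      simp [hx]

/-- fibration of a subtype by positive values -/
def sigmaFiber {ι : Type} (V : ι → ℕ) :
    {τ : ι // V τ ≠ 0} ≃ Σ i : ℕ, {τ : ι // V τ = i + 1} where
  toFun τ := ⟨V τ.val - 1, τ.val, by have := τ.2; omega⟩
  invFun x := ⟨x.2.val, by have := x.2.2; omega⟩
  left_inv τ := rfl
  right_inv := by
    rintro ⟨i, τ, hτ⟩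
    have hi : V τ - 1 = i := by omega
    subst hi
    rfl

theorem directSum_reindex {ι : Type} [DecidableEq ι] [Fintype ι]
    (Q : ℕ → Type) [∀ c, AddCommGroup (Q c)] [∀ c, Module R (Q c)] [Subsingleton (Q 0)]
    (V : ι → ℕ) (F : ℕ → ℕ) (hF : ∀ i, Fintype.card {τ : ι // V τ = i + 1} = F i) :
    Nonempty ((⨁ τ : ι, Q (V τ)) ≃ₗ[R] ⨁ i : ℕ, (Fin (F i) → Q (i+1))) := by
  have E1 : (⨁ τ : ι, Q (V τ)) ≃ₗ[R] ⨁ σ : {τ : ι // V τ ≠ 0}, Q (V σ.val) :=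
    dropTrivial (fun τ => Q (V τ)) (fun τ => V τ ≠ 0)
      (fun τ hτ => by
        show Subsingleton (Q (V τ))
        rw [show V τ = 0 by omega]
        infer_instance)
  have E2 : (⨁ σ : {τ : ι // V τ ≠ 0}, Q (V σ.val)) ≃ₗ[R]
      ⨁ x : Σ i : ℕ, {τ : ι // V τ = i + 1}, Q (V ((sigmaFiber V).symm x).val) :=
    DirectSum.lequivCongrLeft R (sigmaFiber V)
  have E3 : (⨁ x : Σ i : ℕ, {τ : ι // V τ = i + 1}, Q (V ((sigmaFiber V).symm x).val)) ≃ₗ[R]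
      ⨁ x : Σ i : ℕ, {τ : ι // V τ = i + 1}, Q (x.1 + 1) :=
    DFinsupp.mapRange.linearEquiv fun x =>
      (by rw [show V ((sigmaFiber V).symm x).val = x.1 + 1 from x.2.2] :
        Q (V ((sigmaFiber V).symm x).val) ≃ₗ[R] Q (x.1 + 1))
  have E4 : (⨁ x : Σ i : ℕ, {τ : ι // V τ = i + 1}, Q (x.1 + 1)) ≃ₗ[R]
      ⨁ i : ℕ, ⨁ _τ : {τ : ι // V τ = i + 1}, Q (i + 1) :=
    DirectSum.sigmaLcurryEquiv R (δ := fun i _ => Q (i+1))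
  have E5 : (⨁ i : ℕ, ⨁ _τ : {τ : ι // V τ = i + 1}, Q (i + 1)) ≃ₗ[R]
      ⨁ i : ℕ, (Fin (F i) → Q (i+1)) :=
    DFinsupp.mapRange.linearEquiv fun i =>
      (DirectSum.lequivCongrLeft R (Fintype.equivFinOfCardEq (hF i))).trans
        (DirectSum.linearEquivFunOnFintype R _ _)
  exact ⟨E1.trans (E2.trans (E3.trans (E4.trans E5)))⟩

end Generic

lemma fEL_eq_sum (e i : ℕ) {s : ℕ} (n : Fin s → ℕ) :
    fEL e (i+1) n = ∑ j,
      ((if (i+1)*e < n j ∧ n j ≤ (i+2)*e then e - (n j - (i+1)*e) else 0)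
        + (if i*e < n j ∧ n j ≤ (i+1)*e then n j - i*e else 0)) := by
  unfold fEL partLen partWeight
  simp only [show i+1+1 = i+2 from rfl, show i+2-1 = i+1 from rfl, show i+1-1 = i from rfl]
  rw [Finset.sum_add_distrib]
  congr 1
  rw [Finset.card_filter, Finset.sum_mul]
  obtain ⟨B, hB⟩ : ∃ B, (i+1)*e = B := ⟨_, rfl⟩
  obtain ⟨C, hC⟩ : ∃ C, (i+2)*e = C := ⟨_, rfl⟩
  have hBC : C = B + e := by rw [← hB, ← hC]; ring
  simp only [hB, hC]
  rw [← Finset.sum_tsub_distrib]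
  · refine Finset.sum_congr rfl fun j _ => ?_
    split_ifs with hc
    · rw [one_mul]
    · rw [zero_mul, Nat.zero_sub]
  · intro j _
    split_ifs with hc
    · rw [one_mul]; omega
    · rw [zero_mul]

lemma count_levels (e i m : ℕ) :
    (Finset.univ.filter (fun t : Fin (e+1) => (m + e - (t:ℕ)) / (e+1) = i + 1)).card
    = (if (i+1)*(e+1) < m ∧ m ≤ (i+2)*(e+1) then (e+1) - (m - (i+1)*(e+1)) else 0)
      + (if i*(e+1) < m ∧ m ≤ (i+1)*(e+1) then m - i*(e+1) else 0) := by
  have hcond : ∀ t : ℕ, ((m + e - t) / (e+1) = i + 1)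
      ↔ ((i+1)*(e+1) ≤ m + e - t ∧ m + e - t < (i+2)*(e+1)) := by
    intro t
    constructor
    · intro h
      constructor
      · rw [← Nat.le_div_iff_mul_le (Nat.succ_pos e), h]
      · rw [← Nat.div_lt_iff_lt_mul (Nat.succ_pos e), h]; omega
    · rintro ⟨h1, h2⟩
      have h1' : i + 1 ≤ (m + e - t) / (e+1) := (Nat.le_div_iff_mul_le (Nat.succ_pos e)).mpr h1
      have h2' : (m + e - t) / (e+1) < i + 2 := (Nat.div_lt_iff_lt_mul (Nat.succ_pos e)).mpr h2
      omega
  rw [Finset.card_filter]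
  rw [Fin.sum_univ_eq_sum_range (fun t => if (m + e - t) / (e+1) = i + 1 then 1 else 0) (e+1)]
  rw [← Finset.card_filter]
  obtain ⟨A, hA⟩ : ∃ A, (i+1)*(e+1) = A := ⟨_, rfl⟩
  obtain ⟨B, hB⟩ : ∃ B, (i+2)*(e+1) = B := ⟨_, rfl⟩
  obtain ⟨C, hC⟩ : ∃ C, i*(e+1) = C := ⟨_, rfl⟩
  have hAB : B = A + (e+1) := by rw [← hA, ← hB]; ring
  have hCA : A = C + (e+1) := by rw [← hA, ← hC]; ring
  simp only [hA, hB, hC]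
  have hfilter : (Finset.range (e+1)).filter (fun t => (m + e - t) / (e+1) = i + 1)
      = Finset.Ico (m + e + 1 - B) (min (e+1) (m + e + 1 - A)) := by
    ext t
    simp only [Finset.mem_filter, Finset.mem_range, Finset.mem_Ico, hcond t, hA, hB]
    omega
  rw [hfilter, Nat.card_Ico]
  split_ifs <;> omega

lemma card_count (e d i : ℕ) {s : ℕ} (n : Fin s → ℕ) :
    Fintype.card {y : Σ _j : Fin s, (Σ _t : Fin (e+1), Fin d) //
        (n y.1 + e - (y.2.1 : ℕ)) / (e+1) = i + 1}
      = fEL (e+1) (i+1) n * d := by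
  rw [Fintype.card_subtype, Finset.card_filter]
  rw [← Finset.univ_sigma_univ, Finset.sum_sigma]
  have hinner : ∀ j : Fin s,
      (∑ x : (Σ _t : Fin (e+1), Fin d),
        (if (n j + e - (x.1 : ℕ)) / (e+1) = i + 1 then 1 else 0))
      = ((if (i+1)*(e+1) < n j ∧ n j ≤ (i+2)*(e+1) then (e+1) - (n j - (i+1)*(e+1)) else 0)
        + (if i*(e+1) < n j ∧ n j ≤ (i+1)*(e+1) then n j - i*(e+1) else 0)) * d := by
    intro j
    rw [← Finset.univ_sigma_univ, Finset.sum_sigma]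
    have : ∀ t : Fin (e+1),
        (∑ _k : Fin d, (if (n j + e - (t : ℕ)) / (e+1) = i + 1 then (1:ℕ) else 0))
        = (if (n j + e - (t : ℕ)) / (e+1) = i + 1 then 1 else 0) * d := by
      intro t
      rw [Finset.sum_const, Finset.card_univ, Fintype.card_fin, smul_eq_mul]
      ring
    rw [Finset.sum_congr rfl fun t _ => this t, ← Finset.sum_mul]
    rw [← Finset.card_filter, count_levels]
  rw [Finset.sum_congr rfl fun j _ => hinner j, ← Finset.sum_mul]
  rw [fEL_eq_sum (e+1) i n]

end Aux


/-- With `𝔬 ⊆ 𝔒` discrete valuation rings as in the context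
(residue degree `d`, ramification index `e`), a finitely generated torsion
`𝔒`-module `M` of partition `λ = (n_1 ≥ … ≥ n_s)` satisfies, as an `𝔬`-module,
`M ≅ ⊕_{i ≥ 1} (𝔬/𝔭^i)^(f_{e,i}(λ)·d)`. -/
theorem stmt_2
    (𝔬 𝔒 : Type) [CommRing 𝔬] [CommRing 𝔒] [IsDomain 𝔬] [IsDomain 𝔒]
    [IsDiscreteValuationRing 𝔬] [IsDiscreteValuationRing 𝔒]
    [Algebra 𝔬 𝔒]
    (hinj : Function.Injective (algebraMap 𝔬 𝔒))
    [Module.Finite 𝔬 𝔒]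
    (e d : ℕ) (he : 1 ≤ e)
    (heram : Ideal.map (algebraMap 𝔬 𝔒) (IsLocalRing.maximalIdeal 𝔬) =
      (IsLocalRing.maximalIdeal 𝔒) ^ e)
    (hd : Nonempty ((𝔒 ⧸ IsLocalRing.maximalIdeal 𝔒) ≃ₗ[𝔬]
      (Fin d → 𝔬 ⧸ IsLocalRing.maximalIdeal 𝔬)))
    (M : Type) [AddCommGroup M] [Module 𝔒 M] [Module 𝔬 M] [IsScalarTower 𝔬 𝔒 M]
    [Module.Finite 𝔒 M] (htor : Module.IsTorsion 𝔒 M)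
    (s : ℕ) (n : Fin s → ℕ) (hanti : Antitone n) (hpos : ∀ i, 1 ≤ n i)
    (hiso : Nonempty (M ≃ₗ[𝔒] ⨁ i : Fin s, 𝔒 ⧸ (IsLocalRing.maximalIdeal 𝔒) ^ (n i))) :
    Nonempty (M ≃ₗ[𝔬]
      ⨁ i : ℕ, (Fin (fEL e (i + 1) n * d) → 𝔬 ⧸ (IsLocalRing.maximalIdeal 𝔬) ^ (i + 1))) := by
  obtain ⟨e', rfl⟩ : ∃ e', e = e' + 1 := ⟨e - 1, by omega⟩
  obtain ⟨φ⟩ := hd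
  obtain ⟨ψ⟩ := hiso
  let Q : ℕ → Type := fun c => 𝔬 ⧸ (IsLocalRing.maximalIdeal 𝔬) ^ c
  haveI hQ0 : Subsingleton (Q 0) :=
    Submodule.Quotient.subsingleton_iff.mpr (by rw [pow_zero, Ideal.one_eq_top])
  let R1 : M ≃ₗ[𝔬] ⨁ j : Fin s, 𝔒 ⧸ (IsLocalRing.maximalIdeal 𝔒) ^ (n j) :=
    ψ.restrictScalars 𝔬
  have Ej : ∀ j : Fin s, (𝔒 ⧸ (IsLocalRing.maximalIdeal 𝔒) ^ (n j)) ≃ₗ[𝔬]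
      Π t : Fin (e'+1), Fin d → Q ((n j + e' - (t : ℕ)) / (e'+1)) :=
    fun j => (core_equiv e' d heram φ (n j)).some
  have R3 : ∀ j : Fin s, (Π t : Fin (e'+1), Fin d → Q ((n j + e' - (t : ℕ)) / (e'+1))) ≃ₗ[𝔬]
      ⨁ x : Σ _t : Fin (e'+1), Fin d, Q ((n j + e' - (x.1 : ℕ)) / (e'+1)) :=
    fun j =>
      (LinearEquiv.piCongrRight fun t : Fin (e'+1) =>
          (DirectSum.linearEquivFunOnFintype 𝔬 (Fin d)
            (fun _ => Q ((n j + e' - (t : ℕ)) / (e'+1)))).symm).trans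
        (((DirectSum.linearEquivFunOnFintype 𝔬 (Fin (e'+1))
            (fun t : Fin (e'+1) => ⨁ _k : Fin d, Q ((n j + e' - (t : ℕ)) / (e'+1)))).symm).trans
          (DirectSum.sigmaLcurryEquiv 𝔬
            (δ := fun (t : Fin (e'+1)) (_ : Fin d) =>
              Q ((n j + e' - (t : ℕ)) / (e'+1)))).symm)
  let R4 : (⨁ j : Fin s, 𝔒 ⧸ (IsLocalRing.maximalIdeal 𝔒) ^ (n j)) ≃ₗ[𝔬]
      ⨁ y : Σ _j : Fin s, (Σ _t : Fin (e'+1), Fin d),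
        Q ((n y.1 + e' - (y.2.1 : ℕ)) / (e'+1)) :=
    (DFinsupp.mapRange.linearEquiv fun j => (Ej j).trans (R3 j)).trans
      (DirectSum.sigmaLcurryEquiv 𝔬
        (δ := fun (j : Fin s) (x : Σ _t : Fin (e'+1), Fin d) =>
          Q ((n j + e' - (x.1 : ℕ)) / (e'+1)))).symm
  obtain ⟨R5⟩ := directSum_reindex (R := 𝔬) Q
    (fun y : Σ _j : Fin s, (Σ _t : Fin (e'+1), Fin d) =>
      (n y.1 + e' - (y.2.1 : ℕ)) / (e'+1))
    (fun i => fEL (e'+1) (i+1) n * d)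
    (fun i => card_count e' d i n)
  exact ⟨R1.trans (R4.trans R5)⟩
end

section
/- Let n ≥ 1 and write n = l(p−1) + r with 0 < r ≤ p−1. Then, as abelian groups, 𝔒/𝔓^{n} ≅ (ℤ/p^{l+1}ℤ)^{r} ⊕ (ℤ/p^{l}ℤ)^{p−r−1}. -/
open Polynomial

lemma gsplit (p : ℕ) [hp : Fact p.Prime] (g : ℤ_[p][X])
    (hg : g = ∑ i ∈ Finset.Icc 1 p, C (p.choose i : ℤ_[p]) * X ^ (i - 1)) :
    g = (∑ i ∈ Finset.Icc 1 (p-1), C (p.choose i : ℤ_[p]) * X ^ (i - 1)) + X ^ (p-1) := by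
  have h2 : 2 ≤ p := hp.out.two_le
  rw [hg, show Finset.Icc 1 p = Finset.Icc 1 ((p-1)+1) from by congr 1; omega,
    Finset.sum_Icc_succ_top (by omega)]
  congr 1
  simp [show p - 1 + 1 = p from by omega, Nat.choose_self]

lemma gdegsum (p : ℕ) [hp : Fact p.Prime] :
    (∑ i ∈ Finset.Icc 1 (p-1), C (p.choose i : ℤ_[p]) * X ^ (i - 1)).degree < ((p-1 : ℕ) : WithBot ℕ) := by
  have h2 : 2 ≤ p := hp.out.two_le
  refine lt_of_le_of_lt (Polynomial.degree_sum_le _ _) ?_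
  rw [Finset.sup_lt_iff (by exact WithBot.bot_lt_coe _)]
  intro i hi
  refine lt_of_le_of_lt (Polynomial.degree_C_mul_X_pow_le _ _) ?_
  rw [Finset.mem_Icc] at hi
  exact_mod_cast (by omega : i - 1 < p - 1)

lemma gmonic (p : ℕ) [hp : Fact p.Prime] (g : ℤ_[p][X])
    (hg : g = ∑ i ∈ Finset.Icc 1 p, C (p.choose i : ℤ_[p]) * X ^ (i - 1)) :
    g.Monic ∧ g.natDegree = p - 1 := by
  rw [gsplit p g hg]
  have hd : (∑ i ∈ Finset.Icc 1 (p-1), C (p.choose i : ℤ_[p]) * X ^ (i - 1)).degree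
      < (X ^ (p-1) : ℤ_[p][X]).degree := by rw [degree_X_pow]; exact gdegsum p
  constructor
  · exact (monic_X_pow _).add_of_right hd
  · have := Polynomial.degree_add_eq_right_of_degree_lt hd
    rw [degree_X_pow] at this
    exact Polynomial.natDegree_eq_of_degree_eq_some this

lemma grel (p : ℕ) [hp : Fact p.Prime] (g : ℤ_[p][X])
    (hg : g = ∑ i ∈ Finset.Icc 1 p, C (p.choose i : ℤ_[p]) * X ^ (i - 1)) :
    ∑ i ∈ Finset.Icc 1 p, (p.choose i : AdjoinRoot g) * (AdjoinRoot.root g) ^ (i - 1) = 0 := by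
  have h0 : eval₂ (AdjoinRoot.of g) (AdjoinRoot.root g)
      (∑ i ∈ Finset.Icc 1 p, C (p.choose i : ℤ_[p]) * X ^ (i - 1)) = 0 := by
    rw [← hg]; exact AdjoinRoot.eval₂_root g
  simpa [eval₂_finset_sum] using h0

lemma grel' (p : ℕ) [hp : Fact p.Prime] (g : ℤ_[p][X])
    (hg : g = ∑ i ∈ Finset.Icc 1 p, C (p.choose i : ℤ_[p]) * X ^ (i - 1)) :
    (∑ i ∈ Finset.Icc 1 (p-1), (p.choose i : AdjoinRoot g) * (AdjoinRoot.root g) ^ (i - 1))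
      + (AdjoinRoot.root g) ^ (p-1) = 0 := by
  have h2 : 2 ≤ p := hp.out.two_le
  have h0 := grel p g hg
  rw [show Finset.Icc 1 p = Finset.Icc 1 ((p-1)+1) from by congr 1; omega,
    Finset.sum_Icc_succ_top (by omega)] at h0
  simpa [show p - 1 + 1 = p from by omega, Nat.choose_self] using h0

lemma R1 (p : ℕ) [hp : Fact p.Prime] (g : ℤ_[p][X])
    (hg : g = ∑ i ∈ Finset.Icc 1 p, C (p.choose i : ℤ_[p]) * X ^ (i - 1)) :
    ∃ v : AdjoinRoot g, (AdjoinRoot.root g) ^ (p-1) = (p : AdjoinRoot g) * v := by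
  set π := AdjoinRoot.root g
  have h2 : 2 ≤ p := hp.out.two_le
  have h0 := grel' p g hg
  refine ⟨-∑ i ∈ Finset.Icc 1 (p-1), ((p.choose i / p : ℕ) : AdjoinRoot g) * π ^ (i - 1), ?_⟩
  have hS : ∑ i ∈ Finset.Icc 1 (p-1), (p.choose i : AdjoinRoot g) * π ^ (i - 1)
      = (p : AdjoinRoot g) * ∑ i ∈ Finset.Icc 1 (p-1), ((p.choose i / p : ℕ) : AdjoinRoot g) * π ^ (i - 1) := by
    rw [Finset.mul_sum]
    refine Finset.sum_congr rfl fun i hi => ?_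
    rw [Finset.mem_Icc] at hi
    have hdvd : p ∣ p.choose i := hp.out.dvd_choose_self (by omega) (by omega)
    rw [← mul_assoc, ← Nat.cast_mul, Nat.mul_div_cancel' hdvd]
  rw [hS] at h0
  linear_combination h0

lemma R2 (p : ℕ) [hp : Fact p.Prime] (g : ℤ_[p][X])
    (hg : g = ∑ i ∈ Finset.Icc 1 p, C (p.choose i : ℤ_[p]) * X ^ (i - 1)) :
    ∃ y : AdjoinRoot g, (p : AdjoinRoot g) = (AdjoinRoot.root g) ^ (p-1) * y := by
  set π := AdjoinRoot.root g with hπ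
  have h2 : 2 ≤ p := hp.out.two_le
  have h0 := grel' p g hg
  have hins : Finset.Icc 1 (p-1) = insert 1 (Finset.Icc 2 (p-1)) := by
    ext x; simp [Finset.mem_Icc, Finset.mem_insert]; omega
  rw [hins, Finset.sum_insert (by simp)] at h0
  simp only [Nat.choose_one_right, show (1:ℕ)-1 = 0 from rfl, pow_zero, mul_one] at h0
  set w : AdjoinRoot g :=
    ∑ i ∈ Finset.Icc 2 (p-1), ((p.choose i / p : ℕ) : AdjoinRoot g) * π ^ (i - 2) with hw
  have hmid : ∑ i ∈ Finset.Icc 2 (p-1), (p.choose i : AdjoinRoot g) * π ^ (i - 1)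
      = (p : AdjoinRoot g) * π * w := by
    rw [hw, Finset.mul_sum]
    refine Finset.sum_congr rfl fun i hi => ?_
    rw [Finset.mem_Icc] at hi
    have hdvd : p ∣ p.choose i := hp.out.dvd_choose_self (by omega) (by omega)
    have hc : (p.choose i : AdjoinRoot g) = (p : AdjoinRoot g) * ((p.choose i / p : ℕ) : AdjoinRoot g) := by
      rw [← Nat.cast_mul, Nat.mul_div_cancel' hdvd]
    have hpow : π ^ (i-1) = π * π ^ (i-2) := by
      rw [← pow_succ']; congr 1; omega
    rw [hc, hpow]; ring
  rw [hmid] at h0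
  have key : ∀ k : ℕ, ∃ a b : AdjoinRoot g,
      (p : AdjoinRoot g) = π^(p-1) * a + (p : AdjoinRoot g) * π^(k+1) * b := by
    intro k
    induction k with
    | zero => exact ⟨-1, -w, by linear_combination h0⟩
    | succ k ih =>
      obtain ⟨a, b, h1⟩ := ih
      exact ⟨a - π^(k+1)*b, -(w*b), by linear_combination h1 + π^(k+1)*b*h0⟩
  obtain ⟨a, b, h1⟩ := key (p-2)
  rw [show p - 2 + 1 = p - 1 from by omega] at h1
  exact ⟨a + p*b, by linear_combination h1⟩

lemma ideal_eq (p : ℕ) [hp : Fact p.Prime] (g : ℤ_[p][X]) (n l r : ℕ)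
    (hn : n = l * (p - 1) + r) (hr0 : 0 < r) (hrp : r ≤ p - 1)
    (v y : AdjoinRoot g)
    (hv : (AdjoinRoot.root g) ^ (p-1) = (p : AdjoinRoot g) * v)
    (hy : (p : AdjoinRoot g) = (AdjoinRoot.root g) ^ (p-1) * y) :
    Ideal.span {AdjoinRoot.root g} ^ n
      = Ideal.span {(p : AdjoinRoot g)^(l+1), (p : AdjoinRoot g)^l * (AdjoinRoot.root g)^r} := by
  set π := AdjoinRoot.root g with hπ
  have h2 : 2 ≤ p := hp.out.two_le
  rw [Ideal.span_singleton_pow]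
  apply le_antisymm
  · rw [Ideal.span_le]
    intro z hz
    rw [Set.mem_singleton_iff] at hz
    subst hz
    refine Ideal.mem_span_pair.2 ⟨0, v^l, ?_⟩
    have hexp : n = (p-1) * l + r := by rw [hn]; ring
    calc 0 * (p : AdjoinRoot g)^(l+1) + v^l * ((p : AdjoinRoot g)^l * π^r)
        = ((p : AdjoinRoot g) * v)^l * π^r := by ring
      _ = (π^(p-1))^l * π^r := by rw [← hv]
      _ = π^n := by rw [← pow_mul, ← pow_add, ← hexp]
  · rw [Ideal.span_le]
    intro z hz
    simp only [Set.mem_insert_iff, Set.mem_singleton_iff] at hz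
    rcases hz with rfl | rfl
    · rw [SetLike.mem_coe, Ideal.mem_span_singleton]
      have hle : n ≤ (p-1) * (l+1) := by
        have : (p-1) * (l+1) = l * (p-1) + (p-1) := by ring
        omega
      refine dvd_trans (pow_dvd_pow π hle) ?_
      rw [hy, mul_pow, ← pow_mul]
      exact Dvd.intro _ rfl
    · rw [SetLike.mem_coe, Ideal.mem_span_singleton]
      have : (p : AdjoinRoot g)^l * π^r = π^n * y^l := by
        rw [hy, mul_pow, ← pow_mul]
        rw [show n = (p-1)*l + r from by rw [hn]; ring, pow_add]
        ring
      rw [this]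
      exact Dvd.intro _ rfl

set_option maxHeartbeats 1000000 in
/-- Let `𝔒 = ℤ_p[X]/(g)` where `g = Σ_{i=1}^p C(p,i) X^(i-1)`,
a discrete valuation ring with maximal ideal `𝔓 = (π)`, `π` the image of `X`.
If `n = l(p-1) + r` with `0 < r ≤ p-1`, then as abelian groups
`𝔒/𝔓^n ≅ (ℤ/p^(l+1)ℤ)^r ⊕ (ℤ/p^lℤ)^(p-r-1)`. -/
theorem stmt_4 (p : ℕ) [Fact p.Prime]
    (g : ℤ_[p][X]) (hg : g = ∑ i ∈ Finset.Icc 1 p, C (p.choose i : ℤ_[p]) * X ^ (i - 1))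
    (n l r : ℕ) (hn : n = l * (p - 1) + r) (hr0 : 0 < r) (hrp : r ≤ p - 1) :
    Nonempty (((ℤ_[p][X] ⧸ Ideal.span {g}) ⧸
        (Ideal.span {Ideal.Quotient.mk (Ideal.span {g}) X}) ^ n) ≃+
      ((Fin r → ZMod (p ^ (l + 1))) × (Fin (p - r - 1) → ZMod (p ^ l)))) := by
  classical
  have h2 : 2 ≤ p := ‹Fact p.Prime›.out.two_le
  obtain ⟨hmonic, hdeg⟩ := gmonic p g hg
  obtain ⟨v, hv⟩ := R1 p g hg
  obtain ⟨y, hy⟩ := R2 p g hg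
  set π : AdjoinRoot g := AdjoinRoot.root g with hπdef
  have hcast1 : ∀ x : AdjoinRoot g, (p : AdjoinRoot g) * x = ((p : ℤ_[p])) • x := by
    intro x
    rw [show ((p:ℤ_[p])) = ((p:ℕ):ℤ_[p]) from rfl, Nat.cast_smul_eq_nsmul, nsmul_eq_mul]
  let pb : PowerBasis ℤ_[p] (AdjoinRoot g) := AdjoinRoot.powerBasis' hmonic
  have hdim : pb.dim = p - 1 := hdeg
  let F : AdjoinRoot g ≃ₗ[ℤ_[p]] (Fin pb.dim → ℤ_[p]) := pb.basis.equivFun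
  have hb : ∀ i : Fin pb.dim, pb.basis i = π ^ (i : ℕ) :=
    fun i => by rw [pb.basis_eq_pow i, hπdef]; rfl
  set e : ℕ → ℕ := fun i => if i < r then l + 1 else l with he
  have he_le : ∀ i, e i ≤ l + 1 := by intro i; rw [he]; dsimp only; split <;> omega
  have hcast : ∀ (k : ℕ) (x : AdjoinRoot g), (p : AdjoinRoot g)^k * x = ((p : ℤ_[p])^k) • x := by
    intro k x
    rw [← Nat.cast_pow, ← Nat.cast_pow, Nat.cast_smul_eq_nsmul, nsmul_eq_mul]
  set I2 : Ideal (AdjoinRoot g) :=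
    Ideal.span {(p : AdjoinRoot g)^(l+1), (p : AdjoinRoot g)^l * π^r} with hI2
  have hIdeal : Ideal.span {π} ^ n = I2 := ideal_eq p g n l r hn hr0 hrp v y hv hy
  set M : Submodule ℤ_[p] (AdjoinRoot g) :=
    Submodule.span ℤ_[p] (Set.range fun i : Fin pb.dim => (p : ℤ_[p])^(e (i : ℕ)) • π^(i : ℕ))
    with hM
  have hgenM : ∀ i : Fin pb.dim, (p : ℤ_[p])^(e (i : ℕ)) • π^(i : ℕ) ∈ M :=
    fun i => Submodule.subset_span ⟨i, rfl⟩
  have hLA : ∀ a : AdjoinRoot g, ((p : ℤ_[p])^(l+1)) • a ∈ M := by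
    intro a
    have hrepr : ∑ i, F a i • pb.basis i = a := pb.basis.sum_equivFun a
    rw [← hrepr, Finset.smul_sum]
    refine Submodule.sum_mem _ fun i _ => ?_
    rw [hb i, smul_smul, show (p : ℤ_[p])^(l+1) * F a i
        = (F a i * (p : ℤ_[p])^(l+1 - e (i : ℕ))) * (p : ℤ_[p])^(e (i : ℕ)) from by
      rw [mul_assoc, ← pow_add, Nat.sub_add_cancel (he_le _)]; ring, ← smul_smul]
    exact Submodule.smul_mem _ _ (hgenM i)
  have hpow_mem : ∀ m : ℕ, r ≤ m → ((p : ℤ_[p])^l) • π^m ∈ M := by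
    intro m hm
    by_cases hcase : m < p - 1
    · have hem : e m = l := if_neg (by omega)
      have := hgenM ⟨m, by rw [hdim]; exact hcase⟩
      simpa [hem] using this
    · have hsplit : π^m = (p : AdjoinRoot g) * (v * π^(m - (p-1))) := by
        have h1 : π^m = π^(p-1) * π^(m - (p-1)) := by rw [← pow_add]; congr 1; omega
        rw [h1, hv]; ring
      rw [hsplit, show ((p : ℤ_[p])^l) • ((p : AdjoinRoot g) * (v * π^(m - (p-1))))
          = ((p : ℤ_[p])^(l+1)) • (v * π^(m - (p-1))) from by
        rw [hcast1, smul_smul, ← pow_succ]]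
      exact hLA _
  have hI2M : ∀ x ∈ I2, x ∈ M := by
    intro x hx
    rw [hI2, Ideal.mem_span_pair] at hx
    obtain ⟨a, b, rfl⟩ := hx
    refine Submodule.add_mem _ ?_ ?_
    · rw [show a * (p : AdjoinRoot g)^(l+1) = (p : AdjoinRoot g)^(l+1) * a from mul_comm _ _,
        hcast]
      exact hLA a
    · rw [show b * ((p : AdjoinRoot g)^l * π^r) = (p : AdjoinRoot g)^l * (π^r * b) from by ring,
        hcast]
      have hrepr : ∑ j, F b j • pb.basis j = b := pb.basis.sum_equivFun b
      rw [← hrepr, Finset.mul_sum, Finset.smul_sum]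
      refine Submodule.sum_mem _ fun j _ => ?_
      rw [hb j, show π^r * (F b j • π^(j : ℕ)) = F b j • π^(r + (j : ℕ)) from by
        rw [mul_smul_comm, pow_add], smul_smul, mul_comm, ← smul_smul]
      exact Submodule.smul_mem _ _ (hpow_mem _ (by omega))
  have hMI2 : ∀ x ∈ M, x ∈ I2 := by
    intro x hx
    have hle : M ≤ I2.restrictScalars ℤ_[p] := by
      rw [hM, Submodule.span_le]
      rintro z ⟨i, rfl⟩
      simp only [SetLike.mem_coe, Submodule.restrictScalars_mem]
      by_cases hir : (i : ℕ) < r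
      · rw [show e (i : ℕ) = l + 1 from if_pos hir, ← hcast]
        exact Ideal.mul_mem_right _ _ (Ideal.subset_span (by simp))
      · rw [show e (i : ℕ) = l from if_neg hir, ← hcast,
          show (p : AdjoinRoot g)^l * π^(i : ℕ)
              = ((p : AdjoinRoot g)^l * π^r) * π^((i : ℕ) - r) from by
            rw [mul_assoc, ← pow_add, show r + ((i : ℕ) - r) = (i : ℕ) from by omega]]
        exact Ideal.mul_mem_right _ _ (Ideal.subset_span (by simp))
    exact hle hx
  have hKM : ∀ x : AdjoinRoot g,
      (∀ i : Fin pb.dim, (p : ℤ_[p])^(e (i : ℕ)) ∣ F x i) ↔ x ∈ M := by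
    intro x
    constructor
    · intro hdiv
      have hrepr : ∑ i, F x i • pb.basis i = x := pb.basis.sum_equivFun x
      rw [← hrepr]
      refine Submodule.sum_mem _ fun i _ => ?_
      obtain ⟨d, hd⟩ := hdiv i
      rw [hb i, hd, mul_comm, ← smul_smul]
      exact Submodule.smul_mem _ _ (hgenM i)
    · intro hx
      let KS : Submodule ℤ_[p] (AdjoinRoot g) :=
        { carrier := {z | ∀ i : Fin pb.dim, (p : ℤ_[p])^(e (i : ℕ)) ∣ F z i}
          add_mem' := fun ha hb i => by
            rw [map_add]; exact dvd_add (ha i) (hb i)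
          zero_mem' := fun i => by rw [map_zero]; exact dvd_zero _
          smul_mem' := fun c z hz i => by
            rw [map_smul]; exact (hz i).mul_left c }
      have hMKS : M ≤ KS := by
        rw [hM, Submodule.span_le]
        rintro z ⟨i, rfl⟩
        intro j
        rw [map_smul, ← hb i, Pi.smul_apply, smul_eq_mul, pb.basis.equivFun_self]
        by_cases hij : i = j
        · subst hij; simp
        · rw [if_neg hij, mul_zero]; exact dvd_zero _
      exact hMKS hx
  haveI hne1 : NeZero (p ^ (l+1)) := ⟨pow_ne_zero _ (Nat.Prime.ne_zero ‹Fact p.Prime›.out)⟩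
  haveI hne2 : NeZero (p ^ l) := ⟨pow_ne_zero _ (Nat.Prime.ne_zero ‹Fact p.Prime›.out)⟩
  let ι1 : Fin r → Fin pb.dim := fun i => ⟨i, by have := i.isLt; rw [hdim]; omega⟩
  let ι2 : Fin (p - r - 1) → Fin pb.dim := fun j => ⟨r + j, by have := j.isLt; rw [hdim]; omega⟩
  let φ : AdjoinRoot g →+ ((Fin r → ZMod (p ^ (l + 1))) × (Fin (p - r - 1) → ZMod (p ^ l))) :=
    { toFun := fun x =>
        (fun i => PadicInt.toZModPow (l+1) (F x (ι1 i)),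
         fun j => PadicInt.toZModPow l (F x (ι2 j)))
      map_zero' := by
        refine Prod.ext ?_ ?_ <;> funext k <;> simp
      map_add' := fun x y => by
        refine Prod.ext ?_ ?_ <;> funext k <;> simp [map_add] }
  have hφsurj : Function.Surjective φ := by
    rintro ⟨t1, t2⟩
    set c : Fin pb.dim → ℤ_[p] := fun k => if h : (k : ℕ) < r
        then ((t1 ⟨k, h⟩).val : ℤ_[p])
        else ((t2 ⟨(k : ℕ) - r, by have := lt_of_lt_of_le k.isLt (le_of_eq hdim); omega⟩).val : ℤ_[p])
      with hc
    refine ⟨F.symm c, ?_⟩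
    refine Prod.ext ?_ ?_ <;> funext k
    · show PadicInt.toZModPow (l+1) (F (F.symm c) (ι1 k)) = t1 k
      rw [F.apply_symm_apply]
      simp only [hc]
      have hcond : ((ι1 k : Fin pb.dim) : ℕ) < r := k.isLt
      rw [dif_pos hcond]
      simp [map_natCast, ZMod.natCast_val, ZMod.cast_id]
      exact congrArg t1 (Fin.ext rfl)
    · show PadicInt.toZModPow l (F (F.symm c) (ι2 k)) = t2 k
      rw [F.apply_symm_apply]
      simp only [hc]
      have hcond : ¬ ((ι2 k : Fin pb.dim) : ℕ) < r := by
        show ¬ (r + (k : ℕ) < r); omega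
      rw [dif_neg hcond]
      have : ((ι2 k : Fin pb.dim) : ℕ) - r = (k : ℕ) := by
        show r + (k : ℕ) - r = (k : ℕ); omega
      simp [this, map_natCast, ZMod.natCast_val, ZMod.cast_id]
  have hZker : ∀ (m : ℕ) (z : ℤ_[p]), PadicInt.toZModPow m z = 0 ↔ (p : ℤ_[p])^m ∣ z := by
    intro m z
    rw [← RingHom.mem_ker, PadicInt.ker_toZModPow, Ideal.mem_span_singleton]
  have hφ0 : ∀ x : AdjoinRoot g,
      φ x = 0 ↔ (∀ i : Fin pb.dim, (p : ℤ_[p])^(e (i : ℕ)) ∣ F x i) := by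
    intro x
    constructor
    · intro hx i
      by_cases hir : (i : ℕ) < r
      · have h1 : PadicInt.toZModPow (l+1) (F x (ι1 ⟨(i : ℕ), hir⟩)) = 0 :=
          congrFun (congrArg Prod.fst hx) ⟨(i : ℕ), hir⟩
        have hidx : ι1 ⟨(i : ℕ), hir⟩ = i := by apply Fin.ext; rfl
        rw [hidx] at h1
        rw [show e (i : ℕ) = l + 1 from if_pos hir]
        exact (hZker _ _).1 h1
      · have hj : (i : ℕ) - r < p - r - 1 := by
          have := lt_of_lt_of_le i.isLt (le_of_eq hdim); omega
        have h1 : PadicInt.toZModPow l (F x (ι2 ⟨(i : ℕ) - r, hj⟩)) = 0 :=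
          congrFun (congrArg Prod.snd hx) ⟨(i : ℕ) - r, hj⟩
        have hidx : ι2 ⟨(i : ℕ) - r, hj⟩ = i := by
          apply Fin.ext; show r + ((i : ℕ) - r) = (i : ℕ); omega
        rw [hidx] at h1
        rw [show e (i : ℕ) = l from if_neg hir]
        exact (hZker _ _).1 h1
    · intro hdiv
      refine Prod.ext ?_ ?_ <;> funext k
      · show PadicInt.toZModPow (l+1) (F x (ι1 k)) = 0
        have hd := hdiv (ι1 k)
        rw [show e ((ι1 k : Fin pb.dim) : ℕ) = l + 1 from
          if_pos (show ((ι1 k : Fin pb.dim) : ℕ) < r from k.isLt)] at hd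
        exact (hZker _ _).2 hd
      · show PadicInt.toZModPow l (F x (ι2 k)) = 0
        have hd := hdiv (ι2 k)
        rw [show e ((ι2 k : Fin pb.dim) : ℕ) = l from
          if_neg (show ¬ ((ι2 k : Fin pb.dim) : ℕ) < r from by
            show ¬ (r + (k : ℕ) < r); omega)] at hd
        exact (hZker _ _).2 hd
  have hker : ∀ x : AdjoinRoot g, φ x = 0 ↔ x ∈ Ideal.span {π} ^ n := by
    intro x
    rw [hIdeal]
    exact (hφ0 x).trans ((hKM x).trans ⟨hMI2 x, hI2M x⟩)
  let φ' := φ.toIntLinearMap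
  have hkerφ : LinearMap.ker φ' = (Ideal.span {π} ^ n).restrictScalars ℤ := by
    ext x
    rw [LinearMap.mem_ker, Submodule.restrictScalars_mem]
    exact hker x
  let ψ := Submodule.liftQ ((Ideal.span {π} ^ n).restrictScalars ℤ) φ' (le_of_eq hkerφ.symm)
  have hinj : Function.Injective ψ := by
    rw [← LinearMap.ker_eq_bot]
    exact Submodule.ker_liftQ_eq_bot _ _ _ (le_of_eq hkerφ)
  have hsurj : Function.Surjective ψ := by
    intro t
    obtain ⟨x, hx⟩ := hφsurj t
    exact ⟨Submodule.Quotient.mk x, by rw [Submodule.liftQ_apply]; exact hx⟩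
  exact ⟨((Submodule.Quotient.restrictScalarsEquiv ℤ (Ideal.span {π} ^ n)).symm.trans
      (LinearEquiv.ofBijective ψ ⟨hinj, hsurj⟩)).toAddEquiv⟩
end

section
/- For every integer n ≥ 1, the (n+1)-st term of the lower central series of H satisfies γ_{n+1}(H) = { a·(x−1)^n : a ∈ A }, the image of A under the n-fold iterate of the map a ↦ [a,x]. -/
namespace Stmt5Aux

open scoped commutatorElement

variable {H : Type} [Group H]

/-- The map `a ↦ [a,x] = a⁻¹x⁻¹ax`. -/
def fc (x a : H) : H := a⁻¹ * x⁻¹ * a * x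

variable (A : Subgroup H) [A.Normal] (x : H)

lemma fc_mem {a : H} (ha : a ∈ A) : fc x a ∈ A := by
  have h1 : x⁻¹ * a * x ∈ A := by
    simpa using (‹A.Normal›.conj_mem a ha x⁻¹)
  have := A.mul_mem (A.inv_mem ha) h1
  simpa [fc, mul_assoc] using this

lemma fc_mul (hab : ∀ a ∈ A, ∀ b ∈ A, a * b = b * a)
    {a b : H} (ha : a ∈ A) (hb : b ∈ A) : fc x (a * b) = fc x a * fc x b := by
  have hu : x⁻¹ * a * x ∈ A := by simpa using (‹A.Normal›.conj_mem a ha x⁻¹)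
  have hv : a⁻¹ * (x⁻¹ * a * x) ∈ A := A.mul_mem (A.inv_mem ha) hu
  have hcomm : b⁻¹ * (a⁻¹ * (x⁻¹ * a * x)) = (a⁻¹ * (x⁻¹ * a * x)) * b⁻¹ :=
    hab _ (A.inv_mem hb) _ hv
  have e1 : (a*b)⁻¹ * x⁻¹ * (a*b) * x = b⁻¹ * (a⁻¹ * (x⁻¹ * a * x)) * (x⁻¹ * b * x) := by
    group
  have e2 : (a⁻¹*x⁻¹*a*x) * (b⁻¹*x⁻¹*b*x) = (a⁻¹ * (x⁻¹ * a * x)) * b⁻¹ * (x⁻¹ * b * x) := by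
    group
  simp only [fc]
  rw [e1, e2, hcomm]

lemma fc_one : fc x (1 : H) = 1 := by simp [fc]

lemma fc_inv (hab : ∀ a ∈ A, ∀ b ∈ A, a * b = b * a)
    {a : H} (ha : a ∈ A) : fc x a⁻¹ = (fc x a)⁻¹ := by
  have h : fc x a⁻¹ * fc x a = 1 := by
    rw [← fc_mul A x hab (A.inv_mem ha) ha, inv_mul_cancel, fc_one]
  exact eq_inv_of_mul_eq_one_left h

lemma fc_conj (a : H) : x * fc x a * x⁻¹ = fc x (x * a * x⁻¹) := by
  simp only [fc]; group

lemma fc_conj' (a : H) : x⁻¹ * fc x a * x = fc x (x⁻¹ * a * x) := by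
  simp only [fc]; group

lemma zpow_conj_mem (S : Subgroup H) (h1 : ∀ b ∈ S, x * b * x⁻¹ ∈ S)
    (h2 : ∀ b ∈ S, x⁻¹ * b * x ∈ S) (m : ℤ) {b : H} (hb : b ∈ S) :
    x ^ m * b * (x ^ m)⁻¹ ∈ S := by
  induction m using Int.induction_on with
  | zero => simpa using hb
  | succ k ih =>
      have e : x ^ ((k : ℤ) + 1) * b * (x ^ ((k : ℤ) + 1))⁻¹
          = x * (x ^ (k : ℤ) * b * (x ^ (k : ℤ))⁻¹) * x⁻¹ := by group
      rw [e]; exact h1 _ ih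
  | pred k ih =>
      have e : x ^ (-(k : ℤ) - 1) * b * (x ^ (-(k : ℤ) - 1))⁻¹
          = x⁻¹ * (x ^ (-(k : ℤ)) * b * (x ^ (-(k : ℤ)))⁻¹) * x := by group
      rw [e]; exact h2 _ ih

lemma decomp (hxgen : ∀ q : H ⧸ A, q ∈ Subgroup.zpowers (QuotientGroup.mk x : H ⧸ A))
    (h : H) : ∃ (m : ℤ) (a : H), a ∈ A ∧ h = x ^ m * a := by
  obtain ⟨m, hm⟩ := hxgen (QuotientGroup.mk h)
  refine ⟨m, (x ^ m)⁻¹ * h, ?_, by group⟩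
  have : (QuotientGroup.mk (x ^ m) : H ⧸ A) = QuotientGroup.mk h := by
    rw [← hm]
    exact (map_zpow (QuotientGroup.mk' A) x m).symm
  exact (QuotientGroup.eq).mp this

/-- The image of a subgroup `B ≤ A` under `fc x` is a subgroup. -/
def img (hab : ∀ a ∈ A, ∀ b ∈ A, a * b = b * a) (B : Subgroup H)
    (hBA : ∀ b ∈ B, b ∈ A) : Subgroup H where
  carrier := fc x '' (B : Set H)
  mul_mem' := by
    rintro _ _ ⟨a, ha, rfl⟩ ⟨b, hb, rfl⟩
    exact ⟨a * b, B.mul_mem ha hb, fc_mul A x hab (hBA a ha) (hBA b hb)⟩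
  one_mem' := ⟨1, B.one_mem, fc_one x⟩
  inv_mem' := by
    rintro _ ⟨a, ha, rfl⟩
    exact ⟨a⁻¹, B.inv_mem ha, fc_inv A x hab (hBA a ha)⟩

variable (hab : ∀ a ∈ A, ∀ b ∈ A, a * b = b * a) (B : Subgroup H)
    (hBA : ∀ b ∈ B, b ∈ A)

lemma img_coe : (img A x hab B hBA : Set H) = fc x '' (B : Set H) := rfl

lemma img_subset_A : ∀ c ∈ img A x hab B hBA, c ∈ A := by
  rintro _ ⟨a, ha, rfl⟩
  exact fc_mem A x (hBA a ha)

lemma img_conj (h1 : ∀ b ∈ B, x * b * x⁻¹ ∈ B) :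
    ∀ c ∈ img A x hab B hBA, x * c * x⁻¹ ∈ img A x hab B hBA := by
  rintro _ ⟨a, ha, rfl⟩
  rw [fc_conj]
  exact ⟨x * a * x⁻¹, h1 a ha, rfl⟩

lemma img_conj' (h2 : ∀ b ∈ B, x⁻¹ * b * x ∈ B) :
    ∀ c ∈ img A x hab B hBA, x⁻¹ * c * x ∈ img A x hab B hBA := by
  rintro _ ⟨a, ha, rfl⟩
  rw [fc_conj']
  exact ⟨x⁻¹ * a * x, h2 a ha, rfl⟩

lemma img_normal (h1 : ∀ b ∈ B, x * b * x⁻¹ ∈ B) (h2 : ∀ b ∈ B, x⁻¹ * b * x ∈ B)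
    (hxgen : ∀ q : H ⧸ A, q ∈ Subgroup.zpowers (QuotientGroup.mk x : H ⧸ A)) :
    (img A x hab B hBA).Normal := by
  constructor
  intro c hc g
  obtain ⟨m, a, ha, rfl⟩ := decomp A x hxgen g
  have hcA : c ∈ A := img_subset_A A x hab B hBA c hc
  have hac : a * c * a⁻¹ = c := by
    rw [hab a ha c hcA]; group
  have e : (x ^ m * a) * c * (x ^ m * a)⁻¹ = x ^ m * (a * c * a⁻¹) * (x ^ m)⁻¹ := by group
  rw [e, hac]
  exact zpow_conj_mem x _ (img_conj A x hab B hBA h1) (img_conj' A x hab B hBA h2) m hc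

lemma mk_commute (C : Subgroup H) [C.Normal] {b y : H} (h : ⁅b, y⁆ ∈ C) :
    Commute (QuotientGroup.mk b : H ⧸ C) (QuotientGroup.mk y) := by
  rw [← commutatorElement_eq_one_iff_commute]
  have h1 : (QuotientGroup.mk ⁅b, y⁆ : H ⧸ C)
      = ⁅(QuotientGroup.mk b : H ⧸ C), QuotientGroup.mk y⁆ :=
    map_commutatorElement (QuotientGroup.mk' C) b y
  rw [← h1]
  exact (QuotientGroup.eq_one_iff _).mpr h

lemma comm_mem (C : Subgroup H) [C.Normal]
    (hxgen : ∀ q : H ⧸ A, q ∈ Subgroup.zpowers (QuotientGroup.mk x : H ⧸ A))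
    (b h : H)
    (hbx : Commute (QuotientGroup.mk b : H ⧸ C) (QuotientGroup.mk x))
    (hbA : ∀ a ∈ A, Commute (QuotientGroup.mk b : H ⧸ C) (QuotientGroup.mk a)) :
    ⁅b, h⁆ ∈ C := by
  obtain ⟨m, a, ha, rfl⟩ := decomp A x hxgen h
  rw [← QuotientGroup.eq_one_iff]
  have hcomm : Commute (QuotientGroup.mk b : H ⧸ C) (QuotientGroup.mk (x ^ m * a)) := by
    have e : (QuotientGroup.mk (x ^ m * a) : H ⧸ C)
        = (QuotientGroup.mk x : H ⧸ C) ^ m * QuotientGroup.mk a := by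
      simp
    rw [e]
    exact (hbx.zpow_right m).mul_right (hbA a ha)
  have h1 : (QuotientGroup.mk ⁅b, x ^ m * a⁆ : H ⧸ C)
      = ⁅(QuotientGroup.mk b : H ⧸ C), QuotientGroup.mk (x ^ m * a)⁆ :=
    map_commutatorElement (QuotientGroup.mk' C) b (x ^ m * a)
  rw [h1]
  exact commutatorElement_eq_one_iff_commute.mpr hcomm

lemma fc_eq_commutator (b : H) : fc x b = ⁅b⁻¹, x⁻¹⁆ := by
  rw [commutatorElement_def]; simp only [fc]; group

lemma commutator_eq_fc (b : H) : ⁅b, x⁆ = (fc x (x * b⁻¹ * x⁻¹))⁻¹ := by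
  rw [commutatorElement_def]; simp only [fc]; group

-- membership of ⁅b,x⁆ in the image subgroup, for b ∈ B with B conj-stable
lemma commutator_mem_img (h1 : ∀ b ∈ B, x * b * x⁻¹ ∈ B) {b : H} (hb : b ∈ B) :
    ⁅b, x⁆ ∈ img A x hab B hBA := by
  rw [commutator_eq_fc]
  exact (img A x hab B hBA).inv_mem ⟨x * b⁻¹ * x⁻¹, h1 b⁻¹ (B.inv_mem hb), rfl⟩

lemma img_le_commutator (B' : Subgroup H) (hBB' : B ≤ B') :
    img A x hab B hBA ≤ ⁅B', (⊤ : Subgroup H)⁆ := by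
  rintro _ ⟨b, hb, rfl⟩
  rw [fc_eq_commutator]
  exact Subgroup.commutator_mem_commutator (B'.inv_mem (hBB' hb)) (Subgroup.mem_top x⁻¹)

/-- Inductive step: for `B ≤ A` conjugation-stable, `⁅B, ⊤⁆` equals the image of `B`. -/
lemma commutator_B_eq (h1 : ∀ b ∈ B, x * b * x⁻¹ ∈ B) (h2 : ∀ b ∈ B, x⁻¹ * b * x ∈ B)
    (hxgen : ∀ q : H ⧸ A, q ∈ Subgroup.zpowers (QuotientGroup.mk x : H ⧸ A)) :
    ⁅B, (⊤ : Subgroup H)⁆ = img A x hab B hBA := by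
  haveI : (img A x hab B hBA).Normal := img_normal A x hab B hBA h1 h2 hxgen
  refine le_antisymm ?_ (img_le_commutator A x hab B hBA B le_rfl)
  rw [Subgroup.commutator_le]
  intro b hb h _
  refine comm_mem A x _ hxgen b h ?_ ?_
  · exact mk_commute _ (commutator_mem_img A x hab B hBA h1 hb)
  · intro a ha
    have : Commute b a := hab b (hBA b hb) a ha
    exact this.map (QuotientGroup.mk' _)

/-- Base case: `⁅⊤, ⊤⁆` equals the image of `A`. -/
lemma commutator_top_eq
    (hxgen : ∀ q : H ⧸ A, q ∈ Subgroup.zpowers (QuotientGroup.mk x : H ⧸ A)) :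
    ⁅(⊤ : Subgroup H), (⊤ : Subgroup H)⁆ = img A x hab A (fun _ h => h) := by
  set C := img A x hab A (fun _ h => h) with hC
  have hA1 : ∀ b ∈ A, x * b * x⁻¹ ∈ A := by
    intro b hb; exact ‹A.Normal›.conj_mem b hb x
  have hA2 : ∀ b ∈ A, x⁻¹ * b * x ∈ A := by
    intro b hb; simpa using ‹A.Normal›.conj_mem b hb x⁻¹
  haveI : C.Normal := img_normal A x hab A _ hA1 hA2 hxgen
  refine le_antisymm ?_ (img_le_commutator A x hab A _ ⊤ le_top)
  rw [Subgroup.commutator_le]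
  intro g _ h _
  -- commuting facts in H ⧸ C
  have hax : ∀ a ∈ A, Commute (QuotientGroup.mk a : H ⧸ C) (QuotientGroup.mk x) := by
    intro a ha
    exact mk_commute _ (commutator_mem_img A x hab A _ hA1 ha)
  have habq : ∀ a ∈ A, ∀ b ∈ A,
      Commute (QuotientGroup.mk a : H ⧸ C) (QuotientGroup.mk b) := by
    intro a ha b hb
    exact (show Commute a b from hab a ha b hb).map (QuotientGroup.mk' _)
  obtain ⟨m, a₀, ha₀, rfl⟩ := decomp A x hxgen g
  have hmk : (QuotientGroup.mk (x ^ m * a₀) : H ⧸ C)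
      = (QuotientGroup.mk x : H ⧸ C) ^ m * QuotientGroup.mk a₀ := by simp
  refine comm_mem A x C hxgen _ h ?_ ?_
  · rw [hmk]
    exact Commute.mul_left ((Commute.refl _).zpow_left m) (hax a₀ ha₀)
  · intro a ha
    rw [hmk]
    exact Commute.mul_left ((hax a ha).symm.zpow_left m) (habq a₀ ha₀ a ha)

end Stmt5Aux


open Stmt5Aux in
/-- Let `A` be a finite abelian normal `p`-subgroup of a group `H`,
and `x ∈ H` such that `H = ⟨A, x⟩`, the image of `x` generates `H/A` and has
`p`-power order, and `∏_{i=0}^{p-1} x^{-i} a x^{i} = 1` for all `a ∈ A` (splitting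
condition).  Then for every `n ≥ 1`, `γ_{n+1}(H) = A·(x-1)^n`, the image of `A`
under the `n`-fold iterate of `a ↦ [a,x] = a⁻¹x⁻¹ax`.
(Here `lowerCentralSeries H n = γ_{n+1}(H)` in the paper's numbering.) -/
theorem stmt_5 (p : ℕ) (hp : p.Prime)
    (H : Type) [Group H] (A : Subgroup H) [A.Normal] [Finite A]
    (hab : ∀ a ∈ A, ∀ b ∈ A, a * b = b * a)
    (hpgrp : IsPGroup p A)
    (x : H)
    (hgen : Subgroup.closure ((A : Set H) ∪ {x}) = ⊤)
    (hxgen : ∀ q : H ⧸ A, q ∈ Subgroup.zpowers (QuotientGroup.mk x : H ⧸ A))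
    (hord : ∃ k : ℕ, orderOf (QuotientGroup.mk x : H ⧸ A) = p ^ k)
    (hsplit : ∀ a ∈ A, ((List.range p).map (fun i => (x ^ i)⁻¹ * a * x ^ i)).prod = 1) :
    ∀ n : ℕ, 1 ≤ n →
      (((⊤ : Subgroup H).lowerCentralSeries n : Subgroup H) : Set H) =
        (fun a : H => a⁻¹ * x⁻¹ * a * x)^[n] '' (A : Set H) := by
  have key : ∀ n : ℕ, ∃ B : Subgroup H,
      (B : Set H) = (fc x)^[n] '' (A : Set H) ∧ (∀ b ∈ B, b ∈ A) ∧
      (∀ b ∈ B, x * b * x⁻¹ ∈ B) ∧ (∀ b ∈ B, x⁻¹ * b * x ∈ B) ∧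
      (1 ≤ n → (⊤ : Subgroup H).lowerCentralSeries n = B) := by
    intro n
    induction n with
    | zero =>
        refine ⟨A, by simp, fun _ h => h, ?_, ?_, by omega⟩
        · intro b hb; exact ‹A.Normal›.conj_mem b hb x
        · intro b hb; simpa using ‹A.Normal›.conj_mem b hb x⁻¹
    | succ n ih =>
        obtain ⟨B, hBcar, hBA, h1, h2, hlcs⟩ := ih
        refine ⟨img A x hab B hBA, ?_, img_subset_A A x hab B hBA,
          img_conj A x hab B hBA h1, img_conj' A x hab B hBA h2, ?_⟩
        · rw [img_coe, hBcar, Function.iterate_succ', Set.image_comp]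
        · intro _
          rw [Subgroup.lowerCentralSeries_succ]
          rcases Nat.eq_zero_or_pos n with hn0 | hn1
          · subst hn0
            have hBA' : (B : Set H) = (A : Set H) := by
              rw [hBcar]; simp
            have himg : img A x hab B hBA = img A x hab A (fun _ h => h) := by
              apply SetLike.ext'
              rw [img_coe, img_coe, hBA']
            rw [Subgroup.lowerCentralSeries_zero, himg]
            exact commutator_top_eq A x hab hxgen
          · rw [hlcs hn1]
            exact commutator_B_eq A x hab B hBA h1 h2 hxgen
  intro n hn
  obtain ⟨B, hBcar, _, _, _, hlcs⟩ := key n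
  rw [hlcs hn]
  exact hBcar
end

section
/- Suppose A is nontrivial. Then H is nilpotent of nilpotency class n_1 (the largest part of λ), and the exponent of A is p^{m}, where m = ⌈ n_1/(p−1) ⌉ is the smallest integer ≥ n_1/(p−1). -/
open DirectSum Polynomial
open scoped commutatorElement

set_option synthInstance.maxHeartbeats 1000000
set_option maxHeartbeats 1000000



namespace Stmt6Aux

lemma one_add_pow {R : Type*} [CommRing R] (π : R) (j : ℕ) :
    ∃ q : R, (1 + π) ^ j = 1 + π * q := by
  induction j with
  | zero => exact ⟨0, by ring⟩
  | succ k ih =>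
    obtain ⟨q, hq⟩ := ih
    exact ⟨q + 1 + π * q, by rw [pow_succ, hq]; ring⟩

lemma pow_mem_span_aux {R : Type*} [CommRing R] (π c v : R) (e t N : ℕ)
    (hw : π ^ e = c * (-(1 + π * v))) :
    (c ^ t ∈ Ideal.span {π} ^ N ↔ π ^ (t * e) ∈ Ideal.span {π} ^ N) := by
  have hnil : IsNilpotent (Ideal.Quotient.mk (Ideal.span {π} ^ N) π) := by
    refine ⟨N, ?_⟩
    rw [← map_pow, Ideal.Quotient.eq_zero_iff_mem]
    exact Ideal.pow_mem_pow (Ideal.mem_span_singleton_self π) N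
  have hu : IsUnit (Ideal.Quotient.mk (Ideal.span {π} ^ N) (-(1 + π * v))) := by
    rw [map_neg, map_add, map_one, map_mul]
    exact (IsNilpotent.isUnit_one_add ((Commute.all _ _).isNilpotent_mul_right hnil)).neg
  have hkey : (Ideal.Quotient.mk (Ideal.span {π} ^ N) π) ^ (t * e)
      = (Ideal.Quotient.mk (Ideal.span {π} ^ N) c) ^ t
        * (Ideal.Quotient.mk (Ideal.span {π} ^ N) (-(1 + π * v))) ^ t := by
    rw [mul_comm t e, pow_mul, ← map_pow, hw, map_mul, mul_pow]
  rw [show (c ^ t ∈ Ideal.span {π} ^ N) ↔ (Ideal.Quotient.mk (Ideal.span {π} ^ N) c) ^ t = 0 from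
      by rw [← map_pow, Ideal.Quotient.eq_zero_iff_mem]]
  rw [show (π ^ (t * e) ∈ Ideal.span {π} ^ N)
      ↔ (Ideal.Quotient.mk (Ideal.span {π} ^ N) π) ^ (t * e) = 0 from
      by rw [← map_pow, Ideal.Quotient.eq_zero_iff_mem]]
  rw [hkey]
  exact ((hu.pow t).mul_left_eq_zero).symm

variable {p : ℕ} [hp : Fact p.Prime] {g : ℤ_[p][X]}

section ring
variable (hg : g = ∑ i ∈ Finset.Icc 1 p, C (p.choose i : ℤ_[p]) * X ^ (i - 1))
include hg

lemma g_coeff (j : ℕ) : g.coeff j = if j < p then (p.choose (j+1) : ℤ_[p]) else 0 := by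
  have h2 : g = ∑ j ∈ Finset.range p, C (p.choose (j+1) : ℤ_[p]) * X ^ j := by
    rw [hg, ← Finset.Ico_add_one_right_eq_Icc, Finset.sum_Ico_eq_sum_range]
    simp [add_comm 1]
  rw [h2, finset_sum_coeff]
  simp only [coeff_C_mul, coeff_X_pow, mul_ite, mul_one, mul_zero,
    Finset.sum_ite_eq, Finset.mem_range]

lemma g_natDegree : g.natDegree = p - 1 := by
  have hp2 := hp.out.two_le
  apply le_antisymm
  · rw [natDegree_le_iff_coeff_eq_zero]
    intro m hm
    rw [g_coeff hg]
    simp only [ite_eq_right_iff]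
    intro h; omega
  · apply le_natDegree_of_ne_zero
    rw [g_coeff hg]
    have : p - 1 < p := by omega
    simp [this, Nat.sub_add_cancel (by omega : 1 ≤ p), Nat.choose_self]

lemma g_monic : g.Monic := by
  unfold Monic leadingCoeff
  rw [g_natDegree hg, g_coeff hg]
  have hp2 := hp.out.two_le
  have : p - 1 < p := by omega
  simp [this, Nat.sub_add_cancel (by omega : 1 ≤ p), Nat.choose_self]

lemma g_irred : Irreducible g := by
  have hp2 := hp.out.two_le
  have hprime : (Ideal.span {(p : ℤ_[p])}).IsPrime := by
    rw [← PadicInt.maximalIdeal_eq_span_p]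
    exact (IsLocalRing.maximalIdeal.isMaximal ℤ_[p]).isPrime
  have heis : g.IsEisensteinAt (Ideal.span {(p : ℤ_[p])}) := by
    constructor
    · rw [(g_monic hg).leadingCoeff]
      intro h
      rw [Ideal.mem_span_singleton] at h
      exact PadicInt.p_nonunit (isUnit_of_dvd_one h)
    · intro n hn
      rw [g_natDegree hg] at hn
      rw [g_coeff hg, if_pos (by omega)]
      rw [Ideal.mem_span_singleton]
      exact_mod_cast Nat.cast_dvd_cast (hp.out.dvd_choose_self (by omega) (by omega))
    · rw [g_coeff hg, if_pos (by omega)]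
      rw [show p.choose (0+1) = p from Nat.choose_one_right p]
      rw [Ideal.span_singleton_pow, Ideal.mem_span_singleton]
      intro hdvd
      obtain ⟨c, hc⟩ := hdvd
      have hpne : (p : ℤ_[p]) ≠ 0 := Nat.cast_ne_zero.mpr hp.out.ne_zero
      have : (p : ℤ_[p]) * 1 = p * (p * c) := by ring_nf; linear_combination hc
      have h1 : (1 : ℤ_[p]) = p * c := mul_left_cancel₀ hpne this
      exact PadicInt.p_nonunit (IsUnit.of_mul_eq_one _ h1.symm)
  exact heis.irreducible hprime (g_monic hg).isPrimitive
    (by rw [g_natDegree hg]; omega)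

lemma quot_domain : IsDomain (ℤ_[p][X] ⧸ Ideal.span {g}) := by
  have hprime : (Ideal.span {g}).IsPrime :=
    (Ideal.span_singleton_prime (g_monic hg).ne_zero).mpr
      (UniqueFactorizationMonoid.irreducible_iff_prime.mp (g_irred hg))
  exact Ideal.Quotient.isDomain _

lemma exists_w : ∃ t : ℤ_[p][X] ⧸ Ideal.span {g},
    (Ideal.Quotient.mk (Ideal.span {g}) X) ^ (p - 1)
      = p * (-(1 + (Ideal.Quotient.mk (Ideal.span {g}) X) * t)) := by
  have hp2 := hp.out.two_le
  set π := Ideal.Quotient.mk (Ideal.span {g}) X with hπ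
  have hmkg : (Ideal.Quotient.mk (Ideal.span {g}) g) = 0 :=
    Ideal.Quotient.eq_zero_iff_mem.mpr (Ideal.mem_span_singleton_self g)
  have hrel : (∑ i ∈ Finset.Icc 1 p,
      (p.choose i : ℤ_[p][X] ⧸ Ideal.span {g}) * π ^ (i - 1)) = 0 := by
    have h0 : (Ideal.Quotient.mk (Ideal.span {g}))
        (∑ i ∈ Finset.Icc 1 p, C (p.choose i : ℤ_[p]) * X ^ (i - 1)) = 0 := by
      rw [← hg]; exact hmkg
    rw [map_sum] at h0
    rw [← h0]
    refine Finset.sum_congr rfl fun i _ => ?_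
    rw [map_mul, map_pow, C_eq_natCast, map_natCast]
  have hsplit := Finset.sum_Icc_succ_top (a := 1) (b := p - 1) (by omega)
      (fun i => (p.choose i : ℤ_[p][X] ⧸ Ideal.span {g}) * π ^ (i - 1))
  rw [show p - 1 + 1 = p from by omega] at hsplit
  rw [hsplit, Nat.choose_self] at hrel
  push_cast at hrel
  rw [one_mul] at hrel
  have hlow : (∑ i ∈ Finset.Icc 1 (p-1),
        (p.choose i : ℤ_[p][X] ⧸ Ideal.span {g}) * π ^ (i - 1))
      = p * (1 + π * (∑ i ∈ Finset.Ico 2 p,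
          ((p.choose i / p : ℕ) : ℤ_[p][X] ⧸ Ideal.span {g}) * π ^ (i - 2))) := by
    have h1 : ∀ i ∈ Finset.Icc 1 (p-1),
        (p.choose i : ℤ_[p][X] ⧸ Ideal.span {g}) * π ^ (i-1)
        = p * (((p.choose i / p : ℕ) : ℤ_[p][X] ⧸ Ideal.span {g}) * π ^ (i-1)) := by
      intro i hi
      simp only [Finset.mem_Icc] at hi
      have hdvd : p ∣ p.choose i := hp.out.dvd_choose_self (by omega) (by omega)
      rw [← mul_assoc]
      norm_cast
      rw [Nat.mul_div_cancel' hdvd]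
    rw [Finset.sum_congr rfl h1, ← Finset.mul_sum]
    congr 1
    have hIcc : Finset.Icc 1 (p-1) = Finset.Ico 1 p := by
      rw [← Finset.Ico_add_one_right_eq_Icc]
      congr 1
      omega
    rw [hIcc, Finset.sum_eq_sum_Ico_succ_bot (by omega : 1 < p)]
    rw [Nat.choose_one_right, Nat.div_self (by omega : 0 < p)]
    rw [Finset.mul_sum]
    simp only [Nat.cast_one, one_mul, pow_zero, mul_one]
    congr 1
    refine Finset.sum_congr rfl fun i hi => ?_
    simp only [Finset.mem_Ico] at hi
    rw [show i - 1 = (i-2) + 1 from by omega, pow_succ]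
    ring
  rw [hlow] at hrel
  exact ⟨∑ i ∈ Finset.Ico 2 p,
    ((p.choose i / p : ℕ) : ℤ_[p][X] ⧸ Ideal.span {g}) * π ^ (i - 2),
    by linear_combination hrel⟩

lemma one_add_pi_pow_p :
    (1 + Ideal.Quotient.mk (Ideal.span {g}) X) ^ p = 1 := by
  have hp2 := hp.out.two_le
  have hXg : (X + 1 : ℤ_[p][X]) ^ p = 1 + X * g := by
    rw [add_pow]
    simp only [one_pow, mul_one]
    rw [Finset.range_eq_Ico, Finset.sum_eq_sum_Ico_succ_bot (by omega : 0 < p + 1)]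
    simp only [pow_zero, Nat.choose_zero_right, Nat.cast_one, one_mul]
    congr 1
    rw [hg, Finset.mul_sum, ← Finset.Ico_add_one_right_eq_Icc]
    refine Finset.sum_congr rfl fun i hi => ?_
    simp only [Finset.mem_Ico] at hi
    have hxi : (X : ℤ_[p][X]) ^ i = X * X ^ (i-1) := by
      conv_lhs => rw [show i = (i-1) + 1 from by omega]
      rw [pow_succ']
    rw [C_eq_natCast, hxi]
    ring
  have h2 := congrArg (Ideal.Quotient.mk (Ideal.span {g})) hXg
  simp only [map_pow, map_add, map_mul, map_one] at h2
  rw [show (Ideal.Quotient.mk (Ideal.span {g})) g = 0 from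
    Ideal.Quotient.eq_zero_iff_mem.mpr (Ideal.mem_span_singleton_self g)] at h2
  rw [add_comm ((Ideal.Quotient.mk (Ideal.span {g})) X) 1] at h2
  simpa using h2

lemma p_ne_zero_R : (p : ℤ_[p][X] ⧸ Ideal.span {g}) ≠ 0 := by
  have hp2 := hp.out.two_le
  intro h
  have h1 : ((p : ℤ_[p][X]) : ℤ_[p][X] ⧸ Ideal.span {g}) = 0 := by
    rw [map_natCast]; exact h
  rw [Ideal.Quotient.eq_zero_iff_mem, Ideal.mem_span_singleton] at h1
  have hne : (p : ℤ_[p][X]) ≠ 0 := by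
    exact_mod_cast Nat.cast_ne_zero.mpr hp.out.ne_zero
  have h3 := Polynomial.natDegree_le_of_dvd h1 hne
  rw [g_natDegree hg, Polynomial.natDegree_natCast] at h3
  omega

lemma pi_not_unit : ¬ IsUnit (Ideal.Quotient.mk (Ideal.span {g}) X) := by
  have hp2 := hp.out.two_le
  have hφg : ((PadicInt.toZMod).comp (evalRingHom (0 : ℤ_[p]))) g = 0 := by
    have h1 : ((PadicInt.toZMod).comp (evalRingHom (0 : ℤ_[p]))) g
        = PadicInt.toZMod (g.eval 0) := rfl
    rw [h1, ← Polynomial.coeff_zero_eq_eval_zero, g_coeff hg, if_pos (by omega : 0 < p),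
      Nat.choose_one_right, map_natCast, ZMod.natCast_self]
  have hker : ∀ a ∈ Ideal.span {g},
      ((PadicInt.toZMod).comp (evalRingHom (0 : ℤ_[p]))) a = 0 := by
    intro a ha
    rw [Ideal.mem_span_singleton] at ha
    obtain ⟨b, rfl⟩ := ha
    rw [map_mul, hφg, zero_mul]
  intro hu
  have h0 : (Ideal.Quotient.lift (Ideal.span {g}) _ hker)
      (Ideal.Quotient.mk (Ideal.span {g}) X) = 0 := by
    rw [Ideal.Quotient.lift_mk]
    have h1 : ((PadicInt.toZMod).comp (evalRingHom (0 : ℤ_[p]))) X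
        = PadicInt.toZMod (X.eval (0 : ℤ_[p])) := rfl
    rw [h1, eval_X, map_zero]
  have h2 := hu.map (Ideal.Quotient.lift (Ideal.span {g}) _ hker)
  rw [h0, isUnit_zero_iff] at h2
  exact zero_ne_one (α := ZMod p) h2

lemma pi_ne_zero : (Ideal.Quotient.mk (Ideal.span {g}) X) ≠ 0 := by
  have hp2 := hp.out.two_le
  intro h
  obtain ⟨t, ht⟩ := exists_w hg
  rw [h, zero_pow (by omega : p - 1 ≠ 0), zero_mul] at ht
  have : (p : ℤ_[p][X] ⧸ Ideal.span {g}) = 0 := by linear_combination ht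
  exact p_ne_zero_R hg this

lemma pi_pow_mem_iff (j N : ℕ) :
    (Ideal.Quotient.mk (Ideal.span {g}) X) ^ j
      ∈ (Ideal.span {Ideal.Quotient.mk (Ideal.span {g}) X}) ^ N ↔ N ≤ j := by
  haveI := quot_domain hg
  rw [Ideal.span_singleton_pow, Ideal.mem_span_singleton]
  exact pow_dvd_pow_iff (pi_ne_zero hg) (pi_not_unit hg)

lemma p_pow_mem_iff (t N : ℕ) :
    ((p : ℤ_[p][X] ⧸ Ideal.span {g})) ^ t
      ∈ (Ideal.span {Ideal.Quotient.mk (Ideal.span {g}) X}) ^ N ↔ N ≤ t * (p - 1) := by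
  obtain ⟨w, hw⟩ := exists_w hg
  rw [pow_mem_span_aux _ _ _ _ _ _ hw, pi_pow_mem_iff hg]

end ring
end Stmt6Aux


namespace Stmt6Aux

section grp

variable {H : Type*} [Group H] {A : Subgroup H} {R : Type*} [CommRing R]
  {M : Type*} [AddCommGroup M] [Module R M] (θ : A → M)

lemma theta_one (hadd : ∀ a b : A, θ (a * b) = θ a + θ b) : θ 1 = 0 := by
  have := hadd 1 1
  rw [mul_one] at this
  have h2 : θ 1 + θ 1 = θ 1 + 0 := by rw [← this, add_zero]
  exact add_left_cancel h2

lemma theta_inv (hadd : ∀ a b : A, θ (a * b) = θ a + θ b) (a : A) : θ a⁻¹ = -θ a := by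
  have := hadd a a⁻¹
  rw [mul_inv_cancel, theta_one θ hadd] at this
  exact (neg_eq_of_add_eq_zero_right this.symm).symm

lemma theta_pow (hadd : ∀ a b : A, θ (a * b) = θ a + θ b) (a : A) (k : ℕ) :
    θ (a ^ k) = k • θ a := by
  induction k with
  | zero => simpa using theta_one θ hadd
  | succ j ih => rw [pow_succ, hadd, ih, add_smul, one_smul]

variable (x : H) (π : R)

lemma conj_exists [A.Normal]
    (hab : ∀ a ∈ A, ∀ b ∈ A, a * b = b * a)
    (hgen : Subgroup.closure ((A : Set H) ∪ {x}) = ⊤)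
    (hP : ∃ P : ℕ, 0 < P ∧ (1 + π) ^ P = 1)
    (hint : ∀ (a : H) (ha : a ∈ A) (hb : x⁻¹ * a * x ∈ A),
      θ ⟨x⁻¹ * a * x, hb⟩ = (1 + π) • θ ⟨a, ha⟩)
    (y : H) :
    ∃ j : ℕ, ∀ (a : H) (ha : a ∈ A) (hb : y⁻¹ * a * y ∈ A),
      θ ⟨y⁻¹ * a * y, hb⟩ = ((1 + π) ^ j) • θ ⟨a, ha⟩ := by
  obtain ⟨P, hP0, hP1⟩ := hP
  have hy : y ∈ Subgroup.closure ((A : Set H) ∪ {x}) := by rw [hgen]; exact Subgroup.mem_top y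
  induction hy using Subgroup.closure_induction with
  | mem z hz =>
    rcases hz with hz | hz
    · refine ⟨0, fun a ha hb => ?_⟩
      have hza : z⁻¹ * a * z = a := by
        rw [mul_assoc, hab a ha z hz, ← mul_assoc, inv_mul_cancel, one_mul]
      rw [pow_zero, one_smul]
      congr 1
      exact Subtype.ext hza
    · rcases hz with rfl
      exact ⟨1, fun a ha hb => by rw [pow_one]; exact hint a ha hb⟩
  | one =>
    refine ⟨0, fun a ha hb => ?_⟩
    rw [pow_zero, one_smul]
    congr 1
    exact Subtype.ext (by group)
  | mul y z hy hz ihy ihz =>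
    obtain ⟨jy, hjy⟩ := ihy
    obtain ⟨jz, hjz⟩ := ihz
    refine ⟨jy + jz, fun a ha hb => ?_⟩
    have hya : y⁻¹ * a * y ∈ A := by
      have := ‹A.Normal›.conj_mem a ha y⁻¹
      simpa [mul_assoc] using this
    have hzya : z⁻¹ * (y⁻¹ * a * y) * z ∈ A := by
      have := ‹A.Normal›.conj_mem _ hya z⁻¹
      simpa [mul_assoc] using this
    have he : ((⟨(y * z)⁻¹ * a * (y * z), hb⟩ : A))
        = ⟨z⁻¹ * (y⁻¹ * a * y) * z, hzya⟩ := Subtype.ext (by group)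
    rw [he, hjz _ hya hzya, hjy a ha hya, smul_smul, ← pow_add, add_comm jz jy]
  | inv y hy ihy =>
    obtain ⟨jy, hjy⟩ := ihy
    refine ⟨jy * (P - 1), fun a ha hb => ?_⟩
    have hmem : y⁻¹ * (y⁻¹⁻¹ * a * y⁻¹) * y ∈ A := by
      have : y⁻¹ * (y⁻¹⁻¹ * a * y⁻¹) * y = a := by group
      rw [this]; exact ha
    have h1 := hjy _ hb hmem
    have he : ((⟨y⁻¹ * (y⁻¹⁻¹ * a * y⁻¹) * y, hmem⟩ : A)) = ⟨a, ha⟩ :=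
      Subtype.ext (by group)
    rw [he] at h1
    have h2 : ((1 + π) ^ (jy * (P - 1))) • θ ⟨a, ha⟩
        = (((1 + π) ^ (jy * (P - 1))) * ((1 + π) ^ jy)) • θ ⟨y⁻¹⁻¹ * a * y⁻¹, hb⟩ := by
      rw [← smul_smul, ← h1]
    rw [h2, ← pow_add]
    have : jy * (P - 1) + jy = P * jy := by
      cases P with
      | zero => omega
      | succ Q => simp [Nat.succ_sub_one]; ring
    rw [this, pow_mul, hP1, one_pow, one_smul]

lemma one_add_pow' {R : Type*} [CommRing R] (π : R) (j : ℕ) :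
    ∃ q : R, (1 + π) ^ j = 1 + π * q := by
  induction j with
  | zero => exact ⟨0, by ring⟩
  | succ k ih =>
    obtain ⟨q, hq⟩ := ih
    exact ⟨q + 1 + π * q, by rw [pow_succ, hq]; ring⟩

lemma commutator_theta [A.Normal]
    (hadd : ∀ a b : A, θ (a * b) = θ a + θ b)
    (hconj : ∀ y : H, ∃ j : ℕ, ∀ (a : H) (ha : a ∈ A) (hb : y⁻¹ * a * y ∈ A),
      θ ⟨y⁻¹ * a * y, hb⟩ = ((1 + π) ^ j) • θ ⟨a, ha⟩)
    (a : H) (ha : a ∈ A) (y : H) :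
    ∃ (hm : ⁅a, y⁆ ∈ A) (q : R), θ ⟨⁅a, y⁆, hm⟩ = π • (q • θ ⟨a, ha⟩) := by
  have hconjmem : y⁻¹⁻¹ * a⁻¹ * y⁻¹ ∈ A := by
    have := ‹A.Normal›.conj_mem a⁻¹ (A.inv_mem ha) y
    simpa [mul_assoc] using this
  have hm : ⁅a, y⁆ ∈ A := by
    have h1 : ⁅a, y⁆ = a * (y⁻¹⁻¹ * a⁻¹ * y⁻¹) := by group
    rw [h1]
    exact A.mul_mem ha hconjmem
  obtain ⟨j, hj⟩ := hconj y⁻¹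
  obtain ⟨q0, hq0⟩ := one_add_pow' π j
  refine ⟨hm, -q0, ?_⟩
  have he : ((⟨⁅a, y⁆, hm⟩ : A)) = ⟨a, ha⟩ * ⟨y⁻¹⁻¹ * a⁻¹ * y⁻¹, hconjmem⟩ :=
    Subtype.ext (show ⁅a, y⁆ = a * (y⁻¹⁻¹ * a⁻¹ * y⁻¹) by group)
  rw [he, hadd, hj a⁻¹ (A.inv_mem ha) hconjmem]
  have he2 : ((⟨a⁻¹, A.inv_mem ha⟩ : A)) = (⟨a, ha⟩ : A)⁻¹ := rfl
  rw [he2, theta_inv θ hadd, hq0]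
  have : θ ⟨a, ha⟩ + (1 + π * q0) • -θ ⟨a, ha⟩ = (π * -q0) • θ ⟨a, ha⟩ := by
    module
  rw [this, mul_smul]

/-- The subgroup of `H` of elements of `A` whose `θ`-image lies in a submodule `T`. -/
def Bsub [A.Normal] (hadd : ∀ a b : A, θ (a * b) = θ a + θ b) (T : Submodule R M) :
    Subgroup H where
  carrier := {h : H | ∃ hA : h ∈ A, θ ⟨h, hA⟩ ∈ T}
  one_mem' := ⟨A.one_mem, by
    rw [show (⟨1, A.one_mem⟩ : A) = 1 from rfl, theta_one θ hadd]; exact T.zero_mem⟩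
  mul_mem' := by
    rintro a b ⟨ha, hta⟩ ⟨hb, htb⟩
    refine ⟨A.mul_mem ha hb, ?_⟩
    rw [show (⟨a * b, A.mul_mem ha hb⟩ : A) = ⟨a, ha⟩ * ⟨b, hb⟩ from rfl, hadd]
    exact T.add_mem hta htb
  inv_mem' := by
    rintro a ⟨ha, hta⟩
    refine ⟨A.inv_mem ha, ?_⟩
    rw [show (⟨a⁻¹, A.inv_mem ha⟩ : A) = (⟨a, ha⟩ : A)⁻¹ from rfl, theta_inv θ hadd]
    exact T.neg_mem hta

lemma mem_Bsub [A.Normal] (hadd : ∀ a b : A, θ (a * b) = θ a + θ b) (T : Submodule R M)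
    (y : H) : y ∈ Bsub θ hadd T ↔ ∃ hA : y ∈ A, θ ⟨y, hA⟩ ∈ T := Iff.rfl

lemma comm_mul_left (g1 g2 h : H) : ⁅g1 * g2, h⁆ = (g1 * ⁅g2, h⁆ * g1⁻¹) * ⁅g1, h⁆ := by
  group

lemma comm_mul_right (u v w : H) : ⁅u, v * w⁆ = ⁅u, v⁆ * (v * ⁅u, w⁆ * v⁻¹) := by
  group

lemma lcs_le_Bsub [A.Normal]
    (hab : ∀ a ∈ A, ∀ b ∈ A, a * b = b * a)
    (hgen : Subgroup.closure ((A : Set H) ∪ {x}) = ⊤)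
    (hxgen : ∀ q : H ⧸ A, q ∈ Subgroup.zpowers (QuotientGroup.mk x : H ⧸ A))
    (hP : ∃ P : ℕ, 0 < P ∧ (1 + π) ^ P = 1)
    (hint : ∀ (a : H) (ha : a ∈ A) (hb : x⁻¹ * a * x ∈ A),
      θ ⟨x⁻¹ * a * x, hb⟩ = (1 + π) • θ ⟨a, ha⟩)
    (hadd : ∀ a b : A, θ (a * b) = θ a + θ b) :
    ∀ k : ℕ, (⊤ : Subgroup H).lowerCentralSeries (k + 1)
      ≤ Bsub θ hadd (LinearMap.range (LinearMap.lsmul R M (π ^ (k + 1)))) := by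
  have hconj := conj_exists θ x π hab hgen hP hint
  -- the step: commutators of elements in level k land in level k+1
  have hstep : ∀ (k : ℕ) (a : H) (ha : a ∈ A),
      θ ⟨a, ha⟩ ∈ LinearMap.range (LinearMap.lsmul R M (π ^ k)) → ∀ y : H,
      ⁅a, y⁆ ∈ Bsub θ hadd (LinearMap.range (LinearMap.lsmul R M (π ^ (k + 1)))) := by
    intro k a ha hT y
    obtain ⟨hm, q, hq⟩ := commutator_theta θ π hadd hconj a ha y
    obtain ⟨w, hw⟩ := hT
    refine ⟨hm, ⟨q • w, ?_⟩⟩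
    simp only [LinearMap.lsmul_apply] at hw ⊢
    rw [hq, ← hw, smul_smul, smul_smul, smul_smul]
    congr 1
    ring
  have hBnorm : ∀ (T : Submodule R M) (z : H), z ∈ Bsub θ hadd T → ∀ y : H,
      y * z * y⁻¹ ∈ Bsub θ hadd T := by
    rintro T z ⟨hz, htz⟩ y
    obtain ⟨j, hj⟩ := hconj y⁻¹
    have hmem : y⁻¹⁻¹ * z * y⁻¹ ∈ A := by
      have := ‹A.Normal›.conj_mem z hz y
      simpa [mul_assoc] using this
    refine ⟨by simpa [mul_assoc] using hmem, ?_⟩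
    have he : ((⟨y * z * y⁻¹, by simpa [mul_assoc] using hmem⟩ : A))
        = ⟨y⁻¹⁻¹ * z * y⁻¹, hmem⟩ := Subtype.ext (by group)
    rw [he, hj z hz hmem]
    exact T.smul_mem _ htz
  have hdecomp : ∀ w : H, ∃ (j : ℤ) (b : H), b ∈ A ∧ w = x ^ j * b := by
    intro w
    obtain ⟨j, hj⟩ := hxgen (QuotientGroup.mk w)
    refine ⟨j, (x ^ j)⁻¹ * w, ?_, by group⟩
    have : (QuotientGroup.mk (x ^ j) : H ⧸ A) = QuotientGroup.mk w := by
      rw [← hj]; rfl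
    exact (QuotientGroup.eq (s := A)).mp this
  intro k
  induction k with
  | zero =>
    have hB1 : ∀ (a : H), a ∈ A → ∀ y : H,
        ⁅a, y⁆ ∈ Bsub θ hadd (LinearMap.range (LinearMap.lsmul R M (π ^ 1))) := by
      intro a ha y
      exact hstep 0 a ha ⟨θ ⟨a, ha⟩, by simp⟩ y
    show (⊤ : Subgroup H).lowerCentralSeries (0 + 1) ≤ _
    have : (⊤ : Subgroup H).lowerCentralSeries (0 + 1) = ⁅(⊤ : Subgroup H).lowerCentralSeries 0, (⊤ : Subgroup H)⁆ := rfl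
    rw [this]
    rw [Subgroup.commutator_le]
    intro g1 _ g2 _
    obtain ⟨j, b, hb, rfl⟩ := hdecomp g1
    obtain ⟨l, c, hc, rfl⟩ := hdecomp g2
    rw [comm_mul_left]
    refine Subgroup.mul_mem _ (hBnorm _ _ ?_ _) ?_
    · exact hB1 b hb _
    · rw [comm_mul_right]
      refine Subgroup.mul_mem _ ?_ (hBnorm _ _ ?_ _)
      · have : ⁅x ^ j, x ^ l⁆ = 1 := by
          rw [commutatorElement_eq_one_iff_commute]
          exact Commute.zpow_zpow (Commute.refl x) j l
        rw [this]
        exact Subgroup.one_mem _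
      · rw [← commutatorElement_inv]
        exact Subgroup.inv_mem _ (hB1 c hc _)
  | succ k ih =>
    show (⊤ : Subgroup H).lowerCentralSeries (k + 1 + 1) ≤ _
    have : (⊤ : Subgroup H).lowerCentralSeries (k + 1 + 1)
        = ⁅(⊤ : Subgroup H).lowerCentralSeries (k + 1), (⊤ : Subgroup H)⁆ := rfl
    rw [this, Subgroup.commutator_le]
    intro g1 hg1 g2 _
    obtain ⟨ha, ht⟩ := ih hg1
    exact hstep (k + 1) g1 ha ht g2

lemma lcs_lower [A.Normal]
    (hadd : ∀ a b : A, θ (a * b) = θ a + θ b)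
    (hint : ∀ (a : H) (ha : a ∈ A) (hb : x⁻¹ * a * x ∈ A),
      θ ⟨x⁻¹ * a * x, hb⟩ = (1 + π) • θ ⟨a, ha⟩)
    (e : M) (a₀ : A) (h₀ : θ a₀ = e) :
    ∀ k : ℕ, ∃ (c : H) (hc : c ∈ A), c ∈ (⊤ : Subgroup H).lowerCentralSeries k ∧
      θ ⟨c, hc⟩ = (((-1 : R) ^ k) * π ^ k) • e := by
  intro k
  induction k with
  | zero =>
    refine ⟨(a₀ : H), a₀.2, Subgroup.mem_top _, ?_⟩
    rw [Subtype.coe_eta, h₀]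
    simp
  | succ k ih =>
    obtain ⟨c, hc, hlcs, hθ⟩ := ih
    have hconjmem : x⁻¹ * c⁻¹ * x ∈ A := by
      have := ‹A.Normal›.conj_mem c⁻¹ (A.inv_mem hc) x⁻¹
      simpa [mul_assoc] using this
    have hm : ⁅c, x⁻¹⁆ ∈ A := by
      rw [show ⁅c, x⁻¹⁆ = c * (x⁻¹ * c⁻¹ * x) from by group]
      exact A.mul_mem hc hconjmem
    refine ⟨⁅c, x⁻¹⁆, hm, ?_, ?_⟩
    · show ⁅c, x⁻¹⁆ ∈ (⊤ : Subgroup H).lowerCentralSeries (k + 1)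
      have hrfl : (⊤ : Subgroup H).lowerCentralSeries (k + 1)
          = ⁅(⊤ : Subgroup H).lowerCentralSeries k, (⊤ : Subgroup H)⁆ := rfl
      rw [hrfl]
      exact Subgroup.commutator_mem_commutator hlcs (Subgroup.mem_top _)
    · have he : ((⟨⁅c, x⁻¹⁆, hm⟩ : A)) = ⟨c, hc⟩ * ⟨x⁻¹ * c⁻¹ * x, hconjmem⟩ :=
        Subtype.ext (show ⁅c, x⁻¹⁆ = c * (x⁻¹ * c⁻¹ * x) by group)
      rw [he, hadd, hint c⁻¹ (A.inv_mem hc) hconjmem]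
      rw [show ((⟨c⁻¹, A.inv_mem hc⟩ : A)) = (⟨c, hc⟩ : A)⁻¹ from rfl, theta_inv θ hadd, hθ]
      have : θ ⟨c, hc⟩ + (1 + π) • -θ ⟨c, hc⟩ = (-π) • θ ⟨c, hc⟩ := by module
      rw [hθ] at this
      rw [this, smul_smul]
      congr 1
      ring

end grp
end Stmt6Aux
/-- Let `A` be a nontrivial finite abelian normal `p`-subgroup of a
group `H` and `x ∈ H` as in the context (`H = ⟨A, x⟩`, the image of `x` generates `H/A`
with `p`-power order, splitting condition).  Let `𝔒 = ℤ_p[X]/(g)` with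
`g = Σ_{i=1}^p C(p,i) X^(i-1)`, `π` the image of `X`, `𝔓 = (π)`, and suppose
`θ : A ≅ ⊕_{i=1}^s 𝔒/𝔓^(n_i)` (as abelian groups) intertwines conjugation by `x` with
multiplication by `1 + π`;  `λ = (n_1 ≥ … ≥ n_s)`.  Then `H` is nilpotent of class `n_1`
(i.e. `γ_{n_1+1}(H) = 1 ≠ γ_{n_1}(H)`, in Mathlib numbering
`(⊤ : Subgroup H).lowerCentralSeries n_1 = ⊥` and `(⊤ : Subgroup H).lowerCentralSeries (n_1 - 1) ≠ ⊥`),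
and `A` has exponent `p^m` with `m = ⌈n_1/(p-1)⌉ = (n_1 + p - 2)/(p - 1)`. -/
theorem stmt_6 (p : ℕ) [Fact p.Prime]
    (H : Type) [Group H] (A : Subgroup H) [A.Normal] [Finite A]
    (hab : ∀ a ∈ A, ∀ b ∈ A, a * b = b * a)
    (hpgrp : IsPGroup p A) (hA : A ≠ ⊥)
    (x : H)
    (hgen : Subgroup.closure ((A : Set H) ∪ {x}) = ⊤)
    (hxgen : ∀ q : H ⧸ A, q ∈ Subgroup.zpowers (QuotientGroup.mk x : H ⧸ A))
    (hord : ∃ k : ℕ, orderOf (QuotientGroup.mk x : H ⧸ A) = p ^ k)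
    (hsplit : ∀ a ∈ A, ((List.range p).map (fun i => (x ^ i)⁻¹ * a * x ^ i)).prod = 1)
    (g : ℤ_[p][X]) (hg : g = ∑ i ∈ Finset.Icc 1 p, C (p.choose i : ℤ_[p]) * X ^ (i - 1))
    (s : ℕ) (hs : 0 < s) (n : Fin s → ℕ) (hanti : Antitone n) (hpos : ∀ i, 1 ≤ n i)
    (θ : A → ⨁ i : Fin s, (ℤ_[p][X] ⧸ Ideal.span {g}) ⧸
        (Ideal.span {Ideal.Quotient.mk (Ideal.span {g}) X}) ^ (n i))
    (hbij : Function.Bijective θ)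
    (hadd : ∀ a b : A, θ (a * b) = θ a + θ b)
    (hint : ∀ (a : H) (ha : a ∈ A) (hb : x⁻¹ * a * x ∈ A),
      θ ⟨x⁻¹ * a * x, hb⟩ = (1 + Ideal.Quotient.mk (Ideal.span {g}) X) • θ ⟨a, ha⟩) :
    (⊤ : Subgroup H).lowerCentralSeries (n ⟨0, hs⟩) = ⊥ ∧
    (⊤ : Subgroup H).lowerCentralSeries (n ⟨0, hs⟩ - 1) ≠ ⊥ ∧
    Monoid.exponent A = p ^ ((n ⟨0, hs⟩ + p - 2) / (p - 1)) := by
  classical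
  have hp2 := (‹Fact p.Prime›.out).two_le
  set i₀ : Fin s := ⟨0, hs⟩ with hi₀
  set n₀ := n i₀ with hn₀def
  have hn₀ : 1 ≤ n₀ := hpos i₀
  have hnle : ∀ i : Fin s, n i ≤ n₀ := fun i => hanti (by simp [Fin.le_def, hi₀])
  set m := (n₀ + p - 2) / (p - 1) with hmdef
  -- arithmetic facts about m
  have key := Nat.div_add_mod (n₀ + p - 2) (p - 1)
  have hrlt : (n₀ + p - 2) % (p - 1) < p - 1 := Nat.mod_lt _ (by omega)
  have harith1 : n₀ ≤ m * (p - 1) := by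
    rw [mul_comm, hmdef]
    set K := (p - 1) * ((n₀ + p - 2) / (p - 1))
    omega
  have harith2 : ∀ t : ℕ, t < m → t * (p - 1) < n₀ := by
    intro t ht
    have h1 : t * (p - 1) + (p - 1) ≤ m * (p - 1) := by
      have := Nat.mul_le_mul_right (p - 1) (show t + 1 ≤ m by omega)
      rw [add_one_mul] at this
      exact this
    have h2 : m * (p - 1) = (p - 1) * m := mul_comm _ _
    rw [h2, hmdef] at h1
    set K := (p - 1) * ((n₀ + p - 2) / (p - 1))
    set L := t * (p - 1)
    omega
  -- notation
  set e := DirectSum.of (fun i : Fin s => (ℤ_[p][X] ⧸ Ideal.span {g}) ⧸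
        (Ideal.span {Ideal.Quotient.mk (Ideal.span {g}) X}) ^ (n i)) i₀
      (Ideal.Quotient.mk ((Ideal.span {Ideal.Quotient.mk (Ideal.span {g}) X}) ^ (n i₀)) 1)
    with hedef
  have hP : ∃ P : ℕ, 0 < P ∧ (1 + (Ideal.Quotient.mk (Ideal.span {g}) X)) ^ P = 1 :=
    ⟨p, by omega, Stmt6Aux.one_add_pi_pow_p hg⟩
  -- module fact: (Ideal.Quotient.mk (Ideal.span {g}) X) ^ n₀ kills everything
  have htop : ∀ v : ⨁ i : Fin s, (ℤ_[p][X] ⧸ Ideal.span {g}) ⧸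
      (Ideal.span {Ideal.Quotient.mk (Ideal.span {g}) X}) ^ (n i), (Ideal.Quotient.mk (Ideal.span {g}) X) ^ n₀ • v = 0 := by
    intro v
    refine DFinsupp.ext fun i => ?_
    rw [DFinsupp.smul_apply]
    obtain ⟨y, hy⟩ := Ideal.Quotient.mk_surjective (v i)
    rw [← hy]
    rw [show ((Ideal.Quotient.mk (Ideal.span {g}) X) ^ n₀ • Ideal.Quotient.mk ((Ideal.span {(Ideal.Quotient.mk (Ideal.span {g}) X)}) ^ (n i)) y)
        = Ideal.Quotient.mk _ ((Ideal.Quotient.mk (Ideal.span {g}) X) ^ n₀ * y) from rfl]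
    rw [show ((0 : ⨁ i : Fin s, (ℤ_[p][X] ⧸ Ideal.span {g}) ⧸
      (Ideal.span {Ideal.Quotient.mk (Ideal.span {g}) X}) ^ (n i)) i) = 0 from rfl]
    rw [Ideal.Quotient.eq_zero_iff_mem]
    refine Ideal.mul_mem_right _ _ ?_
    rw [Ideal.span_singleton_pow, Ideal.mem_span_singleton]
    exact pow_dvd_pow _ (hnle i)
  -- module fact: p ^ m kills everything
  have hptop : ∀ v : ⨁ i : Fin s, (ℤ_[p][X] ⧸ Ideal.span {g}) ⧸
      (Ideal.span {Ideal.Quotient.mk (Ideal.span {g}) X}) ^ (n i),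
      ((p : ℤ_[p][X] ⧸ Ideal.span {g})) ^ m • v = 0 := by
    intro v
    refine DFinsupp.ext fun i => ?_
    rw [DFinsupp.smul_apply]
    obtain ⟨y, hy⟩ := Ideal.Quotient.mk_surjective (v i)
    rw [← hy]
    rw [show (((p : ℤ_[p][X] ⧸ Ideal.span {g})) ^ m
          • Ideal.Quotient.mk ((Ideal.span {(Ideal.Quotient.mk (Ideal.span {g}) X)}) ^ (n i)) y)
        = Ideal.Quotient.mk _ (((p : ℤ_[p][X] ⧸ Ideal.span {g})) ^ m * y) from rfl]
    rw [show ((0 : ⨁ i : Fin s, (ℤ_[p][X] ⧸ Ideal.span {g}) ⧸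
      (Ideal.span {Ideal.Quotient.mk (Ideal.span {g}) X}) ^ (n i)) i) = 0 from rfl]
    rw [Ideal.Quotient.eq_zero_iff_mem]
    refine Ideal.mul_mem_right _ _ ?_
    rw [Stmt6Aux.p_pow_mem_iff hg]
    exact le_trans (le_trans (hnle i) harith1) (le_refl _)
  -- evaluation of scalars on e
  have heval : ∀ r : ℤ_[p][X] ⧸ Ideal.span {g}, (r • e) i₀
      = Ideal.Quotient.mk ((Ideal.span {(Ideal.Quotient.mk (Ideal.span {g}) X)}) ^ (n i₀)) r := by
    intro r
    rw [DFinsupp.smul_apply, hedef]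
    rw [show (DirectSum.of (fun i : Fin s => (ℤ_[p][X] ⧸ Ideal.span {g}) ⧸
        (Ideal.span {Ideal.Quotient.mk (Ideal.span {g}) X}) ^ (n i)) i₀
        (Ideal.Quotient.mk ((Ideal.span {Ideal.Quotient.mk (Ideal.span {g}) X}) ^ (n i₀)) 1)) i₀
        = Ideal.Quotient.mk ((Ideal.span {(Ideal.Quotient.mk (Ideal.span {g}) X)}) ^ (n i₀)) 1 from by
      simp [DirectSum.of_apply]]
    rw [show (r • Ideal.Quotient.mk ((Ideal.span {(Ideal.Quotient.mk (Ideal.span {g}) X)}) ^ (n i₀)) 1)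
        = Ideal.Quotient.mk _ (r * 1) from rfl, mul_one]
  have hF2 : (((-1 : ℤ_[p][X] ⧸ Ideal.span {g}) ^ (n₀ - 1)) * (Ideal.Quotient.mk (Ideal.span {g}) X) ^ (n₀ - 1)) • e ≠ 0 := by
    intro h
    have h2 := congrArg (fun v => v i₀) h
    simp only at h2
    rw [heval] at h2
    rw [show ((0 : ⨁ i : Fin s, (ℤ_[p][X] ⧸ Ideal.span {g}) ⧸
      (Ideal.span {Ideal.Quotient.mk (Ideal.span {g}) X}) ^ (n i)) i₀) = 0 from rfl] at h2
    rw [Ideal.Quotient.eq_zero_iff_mem] at h2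
    have h3 : (Ideal.Quotient.mk (Ideal.span {g}) X) ^ (n₀ - 1) ∈ (Ideal.span {(Ideal.Quotient.mk (Ideal.span {g}) X)}) ^ (n i₀) := by
      have h4 : (Ideal.Quotient.mk (Ideal.span {g}) X) ^ (n₀ - 1) = (-1 : ℤ_[p][X] ⧸ Ideal.span {g}) ^ (n₀ - 1)
          * ((-1 : ℤ_[p][X] ⧸ Ideal.span {g}) ^ (n₀ - 1) * (Ideal.Quotient.mk (Ideal.span {g}) X) ^ (n₀ - 1)) := by
        rw [← mul_assoc, ← mul_pow]; norm_num
      rw [h4]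
      exact Ideal.mul_mem_left _ _ h2
    rw [Stmt6Aux.pi_pow_mem_iff hg] at h3
    omega
  have hF4 : ∀ t : ℕ, ((p : ℤ_[p][X] ⧸ Ideal.span {g}) ^ t) • e = 0 → n₀ ≤ t * (p - 1) := by
    intro t h
    have h2 := congrArg (fun v => v i₀) h
    simp only at h2
    rw [heval] at h2
    rw [show ((0 : ⨁ i : Fin s, (ℤ_[p][X] ⧸ Ideal.span {g}) ⧸
      (Ideal.span {Ideal.Quotient.mk (Ideal.span {g}) X}) ^ (n i)) i₀) = 0 from rfl] at h2
    rw [Ideal.Quotient.eq_zero_iff_mem] at h2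
    rw [Stmt6Aux.p_pow_mem_iff hg] at h2
    exact h2
  letI : AddCommGroup (⨁ i : Fin s, (ℤ_[p][X] ⧸ Ideal.span {g}) ⧸
      (Ideal.span {Ideal.Quotient.mk (Ideal.span {g}) X}) ^ (n i)) :=
    { (inferInstance : AddCommMonoid (⨁ i : Fin s, (ℤ_[p][X] ⧸ Ideal.span {g}) ⧸
        (Ideal.span {Ideal.Quotient.mk (Ideal.span {g}) X}) ^ (n i))),
      (@DirectSum.instAddCommGroup (Fin s) (fun i => (ℤ_[p][X] ⧸ Ideal.span {g}) ⧸
        (Ideal.span {Ideal.Quotient.mk (Ideal.span {g}) X}) ^ (n i))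
        (fun i => Submodule.Quotient.addCommGroup _)) with }
  -- goal 1
  have hgoal1 : (⊤ : Subgroup H).lowerCentralSeries n₀ = ⊥ := by
    have hupper := Stmt6Aux.lcs_le_Bsub θ x (Ideal.Quotient.mk (Ideal.span {g}) X) hab hgen hxgen hP hint hadd (n₀ - 1)
    rw [show n₀ - 1 + 1 = n₀ from by omega] at hupper
    rw [eq_bot_iff]
    intro z hz
    obtain ⟨hzA, hwmem⟩ := hupper hz
    obtain ⟨w, hw⟩ := hwmem
    rw [LinearMap.lsmul_apply] at hw
    have hzero : θ ⟨z, hzA⟩ = 0 := by rw [← hw]; exact htop w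
    have hz1 : (⟨z, hzA⟩ : A) = 1 := by
      apply hbij.injective
      rw [hzero, Stmt6Aux.theta_one θ hadd]
    rw [Subgroup.mem_bot]
    exact congrArg Subtype.val hz1
  -- goal 2
  obtain ⟨a₀, ha₀⟩ := hbij.surjective e
  have hgoal2 : (⊤ : Subgroup H).lowerCentralSeries (n₀ - 1) ≠ ⊥ := by
    obtain ⟨c, hc, hlcs, hθc⟩ := Stmt6Aux.lcs_lower θ x (Ideal.Quotient.mk (Ideal.span {g}) X) hadd hint e a₀ ha₀ (n₀ - 1)
    intro hbot
    rw [hbot, Subgroup.mem_bot] at hlcs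
    apply hF2
    rw [← hθc]
    have : (⟨c, hc⟩ : A) = 1 := Subtype.ext hlcs
    rw [this, Stmt6Aux.theta_one θ hadd]
  -- goal 3
  have hpowzero : ∀ (a : A) (t : ℕ), θ (a ^ (p ^ t))
      = ((p : ℤ_[p][X] ⧸ Ideal.span {g}) ^ t) • θ a := by
    intro a t
    rw [Stmt6Aux.theta_pow θ hadd]
    rw [← Nat.cast_smul_eq_nsmul (ℤ_[p][X] ⧸ Ideal.span {g})]
    push_cast
    rfl
  have hexp_dvd : Monoid.exponent A ∣ p ^ m := by
    apply Monoid.exponent_dvd_of_forall_pow_eq_one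
    intro a
    apply hbij.injective
    rw [hpowzero a m, hptop (θ a), Stmt6Aux.theta_one θ hadd]
  have hgoal3 : Monoid.exponent A = p ^ m := by
    have h1 : a₀ ^ (p ^ m) = 1 := by
      apply hbij.injective
      rw [hpowzero a₀ m, hptop (θ a₀), Stmt6Aux.theta_one θ hadd]
    have h2 : orderOf a₀ ∣ p ^ m := orderOf_dvd_of_pow_eq_one h1
    obtain ⟨t, htle, hteq⟩ := (Nat.dvd_prime_pow (‹Fact p.Prime›.out)).mp h2
    have ht_eq_m : t = m := by
      by_contra hne
      have hlt : t < m := by omega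
      have h3 : a₀ ^ (p ^ t) = 1 := by rw [← hteq]; exact pow_orderOf_eq_one a₀
      have h4 : ((p : ℤ_[p][X] ⧸ Ideal.span {g}) ^ t) • e = 0 := by
        rw [← ha₀, ← hpowzero a₀ t, h3, Stmt6Aux.theta_one θ hadd]
      have h5 := hF4 t h4
      have h6 := harith2 t hlt
      omega
    have hord : orderOf a₀ = p ^ m := by rw [hteq, ht_eq_m]
    exact Nat.dvd_antisymm hexp_dvd (hord ▸ Monoid.order_dvd_exponent a₀)
  exact ⟨hgoal1, hgoal2, hgoal3⟩
end

section
/- For every integer j ≥ 2, the quotient γ_j(H)/γ_{j+1}(H) of consecutive terms of the lower central series of H is elementary abelian (an abelian group of exponent dividing p) of rank d_j, where d_j = #{ i : 1 ≤ i ≤ s, n_i ≥ j } is the number of parts of λ that are ≥ j. -/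
open DirectSum Polynomial

set_option synthInstance.maxHeartbeats 1000000
set_option maxHeartbeats 1000000

namespace Stmt8Aux

variable {p : ℕ} [hp : Fact p.Prime] {g : ℤ_[p][X]}

theorem g_reindex (hg : g = ∑ i ∈ Finset.Icc 1 p, C (p.choose i : ℤ_[p]) * X ^ (i - 1)) :
    g = ∑ k ∈ Finset.range p, C (p.choose (k + 1) : ℤ_[p]) * X ^ k := by
  rw [hg]
  rw [show Finset.Icc 1 p = Finset.Ico 1 (p + 1) by rw [Finset.Ico_add_one_right_eq_Icc]]
  rw [Finset.sum_Ico_eq_sum_range]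
  simp [Nat.add_sub_cancel, add_comm]

theorem g_coeff (hg : g = ∑ i ∈ Finset.Icc 1 p, C (p.choose i : ℤ_[p]) * X ^ (i - 1)) (m : ℕ) :
    g.coeff m = if m < p then (p.choose (m + 1) : ℤ_[p]) else 0 := by
  rw [g_reindex hg, finset_sum_coeff]
  by_cases h : m < p
  · rw [Finset.sum_eq_single m]
    · simp [coeff_C_mul, coeff_X_pow, h]
    · intro k hk hkm
      simp [coeff_C_mul, coeff_X_pow]
      intro e; exact absurd e.symm hkm
    · intro hm; exact absurd (Finset.mem_range.mpr h) hm
  · rw [if_neg h]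
    apply Finset.sum_eq_zero
    intro k hk
    have : k ≠ m := by
      intro e; exact h (e ▸ Finset.mem_range.mp hk)
    simp [coeff_C_mul, coeff_X_pow]
    intro e; exact absurd e.symm this

theorem key_identity (hg : g = ∑ i ∈ Finset.Icc 1 p, C (p.choose i : ℤ_[p]) * X ^ (i - 1)) :
    X * g = (1 + X) ^ p - 1 := by
  have h2 : ((1:ℤ_[p][X]) + X) ^ p = (X + 1) ^ p := by ring
  rw [h2, add_pow, g_reindex hg, Finset.mul_sum, Finset.sum_range_succ' _ p]
  simp only [pow_zero, one_pow, Nat.choose_zero_right, Nat.cast_one, mul_one, one_mul]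
  rw [add_sub_cancel_right]
  apply Finset.sum_congr rfl
  intro k hk
  rw [C_eq_natCast]
  ring


theorem coeff_zero (hg : g = ∑ i ∈ Finset.Icc 1 p, C (p.choose i : ℤ_[p]) * X ^ (i - 1)) :
    g.coeff 0 = (p : ℤ_[p]) := by
  rw [g_coeff hg, if_pos hp.out.pos, Nat.choose_one_right]

theorem g_natDegree (hg : g = ∑ i ∈ Finset.Icc 1 p, C (p.choose i : ℤ_[p]) * X ^ (i - 1)) :
    g.natDegree = p - 1 := by
  have hcoef : g.coeff (p - 1) = 1 := by
    rw [g_coeff hg, if_pos (Nat.sub_lt hp.out.pos one_pos),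
      show ((p.choose (p-1+1) : ℤ_[p]) = 1) by
        rw [Nat.sub_add_cancel hp.out.pos, Nat.choose_self, Nat.cast_one]]
  apply le_antisymm
  · rw [natDegree_le_iff_coeff_eq_zero]
    intro m hm
    rw [g_coeff hg, if_neg]
    omega
  · exact le_natDegree_of_ne_zero (by rw [hcoef]; exact one_ne_zero)

theorem g_monic (hg : g = ∑ i ∈ Finset.Icc 1 p, C (p.choose i : ℤ_[p]) * X ^ (i - 1)) :
    g.Monic := by
  unfold Monic leadingCoeff
  rw [g_natDegree hg, g_coeff hg, if_pos (Nat.sub_lt hp.out.pos one_pos),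
    Nat.sub_add_cancel hp.out.pos, Nat.choose_self, Nat.cast_one]

theorem g_prime (hg : g = ∑ i ∈ Finset.Icc 1 p, C (p.choose i : ℤ_[p]) * X ^ (i - 1)) :
    Prime g := by
  rw [← UniqueFactorizationMonoid.irreducible_iff_prime]
  have hEis : g.IsEisensteinAt (Ideal.span {(p : ℤ_[p])}) := by
    constructor
    · rw [(g_monic hg).leadingCoeff, Ideal.mem_span_singleton]
      intro hdvd
      exact hp.out.ne_one (by exact_mod_cast PadicInt.prime_p.not_unit (isUnit_of_dvd_one hdvd) : False).elim
    · intro m hm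
      rw [g_natDegree hg] at hm
      rw [g_coeff hg, if_pos (by omega), Ideal.mem_span_singleton]
      have : (p : ℕ) ∣ p.choose (m + 1) := hp.out.dvd_choose_self (by omega) (by omega)
      exact_mod_cast Nat.cast_dvd_cast (α := ℤ_[p]) this
    · rw [coeff_zero hg, Ideal.span_singleton_pow, Ideal.mem_span_singleton]
      intro hdvd
      have h2 : (p : ℤ_[p]) ≠ 0 := PadicInt.prime_p.ne_zero
      have hd2 : (p:ℤ_[p]) * (p:ℤ_[p]) ∣ (p:ℤ_[p]) * 1 := by
        rwa [mul_one, ← sq]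
      have := (mul_dvd_mul_iff_left (a := (p:ℤ_[p])) h2).mp hd2
      exact PadicInt.prime_p.not_unit (isUnit_of_dvd_one this)
  refine hEis.irreducible ?_ (g_monic hg).isPrimitive ?_
  · exact (Ideal.span_singleton_prime PadicInt.prime_p.ne_zero).mpr PadicInt.prime_p
  · rw [g_natDegree hg]; have := hp.out.two_le; omega

theorem isDomain (hg : g = ∑ i ∈ Finset.Icc 1 p, C (p.choose i : ℤ_[p]) * X ^ (i - 1)) :
    IsDomain (ℤ_[p][X] ⧸ Ideal.span {g}) := by
  rw [Ideal.Quotient.isDomain_iff_prime]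
  exact (Ideal.span_singleton_prime (g_monic hg).ne_zero).mpr (g_prime hg)

theorem pi_ne_zero (hg : g = ∑ i ∈ Finset.Icc 1 p, C (p.choose i : ℤ_[p]) * X ^ (i - 1)) :
    Ideal.Quotient.mk (Ideal.span {g}) X ≠ 0 := by
  intro h0
  rw [Ideal.Quotient.eq_zero_iff_mem, Ideal.mem_span_singleton] at h0
  obtain ⟨u, hu⟩ := ((g_prime hg).dvd_prime_iff_associated prime_X).mp h0
  have := congrArg (Polynomial.eval 0) hu
  rw [eval_mul, eval_X] at this
  have h1 : Polynomial.eval 0 g = (p : ℤ_[p]) := by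
    rw [← coeff_zero_eq_eval_zero, coeff_zero hg]
  rw [h1] at this
  have hu2 : IsUnit (Polynomial.eval 0 (u : ℤ_[p][X])) := u.isUnit.map (evalRingHom 0)
  rcases mul_eq_zero.mp this with h | h
  · exact PadicInt.prime_p.ne_zero h
  · exact hu2.ne_zero h


theorem u_pow_p (hg : g = ∑ i ∈ Finset.Icc 1 p, C (p.choose i : ℤ_[p]) * X ^ (i - 1)) :
    (1 + Ideal.Quotient.mk (Ideal.span {g}) X) ^ p = 1 := by
  have h := congrArg (Ideal.Quotient.mk (Ideal.span {g})) (key_identity hg)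
  rw [map_mul, map_sub, map_pow, map_add, map_one,
    Ideal.Quotient.eq_zero_iff_mem.mpr (Ideal.mem_span_singleton_self g), mul_zero] at h
  linear_combination -h

-- p ∈ (π)
theorem p_mem (hg : g = ∑ i ∈ Finset.Icc 1 p, C (p.choose i : ℤ_[p]) * X ^ (i - 1)) :
    (p : ℤ_[p][X] ⧸ Ideal.span {g}) ∈ Ideal.span {Ideal.Quotient.mk (Ideal.span {g}) X} := by
  have h1 : (C (g.coeff 0) : ℤ_[p][X]) = g - X * g.divX := by
    have := X_mul_divX_add g; linear_combination this
  rw [Ideal.mem_span_singleton]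
  refine ⟨-(Ideal.Quotient.mk _ g.divX), ?_⟩
  have h2 := congrArg (Ideal.Quotient.mk (Ideal.span {g})) h1
  rw [coeff_zero hg, map_sub, map_mul,
    Ideal.Quotient.eq_zero_iff_mem.mpr (Ideal.mem_span_singleton_self g), zero_sub] at h2
  rw [show ((p : ℤ_[p][X] ⧸ Ideal.span {g})) = Ideal.Quotient.mk (Ideal.span {g}) (C (p : ℤ_[p])) by
    rw [C_eq_natCast, map_natCast], ← hg] at *
  rw [h2]; ring

-- the residue homomorphism
noncomputable def nu (g : ℤ_[p][X]) (hg : g = ∑ i ∈ Finset.Icc 1 p, C (p.choose i : ℤ_[p]) * X ^ (i - 1)) :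
    (ℤ_[p][X] ⧸ Ideal.span {g}) →+* ZMod p :=
  Ideal.Quotient.lift (Ideal.span {g}) (eval₂RingHom PadicInt.toZMod 0) (by
    intro a ha
    rw [Ideal.mem_span_singleton] at ha
    obtain ⟨c, rfl⟩ := ha
    rw [map_mul]
    have : (eval₂RingHom PadicInt.toZMod 0) g = 0 := by
      show eval₂ _ 0 g = 0
      rw [eval₂_at_zero, coeff_zero hg, map_natCast, ZMod.natCast_self]
    rw [this, zero_mul])

theorem nu_mk (hg : g = ∑ i ∈ Finset.Icc 1 p, C (p.choose i : ℤ_[p]) * X ^ (i - 1)) (q : ℤ_[p][X]) :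
    nu g hg (Ideal.Quotient.mk (Ideal.span {g}) q) = PadicInt.toZMod (q.coeff 0) := by
  rw [nu, Ideal.Quotient.lift_mk]
  exact eval₂_at_zero _

theorem nu_pi (hg : g = ∑ i ∈ Finset.Icc 1 p, C (p.choose i : ℤ_[p]) * X ^ (i - 1)) :
    nu g hg (Ideal.Quotient.mk (Ideal.span {g}) X) = 0 := by
  rw [nu_mk hg, coeff_X_zero, map_zero]

theorem nu_surjective (hg : g = ∑ i ∈ Finset.Icc 1 p, C (p.choose i : ℤ_[p]) * X ^ (i - 1)) :
    Function.Surjective (nu g hg) := by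
  intro z
  refine ⟨Ideal.Quotient.mk _ (C ((z.val : ℤ_[p]))), ?_⟩
  rw [nu_mk hg, coeff_C_zero, map_natCast]
  exact ZMod.natCast_rightInverse z

theorem mem_span_iff_nu (hg : g = ∑ i ∈ Finset.Icc 1 p, C (p.choose i : ℤ_[p]) * X ^ (i - 1))
    (z : ℤ_[p][X] ⧸ Ideal.span {g}) :
    nu g hg z = 0 ↔ z ∈ Ideal.span {Ideal.Quotient.mk (Ideal.span {g}) X} := by
  constructor
  · intro h0
    obtain ⟨q, rfl⟩ := Ideal.Quotient.mk_surjective z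
    rw [nu_mk hg] at h0
    have : q.coeff 0 ∈ RingHom.ker (PadicInt.toZMod (p := p)) := h0
    rw [PadicInt.ker_toZMod, PadicInt.maximalIdeal_eq_span_p, Ideal.mem_span_singleton] at this
    obtain ⟨c, hc⟩ := this
    have h1 : q = X * q.divX + C ((p : ℤ_[p]) * c) := by rw [← hc, X_mul_divX_add]
    rw [h1, map_add, map_mul]
    refine Ideal.add_mem _ (Ideal.mul_mem_right _ _ (Ideal.mem_span_singleton_self _)) ?_
    have h2 : (C ((p : ℤ_[p]) * c) : ℤ_[p][X]) = (p : ℤ_[p][X]) * C c := by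
      rw [map_mul, C_eq_natCast]
    rw [h2, map_mul, map_natCast]
    exact Ideal.mul_mem_right _ _ (p_mem hg)
  · intro hz
    rw [Ideal.mem_span_singleton] at hz
    obtain ⟨c, rfl⟩ := hz
    rw [map_mul, nu_pi hg, zero_mul]

-- cancellation
theorem cancel (hg : g = ∑ i ∈ Finset.Icc 1 p, C (p.choose i : ℤ_[p]) * X ^ (i - 1))
    {a b : ℕ} (hab : a < b) (r : ℤ_[p][X] ⧸ Ideal.span {g})
    (h : (Ideal.Quotient.mk (Ideal.span {g}) X) ^ a * r ∈
      Ideal.span {(Ideal.Quotient.mk (Ideal.span {g}) X) ^ b}) :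
    r ∈ Ideal.span {Ideal.Quotient.mk (Ideal.span {g}) X} := by
  haveI := isDomain hg
  set π := Ideal.Quotient.mk (Ideal.span {g}) X with hπ
  rw [Ideal.mem_span_singleton] at h
  obtain ⟨c, hc⟩ := h
  obtain ⟨e, rfl⟩ : ∃ e, b = a + e + 1 := ⟨b - a - 1, by omega⟩
  have h2 : π ^ a * r = π ^ a * (π ^ e * π * c) := by
    rw [hc]; ring
  have h3 := mul_left_cancel₀ (pow_ne_zero a (pi_ne_zero hg)) h2
  rw [Ideal.mem_span_singleton, h3]
  exact ⟨π ^ e * c, by ring⟩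


end Stmt8Aux

namespace Stmt8Aux

open scoped commutatorElement

theorem aux_lcs {H : Type} [Group H] (A : Subgroup H) [hN : A.Normal]
    (hab : ∀ a ∈ A, ∀ b ∈ A, a * b = b * a)
    (x : H) (hgen : Subgroup.closure ((A : Set H) ∪ {x}) = ⊤)
    {R T : Type} [CommRing R] [AddCommGroup T] [Module R T]
    (π u v : R) (hu : u = 1 + π) (hv : u * v = 1)
    (θ : ↥A → T) (hbij : Function.Bijective θ)
    (hadd : ∀ a b : ↥A, θ (a * b) = θ a + θ b)
    (hint : ∀ (a : H) (ha : a ∈ A) (hb : x⁻¹ * a * x ∈ A), θ ⟨x⁻¹ * a * x, hb⟩ = u • θ ⟨a, ha⟩) :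
    ∀ (k : ℕ) (h : H), h ∈ (⊤ : Subgroup H).lowerCentralSeries (k + 1) ↔
      ∃ (ha : h ∈ A) (t : T), θ ⟨h, ha⟩ = π ^ (k + 1) • t := by
  classical
  -- basic θ facts
  have hone : θ 1 = 0 := by
    have := hadd 1 1
    rw [mul_one] at this
    exact (left_eq_add.mp this)
  have hinv : ∀ a : ↥A, θ a⁻¹ = - θ a := by
    intro a
    have := hadd a⁻¹ a
    rw [inv_mul_cancel, hone] at this
    exact eq_neg_of_add_eq_zero_left this.symm
  -- conjugation membership
  have hconjmem : ∀ h ∈ A, x⁻¹ * h * x ∈ A := by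
    intro h hh
    have := hN.conj_mem h hh x⁻¹
    rwa [inv_inv] at this
  have hconjmem' : ∀ h ∈ A, x * h * x⁻¹ ∈ A := fun h hh => hN.conj_mem h hh x
  -- conjugation by x⁻¹ acts as v
  have hconj' : ∀ (h : H) (hh : h ∈ A) (hh2 : x * h * x⁻¹ ∈ A),
      θ ⟨x * h * x⁻¹, hh2⟩ = v • θ ⟨h, hh⟩ := by
    intro h hh hh2
    have e1 : x⁻¹ * (x * h * x⁻¹) * x = h := by group
    have h1 := hint (x * h * x⁻¹) hh2 (by rw [e1]; exact hh)
    rw [show (⟨x⁻¹ * (x * h * x⁻¹) * x, _⟩ : ↥A) = ⟨h, hh⟩ from Subtype.ext e1] at h1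
    have h2 : v • θ ⟨h, hh⟩ = v • (u • θ ⟨x * h * x⁻¹, hh2⟩) := by rw [← h1]
    rwa [smul_smul, mul_comm v u, hv, one_smul, eq_comm] at h2
  -- membership of commutators with x
  have hcxmem : ∀ h ∈ A, ⁅h, x⁆ ∈ A := by
    intro h hh
    have e : ⁅h, x⁆ = h * (x * h⁻¹ * x⁻¹) := by group
    rw [e]
    exact A.mul_mem hh (hconjmem' _ (A.inv_mem hh))
  -- commutator formula
  have hcommx : ∀ (h : H) (hh : h ∈ A) (hc : ⁅h, x⁆ ∈ A),
      θ ⟨⁅h, x⁆, hc⟩ = (v * π) • θ ⟨h, hh⟩ := by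
    intro h hh hc
    have e : ⁅h, x⁆ = h * (x * h⁻¹ * x⁻¹) := by group
    have hmem2 : x * h⁻¹ * x⁻¹ ∈ A := hconjmem' _ (A.inv_mem hh)
    have h1 : (⟨⁅h, x⁆, hc⟩ : ↥A) = ⟨h, hh⟩ * ⟨x * h⁻¹ * x⁻¹, hmem2⟩ := Subtype.ext e
    rw [h1, hadd, hconj' _ (A.inv_mem hh) hmem2,
      show (⟨h⁻¹, A.inv_mem hh⟩ : ↥A) = (⟨h, hh⟩ : ↥A)⁻¹ from rfl, hinv]
    have hsc : (v * π : R) = 1 - v := by linear_combination hv - v * hu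
    rw [hsc, sub_smul, one_smul, smul_neg]
    abel
  -- the subgroups B k
  have hBex : ∀ k : ℕ, ∃ B : Subgroup H, ∀ h : H,
      h ∈ B ↔ ∃ (ha : h ∈ A) (t : T), θ ⟨h, ha⟩ = π ^ k • t := by
    intro k
    refine ⟨{ carrier := {h : H | ∃ (ha : h ∈ A) (t : T), θ ⟨h, ha⟩ = π ^ k • t},
              one_mem' := ⟨A.one_mem, 0, by
                rw [show (⟨1, A.one_mem⟩ : ↥A) = 1 from rfl, hone, smul_zero]⟩,
              mul_mem' := ?_, inv_mem' := ?_ }, fun h => Iff.rfl⟩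
    · rintro a b ⟨ha, ta, hta⟩ ⟨hb, tb, htb⟩
      refine ⟨A.mul_mem ha hb, ta + tb, ?_⟩
      rw [show (⟨a * b, A.mul_mem ha hb⟩ : ↥A) = ⟨a, ha⟩ * ⟨b, hb⟩ from rfl, hadd, hta, htb,
        smul_add]
    · rintro a ⟨ha, t, ht⟩
      refine ⟨A.inv_mem ha, -t, ?_⟩
      rw [show (⟨a⁻¹, A.inv_mem ha⟩ : ↥A) = (⟨a, ha⟩ : ↥A)⁻¹ from rfl, hinv, ht, smul_neg]
  choose B hB using hBex
  have hBA : ∀ {k : ℕ} {h : H}, h ∈ B k → h ∈ A := by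
    intro k h hk
    obtain ⟨ha, -⟩ := (hB k h).mp hk
    exact ha
  have htop : ∀ h : H, h ∈ Subgroup.closure ((A : Set H) ∪ {x}) := by
    intro h; rw [hgen]; trivial
  -- commuting with elements of A
  have hAcomm : ∀ z ∈ A, ∀ b ∈ A, z * b * z⁻¹ = b ∧ z⁻¹ * b * z = b := by
    intro z hz b hb
    have h1 := hab z hz b hb
    constructor
    · rw [h1, mul_inv_cancel_right]
    · rw [mul_assoc, ← h1, ← mul_assoc, inv_mul_cancel, one_mul]
  -- normality of B k
  have hnormal : ∀ (m : ℕ) (h : H), ∀ b ∈ B m, h * b * h⁻¹ ∈ B m := by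
    intro m h
    have key : ∀ (z : H), z ∈ Subgroup.closure ((A : Set H) ∪ {x}) →
        ∀ b ∈ B m, z * b * z⁻¹ ∈ B m ∧ z⁻¹ * b * z ∈ B m := by
      intro z hz
      induction hz using Subgroup.closure_induction with
      | mem z hmem =>
        rcases hmem with hzA | hzx
        · intro b hb
          rw [(hAcomm z hzA b (hBA hb)).1, (hAcomm z hzA b (hBA hb)).2]
          exact ⟨hb, hb⟩
        · rw [Set.mem_singleton_iff] at hzx
          subst hzx
          intro b hb
          obtain ⟨ha, t, ht⟩ := (hB m b).mp hb
          constructor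
          · refine (hB m _).mpr ⟨hconjmem' b ha, v • t, ?_⟩
            rw [hconj' b ha (hconjmem' b ha), ht, smul_smul, smul_smul, mul_comm]
          · refine (hB m _).mpr ⟨hconjmem b ha, u • t, ?_⟩
            rw [hint b ha (hconjmem b ha), ht, smul_smul, smul_smul, mul_comm]
      | one =>
        intro b hb
        constructor <;> simpa using hb
      | mul y z _ _ hy hz =>
        intro b hb
        constructor
        · have h1 := (hz b hb).1
          have h2 := (hy _ h1).1
          rw [show y * (z * b * z⁻¹) * y⁻¹ = (y * z) * b * (y * z)⁻¹ by group] at h2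
          exact h2
        · have h1 := (hy b hb).2
          have h2 := (hz _ h1).2
          rw [show z⁻¹ * (y⁻¹ * b * y) * z = (y * z)⁻¹ * b * (y * z) by group] at h2
          exact h2
      | inv y _ hy =>
        intro b hb
        constructor
        · have := (hy b hb).2
          rwa [show y⁻¹ * b * y = y⁻¹ * b * y⁻¹⁻¹ by group] at this
        · have := (hy b hb).1
          rwa [show y * b * y⁻¹ = y⁻¹⁻¹ * b * y⁻¹ by group] at this
    intro b hb
    exact (key h (htop h) b hb).1
  -- commutator of A-element with x lands in next level
  have hcx : ∀ (k : ℕ) (b : H), b ∈ B k → ⁅b, x⁆ ∈ B (k + 1) := by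
    intro k b hb
    obtain ⟨ha, t, ht⟩ := (hB k b).mp hb
    refine (hB (k + 1) _).mpr ⟨hcxmem b ha, v • t, ?_⟩
    rw [hcommx b ha (hcxmem b ha), ht, smul_smul, smul_smul]
    congr 1
    ring
  -- upper bound : commutators of B k with anything land in B (k+1)
  have hLle : ∀ (k : ℕ) (b : H), b ∈ B k → ∀ h : H, ⁅b, h⁆ ∈ B (k + 1) := by
    intro k b hb h
    have key : ∀ (z : H), z ∈ Subgroup.closure ((A : Set H) ∪ {x}) →
        ∀ b ∈ B k, ⁅b, z⁆ ∈ B (k + 1) := by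
      intro z hz
      induction hz using Subgroup.closure_induction with
      | mem z hmem =>
        rcases hmem with hzA | hzx
        · intro b hb
          have : ⁅b, z⁆ = 1 := by
            rw [commutatorElement_def]
            have := hab b (hBA hb) z hzA
            rw [this]; group
          rw [this]; exact (B (k+1)).one_mem
        · rw [Set.mem_singleton_iff] at hzx
          subst hzx
          exact fun b hb => hcx k b hb
      | one =>
        intro b hb
        simpa using (B (k+1)).one_mem
      | mul y z _ _ hy hz =>
        intro b hb
        have e : ⁅b, y * z⁆ = ⁅b, y⁆ * (y * ⁅b, z⁆ * y⁻¹) := by group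
        rw [e]
        exact (B (k+1)).mul_mem (hy b hb) (hnormal (k+1) y _ (hz b hb))
      | inv y _ hy =>
        intro b hb
        have e : ⁅b, y⁻¹⁆ = y⁻¹ * ⁅b, y⁆⁻¹ * y⁻¹⁻¹ := by group
        rw [e]
        exact hnormal (k+1) y⁻¹ _ ((B (k+1)).inv_mem (hy b hb))
    exact key h (htop h) b hb
  -- lower bound : B (k+1) ≤ ⁅B k, ⊤⁆
  have hLge : ∀ k : ℕ, B (k + 1) ≤ ⁅B k, (⊤ : Subgroup H)⁆ := by
    intro k b hb
    obtain ⟨ha, t, ht⟩ := (hB (k+1) b).mp hb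
    obtain ⟨a, hθa⟩ := hbij.surjective (u • (π ^ k • t))
    have haBk : (a : H) ∈ B k := (hB k _).mpr ⟨a.2, u • t, by
      rw [show (⟨(a : H), a.2⟩ : ↥A) = a from rfl, hθa, smul_smul, smul_smul, mul_comm]⟩
    have hcmem : ⁅(a : H), x⁆ ∈ A := hcxmem _ a.2
    have hval : θ ⟨⁅(a : H), x⁆, hcmem⟩ = π ^ (k + 1) • t := by
      rw [hcommx _ a.2 hcmem, show (⟨(a : H), a.2⟩ : ↥A) = a from rfl, hθa, smul_smul, smul_smul]
      congr 1
      linear_combination π ^ (k + 1) * hv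
    have hbeq : b = ⁅(a : H), x⁆ := by
      have := hbij.injective (ht.trans hval.symm)
      exact Subtype.ext_iff.mp this
    rw [hbeq]
    exact Subgroup.commutator_mem_commutator haBk (Subgroup.mem_top x)
  -- all commutators are in B 1
  have hB1 : ∀ g h : H, ⁅g, h⁆ ∈ B 1 := by
    have hA0 : ∀ h ∈ A, h ∈ B 0 := by
      intro h hh
      exact (hB 0 h).mpr ⟨hh, θ ⟨h, hh⟩, by rw [pow_zero, one_smul]⟩
    have inner : ∀ z ∈ ((A : Set H) ∪ {x}), ∀ g : H, ⁅g, z⁆ ∈ B 1 := by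
      intro z hz g
      induction htop g using Subgroup.closure_induction with
      | mem g' hmem =>
        rcases hmem with hgA | hgx
        · rcases hz with hzA | hzx
          · have : ⁅g', z⁆ = 1 := by
              rw [commutatorElement_def, hab g' hgA z hzA]; group
            rw [this]; exact (B 1).one_mem
          · rw [Set.mem_singleton_iff] at hzx
            subst hzx
            exact hcx 0 g' (hA0 g' hgA)
        · rw [Set.mem_singleton_iff] at hgx
          subst hgx
          rcases hz with hzA | hzx
          · rw [← commutatorElement_inv]
            exact (B 1).inv_mem (hcx 0 z (hA0 z hzA))
          · rw [Set.mem_singleton_iff] at hzx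
            subst hzx
            have : ⁅z, z⁆ = 1 := by group
            rw [this]; exact (B 1).one_mem
      | one =>
        have : ⁅(1 : H), z⁆ = 1 := by group
        rw [this]; exact (B 1).one_mem
      | mul y w _ _ hy hw =>
        have e : ⁅y * w, z⁆ = y * ⁅w, z⁆ * y⁻¹ * ⁅y, z⁆ := by group
        rw [e]
        exact (B 1).mul_mem (hnormal 1 y _ hw) hy
      | inv y _ hy =>
        have e : ⁅y⁻¹, z⁆ = y⁻¹ * ⁅y, z⁆⁻¹ * y⁻¹⁻¹ := by group
        rw [e]
        exact hnormal 1 y⁻¹ _ ((B 1).inv_mem hy)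
    intro g h
    induction htop h using Subgroup.closure_induction with
    | mem z hmem => exact inner z hmem g
    | one =>
      have : ⁅g, (1 : H)⁆ = 1 := by group
      rw [this]; exact (B 1).one_mem
    | mul y z _ _ hy hz =>
      have e : ⁅g, y * z⁆ = ⁅g, y⁆ * (y * ⁅g, z⁆ * y⁻¹) := by group
      rw [e]
      exact (B 1).mul_mem hy (hnormal 1 y _ hz)
    | inv y _ hy =>
      have e : ⁅g, y⁻¹⁆ = y⁻¹ * ⁅g, y⁆⁻¹ * y⁻¹⁻¹ := by group
      rw [e]
      exact hnormal 1 y⁻¹ _ ((B 1).inv_mem hy)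
  -- the commutator step
  have hstep : ∀ k : ℕ, ⁅B k, (⊤ : Subgroup H)⁆ = B (k + 1) := by
    intro k
    apply le_antisymm
    · rw [Subgroup.commutator_le]
      intro b hb h _
      exact hLle k b hb h
    · exact hLge k
  -- lcs identification
  have hlcs : ∀ k : ℕ, (⊤ : Subgroup H).lowerCentralSeries (k + 1) = B (k + 1) := by
    intro k
    induction k with
    | zero =>
      have h1 : (⊤ : Subgroup H).lowerCentralSeries 1 = ⁅(⊤ : Subgroup H), (⊤ : Subgroup H)⁆ := rfl
      rw [h1]
      apply le_antisymm
      · rw [Subgroup.commutator_le]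
        intro g _ h _
        exact hB1 g h
      · exact le_trans (hLge 0) (Subgroup.commutator_mono le_top (le_refl _))
    | succ k ih =>
      have h1 : (⊤ : Subgroup H).lowerCentralSeries (k + 2) = ⁅(⊤ : Subgroup H).lowerCentralSeries (k + 1), ⊤⁆ := rfl
      rw [h1, ih, hstep]
  intro k h
  rw [hlcs k]
  exact hB (k + 1) h


theorem aux_iso {H : Type} [Group H] (A : Subgroup H)
    {T V : Type} [AddCommGroup T] [AddCommGroup V]
    (θ : ↥A → T) (hbij : Function.Bijective θ)
    (hadd : ∀ a b : ↥A, θ (a * b) = θ a + θ b)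
    (σ σ' : T →+ T) (ψ : T →+ V)
    (hψsurj : Function.Surjective ψ)
    (hwd : ∀ t t' : T, σ t = σ t' → ψ t = ψ t')
    (hker : ∀ t : T, ψ t = 0 ↔ ∃ t', σ t = σ' t')
    (B₁ B₂ : Subgroup H) [hn : (B₂.subgroupOf B₁).Normal]
    (hB₁ : ∀ h : H, h ∈ B₁ ↔ ∃ (ha : h ∈ A) (t : T), θ ⟨h, ha⟩ = σ t)
    (hB₂ : ∀ h : H, h ∈ B₂ ↔ ∃ (ha : h ∈ A) (t : T), θ ⟨h, ha⟩ = σ' t) :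
    Nonempty ((↥B₁ ⧸ B₂.subgroupOf B₁) ≃* Multiplicative V) := by
  classical
  have hBA : ∀ {h : H}, h ∈ B₁ → h ∈ A := by
    intro h hk
    obtain ⟨ha, -⟩ := (hB₁ h).mp hk
    exact ha
  have hwit : ∀ b : ↥B₁, ∃ t : T, θ ⟨(b : H), hBA b.2⟩ = σ t := by
    intro b
    obtain ⟨ha, t, ht⟩ := (hB₁ (b : H)).mp b.2
    exact ⟨t, ht⟩
  -- raw function
  set F : ↥B₁ → V := fun b => ψ (hwit b).choose with hF
  have hW : ∀ (b : ↥B₁) (t : T), θ ⟨(b : H), hBA b.2⟩ = σ t → F b = ψ t := by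
    intro b t ht
    exact hwd _ _ (((hwit b).choose_spec.symm).trans ht)
  have hFmul : ∀ b c : ↥B₁, F (b * c) = F b + F c := by
    intro b c
    have hb := (hwit b).choose_spec
    have hc := (hwit c).choose_spec
    have hmul : θ ⟨((b * c : ↥B₁) : H), hBA (b * c).2⟩ =
        σ ((hwit b).choose + (hwit c).choose) := by
      have e : (⟨((b * c : ↥B₁) : H), hBA (b * c).2⟩ : ↥A)
          = ⟨(b : H), hBA b.2⟩ * ⟨(c : H), hBA c.2⟩ := Subtype.ext rfl
      rw [e, hadd]
      exact (congrArg₂ (· + ·) hb hc).trans (map_add σ _ _).symm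
    rw [hW _ _ hmul, map_add]
  -- the homomorphism
  set f : ↥B₁ →* Multiplicative V :=
    MonoidHom.mk' (fun b => Multiplicative.ofAdd (F b))
      (fun b c => by
        show Multiplicative.ofAdd (F (b * c)) = Multiplicative.ofAdd (F b) * Multiplicative.ofAdd (F c)
        rw [hFmul]
        rfl) with hfdef
  have hfval : ∀ b : ↥B₁, (f b).toAdd = F b := fun b => rfl
  have hsurj : Function.Surjective f := by
    intro w
    obtain ⟨t, ht⟩ := hψsurj w.toAdd
    obtain ⟨a, hθa⟩ := hbij.surjective (σ t)
    have hmem : (a : H) ∈ B₁ := (hB₁ _).mpr ⟨a.2, t, by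
      rw [show (⟨(a : H), a.2⟩ : ↥A) = a from rfl, hθa]⟩
    refine ⟨⟨(a : H), hmem⟩, ?_⟩
    have : F ⟨(a : H), hmem⟩ = ψ t := hW _ t (by
      rw [show (⟨(a : H), hBA hmem⟩ : ↥A) = a from rfl, hθa])
    show Multiplicative.ofAdd (F ⟨(a : H), hmem⟩) = w
    rw [this, ht]
    rfl
  have hkerf : f.ker = B₂.subgroupOf B₁ := by
    ext b
    rw [MonoidHom.mem_ker, Subgroup.mem_subgroupOf]
    constructor
    · intro h0
      have h0' : F b = 0 := h0
      have hb := (hwit b).choose_spec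
      obtain ⟨t', ht'⟩ := (hker _).mp h0'
      exact (hB₂ _).mpr ⟨hBA b.2, t', by rw [hb, ht']⟩
    · intro hb2
      obtain ⟨ha, t', ht'⟩ := (hB₂ (b : H)).mp hb2
      have hb := (hwit b).choose_spec
      have : ψ (hwit b).choose = 0 := (hker _).mpr ⟨t', by rw [← hb, ht']⟩
      show Multiplicative.ofAdd (F b) = 1
      rw [hF]
      simp only [this]
      rfl
  have e1 := QuotientGroup.quotientKerEquivOfSurjective f hsurj
  exact ⟨(QuotientGroup.quotientMulEquivOfEq hkerf.symm).trans e1⟩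


end Stmt8Aux

/-- With `H`, `A`, `x`, `𝔒 = ℤ_p[X]/(g)`, `𝔓 = (π)` and
`θ : A ≅ ⊕_{i=1}^s 𝔒/𝔓^(n_i)` as in the context, for every `j ≥ 2` the factor
`γ_j(H)/γ_{j+1}(H)` of the lower central series (in Mathlib numbering
`(⊤ : Subgroup H).lowerCentralSeries (j-1) / (⊤ : Subgroup H).lowerCentralSeries j`) is elementary abelian of rank
`d_j = #{i | n_i ≥ j}`, i.e. isomorphic to `(ℤ/pℤ)^(d_j)`. -/
theorem stmt_8 (p : ℕ) [Fact p.Prime]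
    (H : Type) [Group H] (A : Subgroup H) [A.Normal] [Finite A]
    (hab : ∀ a ∈ A, ∀ b ∈ A, a * b = b * a)
    (hpgrp : IsPGroup p A)
    (x : H)
    (hgen : Subgroup.closure ((A : Set H) ∪ {x}) = ⊤)
    (hxgen : ∀ q : H ⧸ A, q ∈ Subgroup.zpowers (QuotientGroup.mk x : H ⧸ A))
    (hord : ∃ k : ℕ, orderOf (QuotientGroup.mk x : H ⧸ A) = p ^ k)
    (hsplit : ∀ a ∈ A, ((List.range p).map (fun i => (x ^ i)⁻¹ * a * x ^ i)).prod = 1)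
    (g : ℤ_[p][X]) (hg : g = ∑ i ∈ Finset.Icc 1 p, C (p.choose i : ℤ_[p]) * X ^ (i - 1))
    (s : ℕ) (n : Fin s → ℕ) (hanti : Antitone n) (hpos : ∀ i, 1 ≤ n i)
    (θ : A → ⨁ i : Fin s, (ℤ_[p][X] ⧸ Ideal.span {g}) ⧸
        (Ideal.span {Ideal.Quotient.mk (Ideal.span {g}) X}) ^ (n i))
    (hbij : Function.Bijective θ)
    (hadd : ∀ a b : A, θ (a * b) = θ a + θ b)
    (hint : ∀ (a : H) (ha : a ∈ A) (hb : x⁻¹ * a * x ∈ A),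
      θ ⟨x⁻¹ * a * x, hb⟩ = (1 + Ideal.Quotient.mk (Ideal.span {g}) X) • θ ⟨a, ha⟩) :
    ∀ j : ℕ, 2 ≤ j →
      Nonempty ((↥((⊤ : Subgroup H).lowerCentralSeries (j - 1)) ⧸
          (((⊤ : Subgroup H).lowerCentralSeries j).subgroupOf ((⊤ : Subgroup H).lowerCentralSeries (j - 1)))) ≃*
        Multiplicative
          (Fin ((Finset.univ.filter (fun i : Fin s => j ≤ n i)).card) → ZMod p)) := by
  classical
  intro j hj
  have hp2 : 2 ≤ p := (Fact.out : p.Prime).two_le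
  -- lower central series characterization
  have hv : ((1 : ℤ_[p][X] ⧸ Ideal.span {g}) + (Ideal.Quotient.mk (Ideal.span {g}) X)) * ((1 : ℤ_[p][X] ⧸ Ideal.span {g}) + (Ideal.Quotient.mk (Ideal.span {g}) X)) ^ (p - 1) = 1 := by
    rw [← pow_succ']
    rw [show p - 1 + 1 = p by omega]
    exact Stmt8Aux.u_pow_p hg
  letI : AddCommGroup (⨁ i : Fin s, (ℤ_[p][X] ⧸ Ideal.span {g}) ⧸ (Ideal.span {Ideal.Quotient.mk (Ideal.span {g}) X}) ^ (n i)) :=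
    @DirectSum.instAddCommGroup (Fin s) (fun i => (ℤ_[p][X] ⧸ Ideal.span {g}) ⧸ (Ideal.span {Ideal.Quotient.mk (Ideal.span {g}) X}) ^ (n i)) (fun _ => Submodule.Quotient.addCommGroup _)
  have hlcs := Stmt8Aux.aux_lcs A hab x hgen (Ideal.Quotient.mk (Ideal.span {g}) X) ((1 : ℤ_[p][X] ⧸ Ideal.span {g}) + (Ideal.Quotient.mk (Ideal.span {g}) X))
    (((1 : ℤ_[p][X] ⧸ Ideal.span {g}) + (Ideal.Quotient.mk (Ideal.span {g}) X)) ^ (p - 1)) rfl hv θ hbij hadd hint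
  -- index bookkeeping
  have hje : j - 2 + 1 = j - 1 := by omega
  have hje' : j - 1 + 1 = j := by omega
  -- the residue maps
  have hresex : ∃ res : ∀ i : Fin s, ((ℤ_[p][X] ⧸ Ideal.span {g}) ⧸ (Ideal.span {(Ideal.Quotient.mk (Ideal.span {g}) X)}) ^ (n i)) →+* ZMod p,
      ∀ (i : Fin s) (q : ℤ_[p][X] ⧸ Ideal.span {g}),
        res i (Ideal.Quotient.mk ((Ideal.span {(Ideal.Quotient.mk (Ideal.span {g}) X)}) ^ (n i)) q) = Stmt8Aux.nu g hg q := by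
    refine ⟨fun i => Ideal.Quotient.lift _ (Stmt8Aux.nu g hg) ?_,
      fun i q => Ideal.Quotient.lift_mk _ _ _⟩
    intro a ha
    have hmem : a ∈ Ideal.span {(Ideal.Quotient.mk (Ideal.span {g}) X)} := Ideal.pow_le_self (by have := hpos i; omega) ha
    exact (Stmt8Aux.mem_span_iff_nu hg a).mpr hmem
  obtain ⟨res, hres_mk⟩ := hresex
  -- scalar action on quotient components
  have hsm : ∀ (i : Fin s) (r q : ℤ_[p][X] ⧸ Ideal.span {g}),
      r • (Ideal.Quotient.mk ((Ideal.span {(Ideal.Quotient.mk (Ideal.span {g}) X)}) ^ (n i)) q) =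
        Ideal.Quotient.mk ((Ideal.span {(Ideal.Quotient.mk (Ideal.span {g}) X)}) ^ (n i)) (r * q) := by
    intro i r q
    have h1 : (Ideal.Quotient.mk ((Ideal.span {(Ideal.Quotient.mk (Ideal.span {g}) X)}) ^ (n i)) q) = Submodule.Quotient.mk q :=
      (Ideal.Quotient.mk_eq_mk q).symm
    rw [h1, ← Submodule.Quotient.mk_smul, smul_eq_mul]
    exact Ideal.Quotient.mk_eq_mk _
  -- the maps σ, σ', ψ
  have hB₁ : ∀ h : H, h ∈ (⊤ : Subgroup H).lowerCentralSeries (j - 1) ↔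
      ∃ (ha : h ∈ A) (t : ⨁ i : Fin s, (ℤ_[p][X] ⧸ Ideal.span {g}) ⧸ (Ideal.span {(Ideal.Quotient.mk (Ideal.span {g}) X)}) ^ (n i)), θ ⟨h, ha⟩ = (Ideal.Quotient.mk (Ideal.span {g}) X) ^ (j - 1) • t := by
    intro h
    have h1 := hlcs (j - 2) h
    rwa [hje] at h1
  have hB₂ : ∀ h : H, h ∈ (⊤ : Subgroup H).lowerCentralSeries j ↔
      ∃ (ha : h ∈ A) (t : ⨁ i : Fin s, (ℤ_[p][X] ⧸ Ideal.span {g}) ⧸ (Ideal.span {(Ideal.Quotient.mk (Ideal.span {g}) X)}) ^ (n i)), θ ⟨h, ha⟩ = (Ideal.Quotient.mk (Ideal.span {g}) X) ^ j • t := by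
    intro h
    have h1 := hlcs (j - 1) h
    rwa [hje'] at h1
  -- index equivalence
  obtain ⟨e⟩ : Nonempty (Fin ((Finset.univ.filter (fun i : Fin s => j ≤ n i)).card) ≃ {i : Fin s // j ≤ n i}) :=
    ⟨(Fintype.equivFinOfCardEq (Fintype.card_subtype _)).symm⟩
  -- well-definedness of the residue vector
  have hpsi_wd : ∀ t t' : ⨁ i : Fin s, (ℤ_[p][X] ⧸ Ideal.span {g}) ⧸ (Ideal.span {(Ideal.Quotient.mk (Ideal.span {g}) X)}) ^ (n i), ((Ideal.Quotient.mk (Ideal.span {g}) X)) ^ (j - 1) • t = ((Ideal.Quotient.mk (Ideal.span {g}) X)) ^ (j - 1) • t' →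
      (fun i : Fin ((Finset.univ.filter (fun i : Fin s => j ≤ n i)).card) => res ↑(e i) (t ↑(e i))) =
        (fun i : Fin ((Finset.univ.filter (fun i : Fin s => j ≤ n i)).card) => res ↑(e i) (t' ↑(e i))) := by
    intro t t' hts
    funext i
    have hcomp : ((Ideal.Quotient.mk (Ideal.span {g}) X)) ^ (j - 1) • (t ↑(e i)) = ((Ideal.Quotient.mk (Ideal.span {g}) X)) ^ (j - 1) • (t' ↑(e i)) := by
      have hc := congrArg (fun v : ⨁ i : Fin s, (ℤ_[p][X] ⧸ Ideal.span {g}) ⧸ (Ideal.span {(Ideal.Quotient.mk (Ideal.span {g}) X)}) ^ (n i) => v ↑(e i)) hts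
      simpa only [DirectSum.smul_apply] using hc
    obtain ⟨r, hr⟩ := Ideal.Quotient.mk_surjective (t ↑(e i))
    obtain ⟨r', hr'⟩ := Ideal.Quotient.mk_surjective (t' ↑(e i))
    rw [← hr, ← hr', hsm, hsm] at hcomp
    have hdiff := Ideal.Quotient.eq.mp hcomp
    rw [Ideal.span_singleton_pow, ← mul_sub] at hdiff
    have hrr : r - r' ∈ Ideal.span {(Ideal.Quotient.mk (Ideal.span {g}) X)} :=
      Stmt8Aux.cancel hg (show j - 1 < n ↑(e i) by have := (e i).2; omega) _ hdiff
    have hz : Stmt8Aux.nu g hg (r - r') = 0 := (Stmt8Aux.mem_span_iff_nu hg _).mpr hrr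
    have hsub : res ↑(e i) (t ↑(e i)) - res ↑(e i) (t' ↑(e i)) = 0 := by
      rw [← hr, ← hr', hres_mk, hres_mk, ← map_sub]
      exact hz
    exact sub_eq_zero.mp hsub
  -- surjectivity of the residue vector
  have hpsi_surj : ∀ w : Fin ((Finset.univ.filter (fun i : Fin s => j ≤ n i)).card) → ZMod p, ∃ t : ⨁ i : Fin s, (ℤ_[p][X] ⧸ Ideal.span {g}) ⧸ (Ideal.span {(Ideal.Quotient.mk (Ideal.span {g}) X)}) ^ (n i),
      (fun i : Fin ((Finset.univ.filter (fun i : Fin s => j ≤ n i)).card) => res ↑(e i) (t ↑(e i))) = w := by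
    intro w
    have hpick : ∀ i : Fin s, ∃ z : (ℤ_[p][X] ⧸ Ideal.span {g}) ⧸ (Ideal.span {(Ideal.Quotient.mk (Ideal.span {g}) X)}) ^ (n i), ∀ hij : j ≤ n i,
        res i z = w (e.symm ⟨i, hij⟩) := by
      intro i
      by_cases hij : j ≤ n i
      · obtain ⟨r, hr⟩ := Stmt8Aux.nu_surjective hg (w (e.symm ⟨i, hij⟩))
        exact ⟨Ideal.Quotient.mk _ r, fun hij' => by rw [hres_mk]; exact hr⟩
      · exact ⟨0, fun hij' => absurd hij' hij⟩
    choose zf hzf using hpick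
    refine ⟨(DirectSum.addEquivProd (fun i : Fin s => (ℤ_[p][X] ⧸ Ideal.span {g}) ⧸ (Ideal.span {(Ideal.Quotient.mk (Ideal.span {g}) X)}) ^ (n i))).symm zf, ?_⟩
    funext i
    have happ : ((DirectSum.addEquivProd (fun i : Fin s => (ℤ_[p][X] ⧸ Ideal.span {g}) ⧸ (Ideal.span {(Ideal.Quotient.mk (Ideal.span {g}) X)}) ^ (n i))).symm zf) ↑(e i)
        = zf ↑(e i) :=
      congrFun ((DirectSum.addEquivProd (fun i : Fin s => (ℤ_[p][X] ⧸ Ideal.span {g}) ⧸ (Ideal.span {(Ideal.Quotient.mk (Ideal.span {g}) X)}) ^ (n i))).apply_symm_apply zf) ↑(e i)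
    rw [happ, hzf ↑(e i) (e i).2,
      show (⟨↑(e i), (e i).2⟩ : {i : Fin s // j ≤ n i}) = e i from rfl,
      Equiv.symm_apply_apply]
  -- kernel characterization
  have hker1 : ∀ t : ⨁ i : Fin s, (ℤ_[p][X] ⧸ Ideal.span {g}) ⧸ (Ideal.span {(Ideal.Quotient.mk (Ideal.span {g}) X)}) ^ (n i), (fun i : Fin ((Finset.univ.filter (fun i : Fin s => j ≤ n i)).card) => res ↑(e i) (t ↑(e i))) = 0 ↔
      ∃ t' : ⨁ i : Fin s, (ℤ_[p][X] ⧸ Ideal.span {g}) ⧸ (Ideal.span {(Ideal.Quotient.mk (Ideal.span {g}) X)}) ^ (n i), ((Ideal.Quotient.mk (Ideal.span {g}) X)) ^ (j - 1) • t = ((Ideal.Quotient.mk (Ideal.span {g}) X)) ^ j • t' := by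
    intro t
    constructor
    · intro h0
      have h0' : ∀ i : Fin ((Finset.univ.filter (fun i : Fin s => j ≤ n i)).card), res ↑(e i) (t ↑(e i)) = 0 := fun i => congrFun h0 i
      have hpick : ∀ i : Fin s, ∃ z : (ℤ_[p][X] ⧸ Ideal.span {g}) ⧸ (Ideal.span {(Ideal.Quotient.mk (Ideal.span {g}) X)}) ^ (n i),
          ((Ideal.Quotient.mk (Ideal.span {g}) X)) ^ (j - 1) • (t i) = ((Ideal.Quotient.mk (Ideal.span {g}) X)) ^ j • z := by
        intro i
        by_cases hij : j ≤ n i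
        · have hres0 : res i (t i) = 0 := by
            have h1 := h0' (e.symm ⟨i, hij⟩)
            have h2 : e (e.symm ⟨i, hij⟩) = ⟨i, hij⟩ := e.apply_symm_apply _
            rw [h2] at h1
            exact h1
          obtain ⟨r, hr⟩ := Ideal.Quotient.mk_surjective (t i)
          have hnu : Stmt8Aux.nu g hg r = 0 := by rw [← hres_mk i r, hr]; exact hres0
          obtain ⟨c, hc⟩ := Ideal.mem_span_singleton.mp
            ((Stmt8Aux.mem_span_iff_nu hg r).mp hnu)
          refine ⟨Ideal.Quotient.mk _ c, ?_⟩
          have hpow : ((Ideal.Quotient.mk (Ideal.span {g}) X)) ^ (j - 1) * (((Ideal.Quotient.mk (Ideal.span {g}) X)) * c) = ((Ideal.Quotient.mk (Ideal.span {g}) X)) ^ j * c := by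
            rw [← mul_assoc, ← pow_succ, hje']
          rw [← hr, hsm, hsm, hc, hpow]
        · refine ⟨0, ?_⟩
          rw [smul_zero]
          obtain ⟨r, hr⟩ := Ideal.Quotient.mk_surjective (t i)
          rw [← hr, hsm, Ideal.Quotient.eq_zero_iff_mem, Ideal.span_singleton_pow,
            Ideal.mem_span_singleton]
          exact dvd_mul_of_dvd_left (pow_dvd_pow _ (by omega)) r
      choose zf hz using hpick
      refine ⟨(DirectSum.addEquivProd (fun i : Fin s => (ℤ_[p][X] ⧸ Ideal.span {g}) ⧸ (Ideal.span {(Ideal.Quotient.mk (Ideal.span {g}) X)}) ^ (n i))).symm zf, ?_⟩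
      apply (DirectSum.addEquivProd (fun i : Fin s => (ℤ_[p][X] ⧸ Ideal.span {g}) ⧸ (Ideal.span {(Ideal.Quotient.mk (Ideal.span {g}) X)}) ^ (n i))).injective
      funext i
      show (((Ideal.Quotient.mk (Ideal.span {g}) X)) ^ (j - 1) • t) i =
        (((Ideal.Quotient.mk (Ideal.span {g}) X)) ^ j • ((DirectSum.addEquivProd (fun i : Fin s => (ℤ_[p][X] ⧸ Ideal.span {g}) ⧸ (Ideal.span {(Ideal.Quotient.mk (Ideal.span {g}) X)}) ^ (n i))).symm zf)) i
      rw [DirectSum.smul_apply, DirectSum.smul_apply]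
      have happ : ((DirectSum.addEquivProd (fun i : Fin s => (ℤ_[p][X] ⧸ Ideal.span {g}) ⧸ (Ideal.span {(Ideal.Quotient.mk (Ideal.span {g}) X)}) ^ (n i))).symm zf) i = zf i :=
        congrFun ((DirectSum.addEquivProd (fun i : Fin s => (ℤ_[p][X] ⧸ Ideal.span {g}) ⧸ (Ideal.span {(Ideal.Quotient.mk (Ideal.span {g}) X)}) ^ (n i))).apply_symm_apply zf) i
      rw [happ]
      exact hz i
    · rintro ⟨t', ht'⟩
      funext i
      show res ↑(e i) (t ↑(e i)) = 0
      have hcomp : ((Ideal.Quotient.mk (Ideal.span {g}) X)) ^ (j - 1) • (t ↑(e i)) = ((Ideal.Quotient.mk (Ideal.span {g}) X)) ^ j • (t' ↑(e i)) := by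
        have hc := congrArg (fun v : ⨁ i : Fin s, (ℤ_[p][X] ⧸ Ideal.span {g}) ⧸ (Ideal.span {(Ideal.Quotient.mk (Ideal.span {g}) X)}) ^ (n i) => v ↑(e i)) ht'
        simpa only [DirectSum.smul_apply] using hc
      obtain ⟨r, hr⟩ := Ideal.Quotient.mk_surjective (t ↑(e i))
      obtain ⟨r', hr'⟩ := Ideal.Quotient.mk_surjective (t' ↑(e i))
      rw [← hr, ← hr', hsm, hsm] at hcomp
      have hdiff := Ideal.Quotient.eq.mp hcomp
      rw [Ideal.span_singleton_pow] at hdiff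
      have hmem : ((Ideal.Quotient.mk (Ideal.span {g}) X)) ^ (j - 1) * r ∈ Ideal.span {((Ideal.Quotient.mk (Ideal.span {g}) X)) ^ j} := by
        have h1 : ((Ideal.Quotient.mk (Ideal.span {g}) X)) ^ (j - 1) * r =
            (((Ideal.Quotient.mk (Ideal.span {g}) X)) ^ (j - 1) * r - ((Ideal.Quotient.mk (Ideal.span {g}) X)) ^ j * r') + ((Ideal.Quotient.mk (Ideal.span {g}) X)) ^ j * r' := by ring
        rw [h1]
        refine Ideal.add_mem _ ?_ ?_
        · exact Ideal.span_singleton_le_span_singleton.mpr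
            (pow_dvd_pow _ (by have := (e i).2; omega)) hdiff
        · exact Ideal.mem_span_singleton.mpr (Dvd.intro r' rfl)
      have hrr := Stmt8Aux.cancel hg (show j - 1 < j by omega) r hmem
      rw [← hr, hres_mk]
      exact (Stmt8Aux.mem_span_iff_nu hg r).mpr hrr
  -- conclude via the abstract isomorphism lemma
  refine Stmt8Aux.aux_iso A θ hbij hadd
    (AddMonoidHom.mk' (fun t : ⨁ i : Fin s, (ℤ_[p][X] ⧸ Ideal.span {g}) ⧸ (Ideal.span {(Ideal.Quotient.mk (Ideal.span {g}) X)}) ^ (n i) => ((Ideal.Quotient.mk (Ideal.span {g}) X)) ^ (j - 1) • t) (fun a b => smul_add ((Ideal.Quotient.mk (Ideal.span {g}) X) ^ (j - 1)) a b))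
    (AddMonoidHom.mk' (fun t : ⨁ i : Fin s, (ℤ_[p][X] ⧸ Ideal.span {g}) ⧸ (Ideal.span {(Ideal.Quotient.mk (Ideal.span {g}) X)}) ^ (n i) => ((Ideal.Quotient.mk (Ideal.span {g}) X)) ^ j • t) (fun a b => smul_add ((Ideal.Quotient.mk (Ideal.span {g}) X) ^ j) a b))
    (AddMonoidHom.mk' (fun t : ⨁ i : Fin s, (ℤ_[p][X] ⧸ Ideal.span {g}) ⧸ (Ideal.span {(Ideal.Quotient.mk (Ideal.span {g}) X)}) ^ (n i) => (fun i : Fin ((Finset.univ.filter (fun i : Fin s => j ≤ n i)).card) => res ↑(e i) (t ↑(e i))))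
      (fun a b => funext fun i => by
        simp only [DirectSum.add_apply, map_add, Pi.add_apply]))
    ?_ ?_ ?_ ((⊤ : Subgroup H).lowerCentralSeries (j - 1)) ((⊤ : Subgroup H).lowerCentralSeries j) ?_ ?_
  · intro w
    obtain ⟨t, ht⟩ := hpsi_surj w
    exact ⟨t, ht⟩
  · intro t t' hts
    exact hpsi_wd t t' hts
  · intro t
    exact hker1 t
  · exact hB₁
  · exact hB₂
end
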